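/- arXiv:2512.23149 — 7 statements merged into one kernel-verified Lean document; each statement's English description precedes it below -/
import Mathlib

section
/- Every sequence of weighted graphs (G_n ∈ Δ^{n×n})_{n∈ℕ} has a quotient-convergent subsequence: there exists a strictly increasing sequence of indices n_1 < n_2 < … such that for every k ∈ ℕ the laws of the random quotients ρ(F_{k,n_m})G_{n_m} converge weakly as m → ∞. -/
open MeasureTheory Filter Topology BoundedContinuousFunction
open scoped ENNReal NNReal

noncomputable section

/-- `G ∈ Δ^{n×n}`: nonnegative entries summing to one. -/
def IsWeightedGraph {n : ℕ} (G : Fin n → Fin n → ℝ) : Prop :=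
  (∀ i j, 0 ≤ G i j) ∧ (∑ i, ∑ j, G i j) = 1

/-- The quotient `ρ(f)G`. -/
def quotGraph {n k : ℕ} (f : Fin n → Fin k) (G : Fin n → Fin n → ℝ) :
    Fin k → Fin k → ℝ :=
  fun i j => ∑ u, ∑ v, if f u = i ∧ f v = j then G u v else 0

/-- The law of the random quotient `ρ(F_{k,n})G`. -/
noncomputable def quotientLaw {n : ℕ} (G : Fin n → Fin n → ℝ) (k : ℕ) :
    Measure (Fin k → Fin k → ℝ) :=
  ((k : ℝ≥0∞) ^ n)⁻¹ • ∑ f : Fin n → Fin k, Measure.dirac (quotGraph f G)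

/-- Quotient convergence of a sequence of graphs of sizes `N m`. -/
def QuotientConverges {N : ℕ → ℕ} (G : ∀ m : ℕ, Fin (N m) → Fin (N m) → ℝ) : Prop :=
  ∀ k : ℕ, 1 ≤ k → ∃ ν : Measure (Fin k → Fin k → ℝ), IsProbabilityMeasure ν ∧
    ∀ f : (Fin k → Fin k → ℝ) →ᵇ ℝ,
      Tendsto (fun m => ∫ x, f x ∂(quotientLaw (G m) k)) atTop (𝓝 (∫ x, f x ∂ν))

def homNum {k n : ℕ} (H : Fin k → Fin k → ℕ) (G : Fin n → Fin n → ℝ) : ℝ :=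
  ∑ f : Fin k → Fin n, ∏ i, ∏ j, G (f i) (f j) ^ H i j

def quotDensity {k n : ℕ} (H : Fin k → Fin k → ℕ) (G : Fin n → Fin n → ℝ) : ℝ :=
  ((k : ℝ) ^ n)⁻¹ * ∑ f : Fin n → Fin k, ∏ i, ∏ j, quotGraph f G i j ^ H i j

def IsMultigraph {k : ℕ} (H : Fin k → Fin k → ℕ) : Prop :=
  ∀ i, ∃ j, 0 < H i j ∨ 0 < H j i

/-! ### Auxiliary machinery -/
section Aux
open Set

def digSeries (q A : ℝ) (c : ℕ → Bool) : ℝ := ∑' r : ℕ, if c r then A * q ^ (r+1) else 0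

variable {q A : ℝ}

lemma summable_digTerm (hq0 : 0 ≤ q) (hq1 : q < 1) :
    Summable (fun r : ℕ => A * q ^ (r+1)) := by
  have h := (summable_geometric_of_lt_one hq0 hq1).mul_left (A * q)
  refine h.congr fun r => ?_
  ring

lemma summable_digSeries (hq0 : 0 ≤ q) (hq1 : q < 1) (hA : 0 ≤ A) (c : ℕ → Bool) :
    Summable (fun r : ℕ => if c r then A * q ^ (r+1) else 0) := by
  refine Summable.of_nonneg_of_le (fun r => ?_) (fun r => ?_) (summable_digTerm hq0 hq1 (A := A))
  · split <;> positivity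
  · split
    · exact le_rfl
    · positivity

lemma tsum_digTerm (hq0 : 0 ≤ q) (hq1 : q < 1) :
    ∑' r : ℕ, A * q ^ (r+1) = A * q / (1 - q) := by
  have : (fun r : ℕ => A * q ^ (r+1)) = fun r : ℕ => (A * q) * q ^ r := by
    funext r; ring
  rw [this, tsum_mul_left, tsum_geometric_of_lt_one hq0 hq1]
  field_simp

lemma digSeries_nonneg (c : ℕ → Bool) (hq0 : 0 ≤ q) (hA : 0 ≤ A) : 0 ≤ digSeries q A c := by
  refine tsum_nonneg fun r => ?_
  split <;> positivity

lemma digSeries_le (hq0 : 0 ≤ q) (hq1 : q < 1) (hA : 0 ≤ A) (c : ℕ → Bool) :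
    digSeries q A c ≤ A * q / (1 - q) := by
  rw [← tsum_digTerm hq0 hq1]
  refine Summable.tsum_le_tsum (fun r => ?_) (summable_digSeries hq0 hq1 hA c) (summable_digTerm hq0 hq1)
  split
  · exact le_rfl
  · positivity

lemma continuous_digSeries (hq0 : 0 ≤ q) (hq1 : q < 1) (hA : 0 ≤ A) :
    Continuous (digSeries q A) := by
  refine continuous_tsum (u := fun r : ℕ => A * q ^ (r+1)) (fun r => ?_)
    (summable_digTerm hq0 hq1) (fun r c => ?_)
  · have hb : Continuous (fun v : Bool => if v then A * q ^ (r+1) else 0) :=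
      continuous_of_discreteTopology
    exact hb.comp (continuous_apply r)
  · rw [Real.norm_eq_abs]
    split
    · rw [abs_of_nonneg (by positivity)]
    · rw [abs_zero]; positivity

lemma digSeries_rec (hq0 : 0 ≤ q) (hq1 : q < 1) (hA : 0 ≤ A) (c : ℕ → Bool) :
    digSeries q A c = (if c 0 then A * q else 0) + q * digSeries q A (fun r => c (r+1)) := by
  rw [digSeries, Summable.tsum_eq_zero_add (summable_digSeries hq0 hq1 hA c)]
  congr 1
  · simp [pow_succ]
  · rw [digSeries, ← tsum_mul_left]
    congr 1; funext r
    split <;> ring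



/-! ### Binary digits -/

def binVal (c : ℕ → Bool) : ℝ := digSeries 2⁻¹ 1 c

lemma binVal_mem_Icc (c : ℕ → Bool) : binVal c ∈ Icc (0:ℝ) 1 := by
  constructor
  · exact digSeries_nonneg c (by norm_num) one_pos.le
  · have := digSeries_le (q := 2⁻¹) (A := 1) (by norm_num) (by norm_num) one_pos.le c
    rw [show (1:ℝ) * 2⁻¹ / (1 - 2⁻¹) = 1 by norm_num] at this
    exact this

lemma continuous_binVal : Continuous binVal :=
  continuous_digSeries (by norm_num) (by norm_num) one_pos.le

def binRem (y : ℝ) : ℕ → ℝ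
  | 0 => y
  | (i+1) => 2 * binRem y i - (if 1 ≤ 2 * binRem y i then 1 else 0)

def binDig (y : ℝ) (i : ℕ) : Bool := decide (1 ≤ 2 * binRem y i)

lemma binRem_mem {y : ℝ} (hy : y ∈ Icc (0:ℝ) 1) : ∀ i, binRem y i ∈ Icc (0:ℝ) 1 := by
  intro i
  induction i with
  | zero => exact hy
  | succ i ih =>
    obtain ⟨h0, h1⟩ := ih
    rw [binRem]
    split <;> constructor <;> nlinarith

lemma binRem_partial {y : ℝ} : ∀ n : ℕ,
    (∑ i ∈ Finset.range n, if binDig y i then (1:ℝ) * 2⁻¹ ^ (i+1) else 0)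
      = y - binRem y n * 2⁻¹ ^ n := by
  intro n
  induction n with
  | zero => simp [binRem]
  | succ n ih =>
    rw [Finset.sum_range_succ, ih, binRem, binDig]
    rcases le_or_gt 1 (2 * binRem y n) with h | h
    · rw [if_pos h, if_pos (by exact decide_eq_true h)]
      ring
    · rw [if_neg (not_le.mpr h), if_neg (by simp [not_le.mpr h])]
      ring

lemma binVal_binDig {y : ℝ} (hy : y ∈ Icc (0:ℝ) 1) : binVal (binDig y) = y := by
  have hsum := summable_digSeries (q := 2⁻¹) (A := 1) (by norm_num) (by norm_num) one_pos.le (binDig y)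
  have htend : Tendsto (fun n => ∑ i ∈ Finset.range n,
      if binDig y i then (1:ℝ) * 2⁻¹ ^ (i+1) else 0) atTop (𝓝 y) := by
    simp only [binRem_partial]
    have hpow : Tendsto (fun n : ℕ => (2⁻¹ : ℝ) ^ n) atTop (𝓝 0) :=
      tendsto_pow_atTop_nhds_zero_of_lt_one (by norm_num) (by norm_num)
    have h2 : Tendsto (fun n : ℕ => binRem y n * 2⁻¹ ^ n) atTop (𝓝 0) := by
      refine squeeze_zero_norm (fun n => ?_) hpow
      rw [Real.norm_eq_abs, abs_mul]
      have hm := binRem_mem hy n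
      have : |binRem y n| ≤ 1 := abs_le.mpr ⟨by linarith [hm.1], hm.2⟩
      calc |binRem y n| * |(2:ℝ)⁻¹ ^ n| ≤ 1 * |(2:ℝ)⁻¹ ^ n| := by
            exact mul_le_mul_of_nonneg_right this (abs_nonneg _)
        _ = (2⁻¹:ℝ) ^ n := by rw [one_mul, abs_of_nonneg (by positivity)]
    have := Tendsto.const_sub y h2
    simpa using this
  have := (hsum.hasSum_iff_tendsto_nat).mpr htend
  exact this.tsum_eq

/-! ### Ternary values and digit extraction -/

def terVal (c : ℕ → Bool) : ℝ := digSeries 3⁻¹ 2 c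

lemma terVal_mem_Icc (c : ℕ → Bool) : terVal c ∈ Icc (0:ℝ) 1 := by
  constructor
  · exact digSeries_nonneg c (by norm_num) (by norm_num)
  · have := digSeries_le (q := 3⁻¹) (A := 2) (by norm_num) (by norm_num) (by norm_num) c
    rw [show (2:ℝ) * 3⁻¹ / (1 - 3⁻¹) = 1 by norm_num] at this
    exact this

lemma continuous_terVal : Continuous terVal :=
  continuous_digSeries (by norm_num) (by norm_num) (by norm_num)

lemma terVal_rec (c : ℕ → Bool) :
    terVal c = (if c 0 then (2:ℝ) * 3⁻¹ else 0) + 3⁻¹ * terVal (fun r => c (r+1)) :=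
  digSeries_rec (by norm_num) (by norm_num) (by norm_num) c

lemma terVal_head_true {c : ℕ → Bool} (h : c 0 = true) : 2/3 ≤ terVal c := by
  rw [terVal_rec c, if_pos h]
  have := (terVal_mem_Icc (fun r => c (r+1))).1
  nlinarith

lemma terVal_head_false {c : ℕ → Bool} (h : c 0 = false) : terVal c ≤ 1/3 := by
  rw [terVal_rec c, if_neg (by simp [h])]
  have := (terVal_mem_Icc (fun r => c (r+1))).2
  nlinarith

def terRem (t : ℝ) : ℕ → ℝ
  | 0 => t
  | (i+1) => 3 * terRem t i - (if 2⁻¹ ≤ terRem t i then 2 else 0)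

def dig (t : ℝ) (i : ℕ) : Bool := decide (2⁻¹ ≤ terRem t i)

lemma terRem_terVal (b : ℕ → Bool) : ∀ i, terRem (terVal b) i = terVal (fun r => b (r + i)) := by
  intro i
  induction i with
  | zero => simp [terRem]
  | succ i ih =>
    rw [terRem, ih]
    set bi := fun r => b (r + i) with hbi
    have hshift : (fun r => bi (r+1)) = fun r => b (r + (i+1)) := by
      funext r; simp only [hbi]; congr 1; omega
    rcases Bool.eq_false_or_eq_true (bi 0) with h | h
    · have hge : 2/3 ≤ terVal bi := terVal_head_true h
      rw [if_pos (by linarith), terVal_rec bi, if_pos h, ← hshift]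
      ring
    · have hle : terVal bi ≤ 1/3 := terVal_head_false h
      rw [if_neg (by norm_num; linarith), terVal_rec bi, if_neg (by simp [h]), ← hshift]
      ring

lemma dig_terVal (b : ℕ → Bool) : dig (terVal b) = b := by
  funext i
  rw [dig, terRem_terVal b i]
  rcases Bool.eq_false_or_eq_true (b (0 + i)) with h | h
  · have hge := terVal_head_true (c := fun r => b (r + i)) h
    rw [show (0:ℕ) + i = i by omega] at h
    rw [h]
    exact decide_eq_true (by linarith)
  · have hle := terVal_head_false (c := fun r => b (r + i)) h
    rw [show (0:ℕ) + i = i by omega] at h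
    rw [h]
    simp only [decide_eq_false_iff_not, not_le]
    linarith

lemma terVal_injective : Function.Injective terVal := by
  intro a b h
  rw [← dig_terVal a, ← dig_terVal b, h]

lemma measurable_terRem (i : ℕ) : Measurable (fun t => terRem t i) := by
  induction i with
  | zero => exact measurable_id
  | succ i ih =>
    have : (fun t => terRem t (i+1))
        = (fun x : ℝ => 3 * x - if 2⁻¹ ≤ x then 2 else 0) ∘ (fun t => terRem t i) := by
      funext t; simp [terRem]
    rw [this]
    refine Measurable.comp ?_ ih
    exact (measurable_const.mul measurable_id).sub
      (Measurable.ite measurableSet_Ici measurable_const measurable_const)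

lemma measurable_dig : Measurable dig := by
  refine measurable_pi_lambda _ fun i => ?_
  have : (fun t => dig t i) = (fun x : ℝ => decide (2⁻¹ ≤ x)) ∘ (fun t => terRem t i) := rfl
  rw [this]
  refine Measurable.comp ?_ (measurable_terRem i)
  have : (fun x : ℝ => decide (2⁻¹ ≤ x)) = fun x => if 2⁻¹ ≤ x then true else false := by
    funext x; split <;> simp_all
  rw [this]
  exact Measurable.ite measurableSet_Ici measurable_const measurable_const



/-! ### The Cantor set and the curve -/

def tCantor : Set ℝ := Set.range terVal

lemma tCantor_subset_Icc : tCantor ⊆ Icc (0:ℝ) 1 := by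
  rintro t ⟨b, rfl⟩; exact terVal_mem_Icc b

lemma isClosed_tCantor : IsClosed tCantor :=
  (isCompact_range continuous_terVal).isClosed

def terEquiv : (ℕ → Bool) ≃ tCantor := Equiv.ofInjective terVal terVal_injective

lemma terEquiv_val (b : ℕ → Bool) : ((terEquiv b : tCantor) : ℝ) = terVal b := by
  rfl

def terHomeo : (ℕ → Bool) ≃ₜ tCantor :=
  Continuous.homeoOfEquivCompactToT2 (f := terEquiv)
    (by
      rw [show (⇑terEquiv : (ℕ → Bool) → tCantor) = fun b => ⟨terVal b, ⟨b, rfl⟩⟩ by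
        funext b
        ext
        exact terEquiv_val b]
      exact Continuous.subtype_mk continuous_terVal _)

lemma terHomeo_val (b : ℕ → Bool) : ((terHomeo b : tCantor) : ℝ) = terVal b :=
  terEquiv_val b

lemma dig_val (p : tCantor) : dig (p : ℝ) = terHomeo.symm p := by
  conv_lhs => rw [← terHomeo.apply_symm_apply p]
  rw [terHomeo_val, dig_terVal]

def phiC (k : ℕ) (b : ℕ → Bool) : Fin k → Fin k → ℝ :=
  fun i j => binVal (fun r => b (Encodable.encode ((i, j), r)))

lemma continuous_phiC (k : ℕ) : Continuous (phiC k) := by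
  refine continuous_pi fun i => continuous_pi fun j => ?_
  exact continuous_binVal.comp (continuous_pi fun r => continuous_apply _)

lemma phiC_surj (k : ℕ) (x : Fin k → Fin k → ℝ) (hx : ∀ i j, x i j ∈ Icc (0:ℝ) 1) :
    ∃ b, phiC k b = x := by
  have hex : ∀ i j, ∃ c, binVal c = x i j :=
    fun i j => ⟨binDig (x i j), binVal_binDig (hx i j)⟩
  choose c hc using hex
  refine ⟨fun m => ((Encodable.decode₂ ((Fin k × Fin k) × ℕ) m).map
    (fun p => c p.1.1 p.1.2 p.2)).getD false, ?_⟩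
  funext i j
  rw [phiC, ← hc i j]
  congr 1
  funext r
  rw [Encodable.decode₂_encode]
  rfl

def curveK (k : ℕ) : ℝ → (Fin k → Fin k → ℝ) := fun t => phiC k (dig t)

lemma measurable_curveK (k : ℕ) : Measurable (curveK k) :=
  (continuous_phiC k).measurable.comp measurable_dig

lemma curveK_lift (k : ℕ) (x : Fin k → Fin k → ℝ) (hx : ∀ i j, x i j ∈ Icc (0:ℝ) 1) :
    ∃ t ∈ tCantor, curveK k t = x := by
  obtain ⟨b, hb⟩ := phiC_surj k x hx
  exact ⟨terVal b, ⟨b, rfl⟩, by rw [curveK, dig_terVal, hb]⟩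

lemma continuousOn_curveK (k : ℕ) : ContinuousOn (curveK k) tCantor := by
  rw [continuousOn_iff_continuous_restrict]
  have : tCantor.restrict (curveK k) = (phiC k) ∘ (fun p => terHomeo.symm p) := by
    funext p
    simp only [Set.restrict_apply, curveK, Function.comp_apply, dig_val]
    exact congrArg (phiC k) (dig_val p)
  rw [show tCantor.domRestrict (curveK k) = tCantor.restrict (curveK k) from rfl, this]
  exact (continuous_phiC k).comp terHomeo.symm.continuous

lemma curveK_tendsto (k : ℕ) {t : ℕ → ℝ} {l : ℝ} (ht : ∀ j, t j ∈ tCantor)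
    (hl : l ∈ tCantor) (h : Tendsto t atTop (𝓝 l)) :
    Tendsto (fun j => curveK k (t j)) atTop (𝓝 (curveK k l)) := by
  have hcw : ContinuousWithinAt (curveK k) tCantor l := (continuousOn_curveK k) l hl
  refine hcw.tendsto.comp ?_
  rw [tendsto_nhdsWithin_iff]
  exact ⟨h, Eventually.of_forall ht⟩


def stepIdx (N : ℕ) (hN : 0 < N) (u : ℝ) : Fin N :=
  ⟨min (Nat.floor (u * N)) (N-1), by omega⟩

def stepFn {N : ℕ} (hN : 0 < N) (s : Fin N → ℝ) (u : ℝ) : ℝ := s (stepIdx N hN u)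

lemma monotone_stepFn {N : ℕ} (hN : 0 < N) {s : Fin N → ℝ} (hs : Monotone s) :
    Monotone (stepFn hN s) := by
  intro u v huv
  refine hs ?_
  simp only [stepIdx, Fin.mk_le_mk]
  exact min_le_min (Nat.floor_le_floor (by nlinarith [Nat.cast_nonneg (α := ℝ) N])) le_rfl

lemma stepIdx_eq {N : ℕ} (hN : 0 < N) {i : ℕ} (hi : i < N) {u : ℝ}
    (h1 : (i:ℝ)/N ≤ u) (h2 : u < ((i:ℝ)+1)/N) : stepIdx N hN u = ⟨i, hi⟩ := by
  have hNpos : (0:ℝ) < N := by exact_mod_cast hN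
  have hu0 : 0 ≤ u := le_trans (by positivity) h1
  have hfl : Nat.floor (u * N) = i := by
    rw [Nat.floor_eq_iff (by positivity)]
    exact ⟨(div_le_iff₀ hNpos).mp h1, by exact_mod_cast (lt_div_iff₀ hNpos).mp h2⟩
  simp only [stepIdx, hfl, Fin.mk.injEq]
  omega

lemma Ico_eq_biUnion (N : ℕ) (hN : 0 < N) :
    Ico (0:ℝ) 1 = ⋃ i ∈ (Finset.univ : Finset (Fin N)), Ico ((i:ℝ)/N) (((i:ℝ)+1)/N) := by
  have hNpos : (0:ℝ) < N := by exact_mod_cast hN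
  ext u
  simp only [Set.mem_Ico, Set.mem_iUnion, Finset.mem_univ, exists_prop, true_and]
  constructor
  · rintro ⟨h0, h1⟩
    have hu : 0 ≤ u * N := by positivity
    have hlt : Nat.floor (u * N) < N := by
      rw [Nat.floor_lt hu]
      nlinarith
    refine ⟨⟨Nat.floor (u * N), hlt⟩, ?_, ?_⟩
    · rw [div_le_iff₀ hNpos]
      exact Nat.floor_le hu
    · rw [lt_div_iff₀ hNpos]
      push_cast
      exact Nat.lt_floor_add_one (u * N)
  · rintro ⟨i, hi1, hi2⟩
    refine ⟨le_trans (by positivity) hi1, lt_of_lt_of_le hi2 ?_⟩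
    rw [div_le_one hNpos]
    have : (i:ℕ) + 1 ≤ N := i.isLt
    exact_mod_cast this

lemma integral_stepFn {N : ℕ} (hN : 0 < N) (s : Fin N → ℝ) (F : ℝ → ℝ) :
    ∫ u in Ico (0:ℝ) 1, F (stepFn hN s u) = ∑ i : Fin N, (N:ℝ)⁻¹ * F (s i) := by
  have hNpos : (0:ℝ) < N := by exact_mod_cast hN
  have heqon : ∀ i : Fin N, Set.EqOn (fun u => F (stepFn hN s u)) (fun _ => F (s i))
      (Ico ((i:ℝ)/N) (((i:ℝ)+1)/N)) := by
    intro i u hu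
    simp only [stepFn, stepIdx_eq hN i.isLt hu.1 hu.2]
  have hdisj : (↑(Finset.univ : Finset (Fin N)) : Set (Fin N)).Pairwise
      (Function.onFun Disjoint fun i : Fin N => Ico ((i:ℝ)/N) (((i:ℝ)+1)/N)) := by
    intro i _ j _ hij
    have key : ∀ a b : Fin N, (a:ℕ) < (b:ℕ) →
        Disjoint (Ico ((a:ℝ)/N) (((a:ℝ)+1)/N)) (Ico ((b:ℝ)/N) (((b:ℝ)+1)/N)) := by
      intro a b hab
      refine Set.Ico_disjoint_Ico.mpr ?_
      have h1 : ((a:ℝ)+1)/N ≤ (b:ℝ)/N := by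
        gcongr
        exact_mod_cast hab
      calc min (((a:ℝ)+1)/N) (((b:ℝ)+1)/N) ≤ ((a:ℝ)+1)/N := min_le_left _ _
        _ ≤ (b:ℝ)/N := h1
        _ ≤ max ((a:ℝ)/N) ((b:ℝ)/N) := le_max_right _ _
    rcases Nat.lt_or_ge (i:ℕ) (j:ℕ) with h | h
    · exact key i j h
    · have : (j:ℕ) < (i:ℕ) := lt_of_le_of_ne h (fun hh => hij (Fin.ext hh.symm))
      exact (key j i this).symm
  have hmeas : ∀ i ∈ (Finset.univ : Finset (Fin N)),
      MeasurableSet (Ico ((i:ℝ)/N) (((i:ℝ)+1)/N)) := fun i _ => measurableSet_Ico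
  have hint : ∀ i ∈ (Finset.univ : Finset (Fin N)),
      IntegrableOn (fun u => F (stepFn hN s u)) (Ico ((i:ℝ)/N) (((i:ℝ)+1)/N)) volume := by
    intro i _
    refine IntegrableOn.congr_fun ?_ (heqon i).symm measurableSet_Ico
    exact integrableOn_const measure_Ico_lt_top.ne
  rw [Ico_eq_biUnion N hN, integral_biUnion_finset _ hmeas hdisj hint]
  refine Finset.sum_congr rfl fun i _ => ?_
  rw [setIntegral_congr_fun measurableSet_Ico (heqon i), setIntegral_const, measureReal_def, Real.volume_Ico,
    show ((i:ℝ)+1)/N - (i:ℝ)/N = 1/N by ring, ENNReal.toReal_ofReal (by positivity),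
    smul_eq_mul, one_div]




/-! ### atoms lie in the cube -/

lemma quotGraph_mem_Icc {n k : ℕ} {G : Fin n → Fin n → ℝ} (hG : IsWeightedGraph G)
    (f : Fin n → Fin k) (i j : Fin k) : quotGraph f G i j ∈ Icc (0:ℝ) 1 := by
  obtain ⟨hpos, hsum⟩ := hG
  constructor
  · refine Finset.sum_nonneg fun u _ => Finset.sum_nonneg fun v _ => ?_
    split
    · exact hpos u v
    · exact le_rfl
  · rw [← hsum]
    refine Finset.sum_le_sum fun u _ => Finset.sum_le_sum fun v _ => ?_
    split
    · exact le_rfl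
    · exact hpos u v

/-! ### sorted lifts -/

lemma card_fun_pos {k n : ℕ} (hk : 0 < k) : 0 < Fintype.card (Fin n → Fin k) := by
  have : Nonempty (Fin n → Fin k) := ⟨fun _ => ⟨0, hk⟩⟩
  exact Fintype.card_pos

def sortedLift (k n : ℕ) (t : (Fin n → Fin k) → ℝ) :
    Fin (Fintype.card (Fin n → Fin k)) → ℝ :=
  (fun i => t ((Fintype.equivFin _).symm i)) ∘
    (Tuple.sort (fun i => t ((Fintype.equivFin _).symm i)))

lemma monotone_sortedLift (k n : ℕ) (t : (Fin n → Fin k) → ℝ) :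
    Monotone (sortedLift k n t) := Tuple.monotone_sort _

lemma sortedLift_mem {k n : ℕ} {t : (Fin n → Fin k) → ℝ} {S : Set ℝ}
    (h : ∀ f, t f ∈ S) (i) : sortedLift k n t i ∈ S := h _

def quantFn (k n : ℕ) (hk : 0 < k) (t : (Fin n → Fin k) → ℝ) : ℝ → ℝ :=
  stepFn (card_fun_pos hk) (sortedLift k n t)


/-! ### main integral identity -/

lemma quotientLaw_integral {k n : ℕ} (hk : 0 < k) (G : Fin n → Fin n → ℝ)
    (t : (Fin n → Fin k) → ℝ) (hcurve : ∀ f, curveK k (t f) = quotGraph f G)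
    (f : (Fin k → Fin k → ℝ) →ᵇ ℝ) :
    ∫ x, f x ∂(quotientLaw G k)
      = ∫ u in Ico (0:ℝ) 1, f (curveK k (quantFn k n hk t u)) := by
  have hcard : (Fintype.card (Fin n → Fin k) : ℝ) = (k:ℝ) ^ n := by
    rw [Fintype.card_fun, Fintype.card_fin, Fintype.card_fin]
    push_cast
    rfl
  -- RHS
  rw [show (∫ u in Ico (0:ℝ) 1, f (curveK k (quantFn k n hk t u)))
      = ∫ u in Ico (0:ℝ) 1,
          (fun x => f (curveK k x)) (stepFn (card_fun_pos hk) (sortedLift k n t) u) from rfl,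
    integral_stepFn (card_fun_pos hk) (sortedLift k n t) (fun x => f (curveK k x))]
  -- LHS
  rw [quotientLaw, integral_smul_measure, integral_finset_sum_measure
    (fun g _ => f.integrable _)]
  simp only [integral_dirac]
  -- rewrite RHS sum
  have hsum : ∑ i : Fin (Fintype.card (Fin n → Fin k)),
      (Fintype.card (Fin n → Fin k) : ℝ)⁻¹ * f (curveK k (sortedLift k n t i))
      = (Fintype.card (Fin n → Fin k) : ℝ)⁻¹ * ∑ g : Fin n → Fin k, f (quotGraph g G) := by
    rw [← Finset.mul_sum]
    congr 1
    have h1 : ∀ i, curveK k (sortedLift k n t i)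
        = quotGraph ((Fintype.equivFin (Fin n → Fin k)).symm
            ((Tuple.sort (fun i => t ((Fintype.equivFin _).symm i))) i)) G := by
      intro i
      rw [sortedLift, Function.comp_apply, hcurve]
    simp only [h1]
    rw [Equiv.sum_comp (Tuple.sort (fun i => t ((Fintype.equivFin _).symm i)))
      (fun i => f (quotGraph ((Fintype.equivFin (Fin n → Fin k)).symm i) G))]
    exact Equiv.sum_comp (Fintype.equivFin (Fin n → Fin k)).symm
      (fun g => f (quotGraph g G))
  rw [hsum, hcard]
  rw [smul_eq_mul]
  congr 1
  rw [ENNReal.toReal_inv, ENNReal.toReal_pow]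
  norm_num


lemma exists_subseq_tendsto_pi (v : ℕ → (ℕ × ℚ) → ℝ) (hv : ∀ m p, v m p ∈ Icc (0:ℝ) 1) :
    ∃ (φ : ℕ → ℕ) (L : (ℕ × ℚ) → ℝ), StrictMono φ ∧ (∀ p, L p ∈ Icc (0:ℝ) 1) ∧
      ∀ p, Tendsto (fun j => v (φ j) p) atTop (𝓝 (L p)) := by
  let P := (ℕ × ℚ) → (Icc (0:ℝ) 1)
  letI : PseudoMetricSpace P := TopologicalSpace.pseudoMetrizableSpacePseudoMetric P
  haveI : SeqCompactSpace P := compactSpace_iff_seqCompactSpace.mp inferInstance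
  obtain ⟨a, φ, hφ, h⟩ := SeqCompactSpace.tendsto_subseq
    (fun m => (fun p => ⟨v m p, hv m p⟩ : P))
  refine ⟨φ, fun p => (a p : ℝ), hφ, fun p => (a p).2, fun p => ?_⟩
  have hp := tendsto_pi_nhds.mp h p
  exact (continuous_subtype_val.tendsto (a p)).comp hp

section envelope

variable {gseq : ℕ → ℝ → ℝ} {L : ℚ → ℝ}

/-- The monotone right-continuous envelope of the limit values. -/
def envFn (L : ℚ → ℝ) (u : ℝ) : ℝ := sInf {r | ∃ q : ℚ, u < (q:ℝ) ∧ r = L q}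

lemma envSet_nonempty (u : ℝ) : {r | ∃ q : ℚ, u < (q:ℝ) ∧ r = L q}.Nonempty := by
  obtain ⟨q, hq⟩ := exists_rat_gt u
  exact ⟨L q, q, hq, rfl⟩

lemma envSet_bddBelow (hL : ∀ q, L q ∈ Icc (0:ℝ) 1) (u : ℝ) :
    BddBelow {r | ∃ q : ℚ, u < (q:ℝ) ∧ r = L q} := by
  refine ⟨0, ?_⟩
  rintro r ⟨q, hq, rfl⟩
  exact (hL q).1

lemma monotone_envFn (hL : ∀ q, L q ∈ Icc (0:ℝ) 1) : Monotone (envFn L) := by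
  intro u v huv
  refine csInf_le_csInf (envSet_bddBelow hL u) (envSet_nonempty v) ?_
  rintro r ⟨q, hq, rfl⟩
  exact ⟨q, lt_of_le_of_lt huv hq, rfl⟩

lemma envFn_mem {S : Set ℝ} (hS : IsClosed S) (hLS : ∀ q, L q ∈ S)
    (hL : ∀ q, L q ∈ Icc (0:ℝ) 1) (u : ℝ) : envFn L u ∈ S := by
  have h1 : envFn L u ∈ closure {r | ∃ q : ℚ, u < (q:ℝ) ∧ r = L q} :=
    csInf_mem_closure (envSet_nonempty u) (envSet_bddBelow hL u)
  refine closure_minimal ?_ hS h1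
  rintro r ⟨q, hq, rfl⟩
  exact hLS q

lemma tendsto_envFn (hmono : ∀ j, Monotone (gseq j))
    (hrange : ∀ j u, gseq j u ∈ Icc (0:ℝ) 1)
    (hL : ∀ q, L q ∈ Icc (0:ℝ) 1)
    (hq : ∀ q : ℚ, Tendsto (fun j => gseq j (q:ℝ)) atTop (𝓝 (L q)))
    {u : ℝ} (hu : ContinuousAt (envFn L) u) :
    Tendsto (fun j => gseq j u) atTop (𝓝 (envFn L u)) := by
  have hbddAbove : ∀ w : ℝ, IsBoundedUnder (· ≤ ·) atTop (fun j => gseq j w) :=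
    fun w => isBoundedUnder_of ⟨1, fun j => (hrange j w).2⟩
  have hbddBelow : ∀ w : ℝ, IsBoundedUnder (· ≥ ·) atTop (fun j => gseq j w) :=
    fun w => isBoundedUnder_of ⟨0, fun j => (hrange j w).1⟩
  have hsup : limsup (fun j => gseq j u) atTop ≤ envFn L u := by
    refine le_csInf (envSet_nonempty u) ?_
    rintro r ⟨q, hq', rfl⟩
    have h1 : limsup (fun j => gseq j u) atTop ≤ limsup (fun j => gseq j (q:ℝ)) atTop :=
      limsup_le_limsup (Eventually.of_forall fun j => hmono j hq'.le)
        ((hbddBelow u).isCoboundedUnder_le) (hbddAbove _)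
    rwa [(hq q).limsup_eq] at h1
  have hlow : ∀ v, v < u → envFn L v ≤ liminf (fun j => gseq j u) atTop := by
    intro v hv
    obtain ⟨q, hq1, hq2⟩ := exists_rat_btwn hv
    have h1 : envFn L v ≤ L q := csInf_le (envSet_bddBelow hL v) ⟨q, hq1, rfl⟩
    have h2 : liminf (fun j => gseq j (q:ℝ)) atTop ≤ liminf (fun j => gseq j u) atTop :=
      liminf_le_liminf (Eventually.of_forall fun j => hmono j hq2.le)
        (hbddBelow _) ((hbddAbove u).isCoboundedUnder_ge)
    rw [(hq q).liminf_eq] at h2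
    linarith
  have hleft : envFn L u ≤ liminf (fun j => gseq j u) atTop := by
    have ht : Tendsto (envFn L) (𝓝[<] u) (𝓝 (envFn L u)) :=
      hu.tendsto.mono_left nhdsWithin_le_nhds
    refine le_of_tendsto ht ?_
    exact eventually_nhdsWithin_of_forall fun v hv => hlow v hv
  exact tendsto_of_le_liminf_of_limsup_le hleft hsup (hbddAbove u) (hbddBelow u)

end envelope

end Aux


lemma monotone_quantFn (k n : ℕ) (hk : 0 < k) (t : (Fin n → Fin k) → ℝ) :
    Monotone (quantFn k n hk t) :=
  monotone_stepFn _ (monotone_sortedLift k n t)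

lemma quantFn_mem {k n : ℕ} (hk : 0 < k) {t : (Fin n → Fin k) → ℝ} {S : Set ℝ}
    (h : ∀ f, t f ∈ S) (u : ℝ) : quantFn k n hk t u ∈ S :=
  sortedLift_mem h _

/-- every sequence of weighted graphs has a quotient-convergent
subsequence. -/
theorem stmt1 (G : ∀ n : ℕ, Fin (n + 1) → Fin (n + 1) → ℝ)
    (hG : ∀ n, IsWeightedGraph (G n)) :
    ∃ φ : ℕ → ℕ, StrictMono φ ∧ QuotientConverges (fun m => G (φ m)) := by
  classical
  have hlift : ∀ (k m : ℕ) (f' : Fin (m+1) → Fin k), ∃ t, t ∈ tCantor ∧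
      curveK k t = quotGraph f' (G m) := fun k m f' =>
    curveK_lift k _ (fun i j => quotGraph_mem_Icc (hG m) f' i j)
  choose tl htl1 htl2 using hlift
  let v : ℕ → (ℕ × ℚ) → ℝ := fun m p =>
    if hk : 0 < p.1 then quantFn p.1 (m+1) hk (tl p.1 m) (p.2 : ℝ) else 0
  have hv : ∀ m p, v m p ∈ Set.Icc (0:ℝ) 1 := by
    intro m p
    simp only [v]
    split
    · exact tCantor_subset_Icc (quantFn_mem _ (fun f' => (htl1 _ _ f')) _)
    · exact ⟨le_rfl, zero_le_one⟩
  obtain ⟨φ, L, hφ, hL, hLt⟩ := exists_subseq_tendsto_pi v hv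
  refine ⟨φ, hφ, ?_⟩
  intro k hk
  have hk' : 0 < k := hk
  set gj : ℕ → ℝ → ℝ := fun j => quantFn k (φ j + 1) hk' (tl k (φ j)) with hgj
  have hmono : ∀ j, Monotone (gj j) := fun j => monotone_quantFn _ _ _ _
  have hmem : ∀ j u, gj j u ∈ tCantor :=
    fun j u => quantFn_mem _ (fun f' => htl1 _ _ f') _
  have hrange : ∀ j u, gj j u ∈ Set.Icc (0:ℝ) 1 := fun j u => tCantor_subset_Icc (hmem j u)
  set Lk : ℚ → ℝ := fun q => L (k, q) with hLkdef
  have hLq : ∀ q : ℚ, Tendsto (fun j => gj j (q:ℝ)) atTop (𝓝 (Lk q)) := by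
    intro q
    have h1 := hLt (k, q)
    have h2 : ∀ j, v (φ j) (k, q) = gj j (q:ℝ) := by
      intro j
      simp only [v, dif_pos hk']
      rfl
    rwa [funext h2] at h1
  have hLk : ∀ q, Lk q ∈ Set.Icc (0:ℝ) 1 := fun q => hL (k, q)
  have hLkC : ∀ q, Lk q ∈ tCantor := fun q =>
    isClosed_tCantor.mem_of_tendsto (hLq q) (Eventually.of_forall fun j => hmem j _)
  set gl : ℝ → ℝ := envFn Lk with hgl
  have hglmono : Monotone gl := monotone_envFn hLk
  have hglC : ∀ u, gl u ∈ tCantor := fun u => envFn_mem isClosed_tCantor hLkC hLk u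
  set μ₀ : Measure ℝ := volume.restrict (Set.Ico (0:ℝ) 1) with hμ₀
  haveI : IsProbabilityMeasure μ₀ := by
    constructor
    rw [hμ₀, Measure.restrict_apply_univ, Real.volume_Ico]
    norm_num
  set T : ℝ → (Fin k → Fin k → ℝ) := fun u => curveK k (gl u) with hT
  have hTmeas : Measurable T := (measurable_curveK k).comp hglmono.measurable
  refine ⟨Measure.map T μ₀, Measure.isProbabilityMeasure_map hTmeas.aemeasurable, ?_⟩
  intro f
  have hmap : ∫ x, f x ∂(Measure.map T μ₀) = ∫ u, f (T u) ∂μ₀ :=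
    integral_map hTmeas.aemeasurable f.continuous.aestronglyMeasurable
  rw [hmap]
  have hident : ∀ j, ∫ x, f x ∂(quotientLaw (G (φ j)) k) = ∫ u, f (curveK k (gj j u)) ∂μ₀ :=
    fun j => quotientLaw_integral hk' (G (φ j)) (tl k (φ j)) (fun f' => htl2 _ _ f') f
  refine Tendsto.congr (fun j => (hident j).symm) ?_
  refine tendsto_integral_of_dominated_convergence (fun _ => ‖f‖) ?_ ?_ ?_ ?_
  · intro j
    exact (f.continuous.measurable.comp
      ((measurable_curveK k).comp (hmono j).measurable)).aestronglyMeasurable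
  · exact integrable_const _
  · intro j
    exact Eventually.of_forall fun u => f.norm_coe_le_norm _
  · have hcount : {u : ℝ | ¬ ContinuousAt gl u}.Countable :=
      hglmono.countable_not_continuousAt
    have hnull : μ₀ {u : ℝ | ¬ ContinuousAt gl u} = 0 := by
      have h0 : volume {u : ℝ | ¬ ContinuousAt gl u} = 0 := hcount.measure_zero _
      have hle : μ₀ {u : ℝ | ¬ ContinuousAt gl u} ≤ volume {u : ℝ | ¬ ContinuousAt gl u} :=
        Measure.restrict_apply_le _ _
      exact le_antisymm (hle.trans h0.le) (by simp)
    have hae : ∀ᵐ u ∂μ₀, ContinuousAt gl u := by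
      rw [MeasureTheory.ae_iff]
      exact hnull
    filter_upwards [hae] with u hu
    have h1 : Tendsto (fun j => gj j u) atTop (𝓝 (gl u)) :=
      tendsto_envFn hmono hrange hLk hLq hu
    have h2 : Tendsto (fun j => curveK k (gj j u)) atTop (𝓝 (curveK k (gl u))) :=
      curveK_tendsto k (fun j => hmem j u) (hglC u) h1
    exact (f.continuous.tendsto _).comp h2
end
end

section
/- For every fixed k ∈ ℕ, the laws of the random quotients ρ(F_{k,n})(n^{−2}𝟙_{n×n}) of the normalized complete graphs converge weakly, as n → ∞, to the point mass at the deterministic matrix k^{−2}𝟙_{k×k}, where 𝟙_{m×m} denotes the m×m all-ones matrix. In particular, the sequence (n^{−2}𝟙_{n×n} ∈ Δ^{n×n})_n quotient-converges. -/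
open MeasureTheory Filter Topology BoundedContinuousFunction
open scoped ENNReal NNReal

noncomputable section

namespace Stmt6Aux

open Finset

def cnt {N k : ℕ} (f : Fin N → Fin k) (i : Fin k) : ℕ :=
  (Finset.univ.filter fun u => f u = i).card

lemma cnt_real {N k : ℕ} (f : Fin N → Fin k) (i : Fin k) :
    ((cnt f i : ℝ)) = ∑ u, (if f u = i then (1:ℝ) else 0) := by
  rw [Finset.sum_boole]; rfl

lemma sum_cnt {N k : ℕ} (f : Fin N → Fin k) : ∑ i, cnt f i = N := by
  have := Finset.card_eq_sum_card_fiberwise (f := f) (s := univ) (t := univ)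
    (fun x _ => mem_univ _)
  simpa [cnt] using this.symm

lemma cnt_le {N k : ℕ} (f : Fin N → Fin k) (i : Fin k) : cnt f i ≤ N := by
  simpa [cnt] using (Finset.card_filter_le univ (fun u => f u = i))

lemma quotGraph_const {N k : ℕ} (f : Fin N → Fin k) (i j : Fin k) (c : ℝ) :
    (∑ u, ∑ v, if f u = i ∧ f v = j then c else 0) = (cnt f i) * (cnt f j) * c := by
  have : ∀ u v : Fin N, (if f u = i ∧ f v = j then c else 0)
      = (if f u = i then (1:ℝ) else 0) * ((if f v = j then (1:ℝ) else 0) * c) := by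
    intro u v
    by_cases h1 : f u = i <;> by_cases h2 : f v = j <;> simp [h1, h2]
  simp_rw [this, ← Finset.mul_sum, ← Finset.sum_mul, ← cnt_real]
  ring

lemma sum_cnt_sq {N k : ℕ} (f : Fin N → Fin k) :
    (∑ i, (cnt f i : ℝ)^2) = ∑ u, ∑ v, (if f u = f v then (1:ℝ) else 0) := by
  simp_rw [cnt_real, sq, Finset.sum_mul_sum]
  rw [Finset.sum_comm]
  congr 1; ext u
  rw [Finset.sum_comm]
  congr 1; ext v
  have : ∀ i : Fin k, (if f u = i then (1:ℝ) else 0) * (if f v = i then (1:ℝ) else 0)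
      = if i = f u then (if f u = f v then (1:ℝ) else 0) else 0 := by
    intro i
    by_cases h1 : f u = i
    · subst h1; simp [eq_comm]
    · simp [h1, Ne.symm h1]
  simp_rw [this, Finset.sum_ite_eq' univ (f u), mem_univ, if_true]

lemma sum_ite_eq_coord {N k : ℕ} {u v : Fin N} (huv : u ≠ v) :
    (∑ f : Fin N → Fin k, if f u = f v then (1:ℝ) else 0) * k = (k:ℝ)^N := by
  classical
  set e := Equiv.funSplitAt v (Fin k) with he
  have hsum : (∑ f : Fin N → Fin k, if f u = f v then (1:ℝ) else 0)
      = ∑ p : Fin k × ({ j // j ≠ v } → Fin k),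
          if (e.symm p) u = (e.symm p) v then (1:ℝ) else 0 := by
    rw [← Equiv.sum_comp e.symm (fun f => if f u = f v then (1:ℝ) else 0)]
  have hval : ∀ p : Fin k × ({ j // j ≠ v } → Fin k),
      (e.symm p) u = p.2 ⟨u, huv⟩ ∧ (e.symm p) v = p.1 := by
    intro p
    constructor
    · simp [he, Equiv.funSplitAt_symm_apply, huv]
    · simp [he, Equiv.funSplitAt_symm_apply]
  have h2 : (∑ p : Fin k × ({ j // j ≠ v } → Fin k),
      if (e.symm p) u = (e.symm p) v then (1:ℝ) else 0)
      = ∑ r : { j // j ≠ v } → Fin k, ∑ b : Fin k, if r ⟨u, huv⟩ = b then (1:ℝ) else 0 := by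
    rw [Fintype.sum_prod_type]
    rw [Finset.sum_comm]
    congr 1; ext r; congr 1; ext b
    rw [(hval (b, r)).1, (hval (b, r)).2]
  have h3 : ∀ r : { j // j ≠ v } → Fin k,
      (∑ b : Fin k, if r ⟨u, huv⟩ = b then (1:ℝ) else 0) = 1 := by
    intro r
    simp
  have hcard : (k:ℝ) * (Fintype.card ({ j // j ≠ v } → Fin k) : ℝ) = (k:ℝ)^N := by
    have h := Fintype.card_congr e
    rw [Fintype.card_prod] at h
    have : (k:ℕ)^N = k * Fintype.card ({ j // j ≠ v } → Fin k) := by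
      simpa [Fintype.card_fun] using h
    exact_mod_cast congrArg (Nat.cast : ℕ → ℝ) this.symm
  rw [hsum, h2]
  simp_rw [h3]
  rw [Finset.sum_const, Finset.card_univ, nsmul_eq_mul, mul_one, mul_comm]
  exact hcard

lemma moment {N k : ℕ} (hN : 0 < N) (hk : 1 ≤ k) :
    ∑ f : Fin N → Fin k, (∑ i, ((cnt f i : ℝ)/N - 1/k)^2) ≤ (k:ℝ)^N / N := by
  have hNr : (0:ℝ) < N := by exact_mod_cast hN
  have hkr : (0:ℝ) < k := by exact_mod_cast hk
  have step1 : ∀ f : Fin N → Fin k,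
      (∑ i, ((cnt f i : ℝ)/N - 1/k)^2) = (∑ i, (cnt f i:ℝ)^2)/N^2 - 1/k := by
    intro f
    have hsumc : (∑ i, (cnt f i : ℝ)) = N := by exact_mod_cast sum_cnt f
    have hexp : ∀ i : Fin k, ((cnt f i : ℝ)/N - 1/k)^2
        = (cnt f i:ℝ)^2/N^2 - 2/(N*k)*(cnt f i) + 1/k^2 := by
      intro i; field_simp; ring
    rw [Finset.sum_congr rfl fun i _ => hexp i, Finset.sum_add_distrib,
      Finset.sum_sub_distrib, ← Finset.sum_div, ← Finset.mul_sum, hsumc,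
      Finset.sum_const, card_univ, Fintype.card_fin, nsmul_eq_mul]
    field_simp
    ring
  have hdiag : ∀ u : Fin N, (∑ f : Fin N → Fin k, (if f u = f u then (1:ℝ) else 0)) = (k:ℝ)^N := by
    intro u
    simp [Finset.card_univ, Fintype.card_fun]
  have hoff : ∀ u v : Fin N, u ≠ v →
      (∑ f : Fin N → Fin k, (if f u = f v then (1:ℝ) else 0)) = (k:ℝ)^N / k := by
    intro u v huv
    rw [eq_div_iff (ne_of_gt hkr)]
    exact sum_ite_eq_coord huv
  have hT : ∀ u v : Fin N, (∑ f : Fin N → Fin k, (if f u = f v then (1:ℝ) else 0))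
      = (k:ℝ)^N/k + (if v = u then ((k:ℝ)^N - (k:ℝ)^N/k) else 0) := by
    intro u v
    by_cases h : v = u
    · subst h; rw [hdiag]; simp
    · rw [hoff u v (Ne.symm h), if_neg h, add_zero]
  have hswap : (∑ f : Fin N → Fin k, (∑ i, (cnt f i:ℝ)^2))
      = ∑ u : Fin N, ∑ v : Fin N, ∑ f : Fin N → Fin k, (if f u = f v then (1:ℝ) else 0) := by
    simp_rw [sum_cnt_sq]
    rw [Finset.sum_comm]
    refine Finset.sum_congr rfl fun u _ => ?_
    rw [Finset.sum_comm]
  have htot : (∑ f : Fin N → Fin k, (∑ i, (cnt f i:ℝ)^2))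
      = N * (N * ((k:ℝ)^N/k)) + N * ((k:ℝ)^N - (k:ℝ)^N/k) := by
    rw [hswap]
    simp_rw [hT, Finset.sum_add_distrib, Finset.sum_const, card_univ, Fintype.card_fin,
      nsmul_eq_mul, Finset.sum_ite_eq' univ _ (fun _ => ((k:ℝ)^N - (k:ℝ)^N/k)), mem_univ,
      if_true]
    rw [Finset.sum_const, card_univ, Fintype.card_fin, nsmul_eq_mul]
  rw [Finset.sum_congr rfl fun f _ => step1 f, Finset.sum_sub_distrib, ← Finset.sum_div,
    htot, Finset.sum_const, card_univ, Fintype.card_fun, Fintype.card_fin, nsmul_eq_mul,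
    Nat.cast_pow]
  have hkN : (0:ℝ) < (k:ℝ)^N := pow_pos hkr N
  have key : (↑N * (↑N * ((k:ℝ)^N/k)) + ↑N * ((k:ℝ)^N - (k:ℝ)^N/k)) / ↑N^2
      - (k:ℝ)^N * (1/k) = (k:ℝ)^N/N - (k:ℝ)^N/(N*k) := by
    field_simp
    ring
  simp only [Fintype.card_fin] at *
  rw [key]
  have : (0:ℝ) ≤ (k:ℝ)^N/(N*k) := by positivity
  linarith

lemma integral_quotientLaw {n k : ℕ} (G : Fin n → Fin n → ℝ)
    (F : (Fin k → Fin k → ℝ) →ᵇ ℝ) :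
    ∫ x, F x ∂(quotientLaw G k) = ((k:ℝ)^n)⁻¹ * ∑ f : Fin n → Fin k, F (quotGraph f G) := by
  rw [quotientLaw, integral_smul_measure, integral_finset_sum_measure
    (fun f _ => BoundedContinuousFunction.integrable _ F)]
  simp_rw [integral_dirac' _ _ F.continuous.stronglyMeasurable]
  rw [ENNReal.toReal_inv, ENNReal.toReal_pow, ENNReal.toReal_natCast, smul_eq_mul]

lemma key_tendsto (k : ℕ) (hk : 1 ≤ k) (F : (Fin k → Fin k → ℝ) →ᵇ ℝ) :
    Tendsto (fun n : ℕ => ((k:ℝ)^(n+1))⁻¹ *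
      ∑ f : Fin (n+1) → Fin k, F (quotGraph f (fun _ _ => 1/((n:ℝ)+1)^2)))
      atTop (𝓝 (F (fun _ _ => 1/(k:ℝ)^2))) := by
  have hkr : (0:ℝ) < k := by exact_mod_cast hk
  set a : Fin k → Fin k → ℝ := fun _ _ => 1/(k:ℝ)^2 with ha
  rw [Metric.tendsto_atTop]
  intro ε hε
  obtain ⟨δ, hδ, hcont⟩ :=
    Metric.continuousAt_iff.mp (F.continuous.continuousAt (x := a)) (ε/2) (half_pos hε)
  set c : ℝ := 8*‖F‖/δ^2 with hc
  have hc0 : 0 ≤ c := by positivity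
  obtain ⟨M, hM⟩ := exists_nat_gt (2*c/ε)
  refine ⟨M, fun n hn => ?_⟩
  set N := n + 1 with hNdef
  have hNR : ((N : ℕ) : ℝ) = (n:ℝ)+1 := by push_cast [hNdef]; ring
  have hNpos : (0:ℝ) < (N:ℝ) := by rw [hNR]; positivity
  set G : Fin N → Fin N → ℝ := fun _ _ => 1/((n:ℝ)+1)^2 with hG
  set K : ℝ := (k:ℝ)^N with hK
  have hKpos : (0:ℝ) < K := pow_pos hkr N
  set Sq : (Fin N → Fin k) → ℝ := fun f => ∑ i, ((cnt f i : ℝ)/N - 1/k)^2 with hSq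
  have hSq0 : ∀ f, 0 ≤ Sq f := fun f => Finset.sum_nonneg fun i _ => sq_nonneg _
  -- pointwise bound
  have hbound : ∀ f : Fin N → Fin k, |F (quotGraph f G) - F a| ≤ ε/2 + c * Sq f := by
    intro f
    by_cases hgood : ∀ i, |(cnt f i : ℝ)/N - 1/k| < δ/2
    · have hdist : dist (quotGraph f G) a < δ := by
        rw [dist_pi_lt_iff hδ]
        intro i
        rw [dist_pi_lt_iff hδ]
        intro j
        rw [Real.dist_eq]
        have hQ : quotGraph f G i j = (cnt f i : ℝ) * (cnt f j) * (1/((n:ℝ)+1)^2) :=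
          quotGraph_const f i j _
        have hcj0 : (0:ℝ) ≤ (cnt f j : ℝ)/N := by positivity
        have hcj1 : (cnt f j : ℝ)/N ≤ 1 := by
          rw [div_le_one hNpos]
          exact_mod_cast cnt_le f j
        have hk1 : (1:ℝ)/k ≤ 1 := by
          rw [div_le_one hkr]; exact_mod_cast hk
        have hsplit : (cnt f i : ℝ) * (cnt f j) * (1/((n:ℝ)+1)^2) - 1/(k:ℝ)^2
            = ((cnt f i : ℝ)/N - 1/k)*((cnt f j : ℝ)/N) + (1/k)*((cnt f j : ℝ)/N - 1/k) := by
          rw [← hNR]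
          field_simp
          ring
        rw [hQ]
        show |(cnt f i : ℝ) * (cnt f j) * (1/((n:ℝ)+1)^2) - 1/(k:ℝ)^2| < δ
        rw [hsplit]
        calc |((cnt f i : ℝ)/N - 1/k)*((cnt f j : ℝ)/N) + (1/k)*((cnt f j : ℝ)/N - 1/k)|
            ≤ |((cnt f i : ℝ)/N - 1/k)*((cnt f j : ℝ)/N)|
              + |(1/k)*((cnt f j : ℝ)/N - 1/k)| := abs_add_le _ _
          _ ≤ |(cnt f i : ℝ)/N - 1/k| * 1 + 1 * |(cnt f j : ℝ)/N - 1/k| := by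
              rw [abs_mul, abs_mul]
              gcongr
              · rw [abs_of_nonneg hcj0]; exact hcj1
              · rw [abs_of_nonneg (by positivity : (0:ℝ) ≤ 1/(k:ℝ))]; exact hk1
          _ < δ := by
              have h1 := hgood i
              have h2 := hgood j
              rw [mul_one, one_mul]
              linarith
      have hlt := hcont hdist
      rw [Real.dist_eq] at hlt
      have : 0 ≤ c * Sq f := mul_nonneg hc0 (hSq0 f)
      linarith
    · push_neg at hgood
      obtain ⟨i, hi⟩ := hgood
      have hSqf : (δ/2)^2 ≤ Sq f := by
        refine le_trans ?_ (Finset.single_le_sum (fun j _ => sq_nonneg _) (mem_univ i))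
        rw [← sq_abs ((cnt f i : ℝ)/N - 1/k)]
        have : 0 ≤ δ/2 := by positivity
        exact pow_le_pow_left₀ this hi 2
      have h2F : |F (quotGraph f G) - F a| ≤ 2*‖F‖ := by
        simpa [Real.dist_eq] using F.dist_le_two_norm (quotGraph f G) a
      have hcs : 2*‖F‖ ≤ c * Sq f := by
        have heq : c * (δ/2)^2 = 2*‖F‖ := by
          rw [hc]; field_simp; ring
        calc 2*‖F‖ = c * (δ/2)^2 := heq.symm
          _ ≤ c * Sq f := mul_le_mul_of_nonneg_left hSqf hc0
      have : 0 ≤ ε/2 := le_of_lt (half_pos hε)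
      linarith
  -- assemble
  have hcard : ((Finset.univ : Finset (Fin N → Fin k)).card : ℝ) = K := by
    rw [Finset.card_univ, Fintype.card_fun, Fintype.card_fin, Fintype.card_fin, hK]
    push_cast; ring
  rw [Real.dist_eq]
  have hdiff : ((k:ℝ)^(n+1))⁻¹ * (∑ f : Fin N → Fin k, F (quotGraph f G)) - F a
      = K⁻¹ * ∑ f : Fin N → Fin k, (F (quotGraph f G) - F a) := by
    rw [Finset.sum_sub_distrib, Finset.sum_const, nsmul_eq_mul, hcard]
    have hKK : ((k:ℝ)^(n+1))⁻¹ = K⁻¹ := rfl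
    rw [hKK, mul_sub, ← mul_assoc, inv_mul_cancel₀ (ne_of_gt hKpos), one_mul]
  rw [hdiff, abs_mul, abs_inv, abs_of_pos hKpos]
  have hNnat : 0 < N := Nat.succ_pos n
  have hmom : ∑ f : Fin N → Fin k, Sq f ≤ K / N := by
    rw [hK]
    exact moment hNnat hk
  have hcN : c / (N:ℝ) < ε/2 := by
    have hnM : (2*c/ε : ℝ) < (N:ℝ) := by
      have h1 : (M:ℝ) ≤ (n:ℝ) := by exact_mod_cast hn
      rw [hNR]
      linarith
    rw [div_lt_iff₀ hNpos]
    have heq : (ε/2) * (2*c/ε) = c := by field_simp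
    calc c = (ε/2) * (2*c/ε) := heq.symm
      _ < (ε/2) * (N:ℝ) := by
          exact mul_lt_mul_of_pos_left hnM (half_pos hε)
  calc K⁻¹ * |∑ f : Fin N → Fin k, (F (quotGraph f G) - F a)|
      ≤ K⁻¹ * ∑ f : Fin N → Fin k, |F (quotGraph f G) - F a| := by
        refine mul_le_mul_of_nonneg_left ?_ (inv_nonneg.mpr (le_of_lt hKpos))
        exact Finset.abs_sum_le_sum_abs _ _
    _ ≤ K⁻¹ * ∑ f : Fin N → Fin k, (ε/2 + c * Sq f) := by
        refine mul_le_mul_of_nonneg_left ?_ (inv_nonneg.mpr (le_of_lt hKpos))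
        exact Finset.sum_le_sum fun f _ => hbound f
    _ = K⁻¹ * (K * (ε/2) + c * ∑ f : Fin N → Fin k, Sq f) := by
        rw [Finset.sum_add_distrib, Finset.sum_const, nsmul_eq_mul, hcard, Finset.mul_sum]
    _ ≤ K⁻¹ * (K * (ε/2) + c * (K / N)) := by
        refine mul_le_mul_of_nonneg_left ?_ (inv_nonneg.mpr (le_of_lt hKpos))
        have := mul_le_mul_of_nonneg_left hmom hc0
        linarith
    _ = ε/2 + c / N := by
        field_simp
    _ < ε := by linarith


lemma main (k : ℕ) (hk : 1 ≤ k) (F : (Fin k → Fin k → ℝ) →ᵇ ℝ) :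
    Tendsto (fun n : ℕ =>
        ∫ x, F x ∂(quotientLaw (fun _ _ : Fin (n + 1) => 1 / ((n : ℝ) + 1) ^ 2) k))
      atTop (𝓝 (F (fun _ _ : Fin k => 1 / (k : ℝ) ^ 2))) :=
  (key_tendsto k hk F).congr fun n =>
    (integral_quotientLaw (fun _ _ : Fin (n + 1) => 1 / ((n : ℝ) + 1) ^ 2) F).symm

end Stmt6Aux

/-- the random quotients of the normalized complete graphs converge weakly to
the point mass at `k^{-2}𝟙_{k×k}`; in particular, the normalized complete graphs
quotient-converge. -/
theorem stmt6 (k : ℕ) (hk : 1 ≤ k) :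
    (∀ f : (Fin k → Fin k → ℝ) →ᵇ ℝ,
      Tendsto
        (fun n : ℕ =>
          ∫ x, f x ∂(quotientLaw (fun _ _ : Fin (n + 1) => 1 / ((n : ℝ) + 1) ^ 2) k))
        atTop
        (𝓝 (∫ x, f x ∂(Measure.dirac (fun _ _ : Fin k => 1 / (k : ℝ) ^ 2))))) ∧
    QuotientConverges (fun n => fun _ _ : Fin (n + 1) => 1 / ((n : ℝ) + 1) ^ 2) := by
  constructor
  · intro F
    rw [MeasureTheory.integral_dirac' _ _ F.continuous.stronglyMeasurable]
    exact Stmt6Aux.main k hk F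
  · intro k' hk'
    refine ⟨Measure.dirac (fun _ _ : Fin k' => 1 / (k' : ℝ) ^ 2), inferInstance, fun F => ?_⟩
    rw [MeasureTheory.integral_dirac' _ _ F.continuous.stronglyMeasurable]
    exact Stmt6Aux.main k' hk' F
end
end

section
/- Let G_n = n^{−1} e_1 𝟙_n^⊤ ∈ Δ^{n×n} be the normalized directed star on n vertices with all edges pointing away from vertex 1 (so (G_n)_{1,j} = 1/n for all j and all other entries 0). For every fixed k ∈ ℕ, the laws of the random quotients ρ(F_{k,n})G_n converge weakly, as n → ∞, to the law of the random matrix k^{−1} e_I 𝟙_k^⊤, where I is uniformly distributed on [k] and e_i denotes the i-th standard basis vector. In particular, the sequence (G_n) quotient-converges. -/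
open MeasureTheory Filter Topology BoundedContinuousFunction
open scoped ENNReal NNReal

noncomputable section

namespace Stmt7Aux
open Finset

/-- count of v with g v = j, as a real -/
def cnt {m k : ℕ} (j : Fin k) (g : Fin m → Fin k) : ℝ := ∑ v, if g v = j then 1 else 0

lemma sum_maps_prod {m k : ℕ} (h : Fin m → Fin k → ℝ) :
    ∑ g : Fin m → Fin k, ∏ i, h i (g i) = ∏ i, ∑ a, h i a :=
  (Fintype.prod_sum h).symm

lemma sum_single {m k : ℕ} (u : Fin m) (φ : Fin k → ℝ) :
    ∑ g : Fin m → Fin k, φ (g u) = (k:ℝ)^(m-1) * ∑ a, φ a := by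
  have h1 : ∀ g : Fin m → Fin k, φ (g u) = ∏ i, (if i = u then φ (g i) else 1) := by
    intro g
    rw [Finset.prod_ite_eq' univ u (fun i => φ (g i))]
    simp
  calc ∑ g : Fin m → Fin k, φ (g u)
      = ∑ g : Fin m → Fin k, ∏ i, (if i = u then φ (g i) else 1) := by
        exact Finset.sum_congr rfl fun g _ => h1 g
    _ = ∏ i, ∑ a, (if i = u then φ a else (1:ℝ)) := sum_maps_prod (fun i a => if i = u then φ a else 1)
    _ = ∏ i, (if i = u then ∑ a, φ a else (k:ℝ)) := by
        refine Finset.prod_congr rfl fun i _ => ?_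
        split_ifs <;> simp
    _ = (∑ a, φ a) * (k:ℝ)^(m-1) := by
        rw [← Finset.mul_prod_erase univ _ (mem_univ u)]
        simp only [if_pos rfl]
        congr 1
        rw [Finset.prod_congr rfl (fun i hi => if_neg (Finset.mem_erase.mp hi).1),
          Finset.prod_const, Finset.card_erase_of_mem (mem_univ u), card_univ,
          Fintype.card_fin]
    _ = _ := mul_comm _ _

lemma sum_pair {m k : ℕ} {u v : Fin m} (huv : u ≠ v) (φ ψ : Fin k → ℝ) :
    ∑ g : Fin m → Fin k, φ (g u) * ψ (g v) = (k:ℝ)^(m-2) * ((∑ a, φ a) * ∑ a, ψ a) := by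
  have hvm : v ∈ univ.erase u := Finset.mem_erase.mpr ⟨huv.symm, mem_univ v⟩
  have h1 : ∀ g : Fin m → Fin k,
      φ (g u) * ψ (g v) = ∏ i, (if i = u then φ (g i) else if i = v then ψ (g i) else 1) := by
    intro g
    rw [← Finset.mul_prod_erase univ _ (mem_univ u), if_pos rfl]
    rw [← Finset.mul_prod_erase _ _ hvm, if_neg huv.symm, if_pos rfl]
    rw [Finset.prod_congr rfl (fun i hi => ?_), Finset.prod_const_one, mul_one]
    have h2 := Finset.mem_erase.mp hi
    have h3 := Finset.mem_erase.mp h2.2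
    rw [if_neg h3.1, if_neg h2.1]
  calc ∑ g : Fin m → Fin k, φ (g u) * ψ (g v)
      = ∑ g : Fin m → Fin k, ∏ i, (if i = u then φ (g i) else if i = v then ψ (g i) else 1) :=
        Finset.sum_congr rfl fun g _ => h1 g
    _ = ∏ i, ∑ a, (if i = u then φ a else if i = v then ψ a else (1:ℝ)) := sum_maps_prod (fun i a => if i = u then φ a else if i = v then ψ a else 1)
    _ = ∏ i, (if i = u then ∑ a, φ a else if i = v then ∑ a, ψ a else (k:ℝ)) := by
        refine Finset.prod_congr rfl fun i _ => ?_
        split_ifs <;> simp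
    _ = (∑ a, φ a) * ((∑ a, ψ a) * (k:ℝ)^(m-2)) := by
        rw [← Finset.mul_prod_erase univ _ (mem_univ u), if_pos rfl]
        rw [← Finset.mul_prod_erase _ _ hvm, if_neg huv.symm, if_pos rfl]
        congr 2
        rw [Finset.prod_congr rfl (fun i hi => ?_), Finset.prod_const]
        · rw [Finset.card_erase_of_mem hvm, Finset.card_erase_of_mem (mem_univ u), card_univ,
            Fintype.card_fin, Nat.sub_sub]
        · have h2 := Finset.mem_erase.mp hi
          have h3 := Finset.mem_erase.mp h2.2
          rw [if_neg h3.1, if_neg h2.1]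
    _ = _ := by ring

lemma chi_sum {k : ℕ} (j : Fin k) : ∑ a : Fin k, (if a = j then (1:ℝ) else 0) = 1 := by
  simp

lemma sum_cnt {n k : ℕ} (hk : 1 ≤ k) (j : Fin k) :
    ∑ g : Fin (n+1) → Fin k, cnt j g = ((n:ℝ)+1) * (k:ℝ)^n := by
  unfold cnt
  rw [Finset.sum_comm]
  have : ∀ v : Fin (n+1), (∑ g : Fin (n+1) → Fin k, if g v = j then (1:ℝ) else 0) = (k:ℝ)^n := by
    intro v
    rw [sum_single v (fun a => if a = j then (1:ℝ) else 0), chi_sum]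
    simp
  rw [Finset.sum_congr rfl fun v _ => this v, Finset.sum_const, card_univ, Fintype.card_fin,
    nsmul_eq_mul]
  push_cast
  ring

lemma sum_cnt_sq {n k : ℕ} (hk : 1 ≤ k) (j : Fin k) :
    ∑ g : Fin (n+1) → Fin k, (cnt j g)^2
      ≤ ((n:ℝ)+1) * ((k:ℝ)^n + (n:ℝ) * ((k:ℝ)^n / (k:ℝ))) := by
  have hK : (1:ℝ) ≤ (k:ℝ) := by exact_mod_cast hk
  have hK0 : (0:ℝ) < (k:ℝ) := lt_of_lt_of_le one_pos hK
  have step : ∀ g : Fin (n+1) → Fin k, (cnt j g)^2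
      = ∑ u : Fin (n+1), ∑ v : Fin (n+1),
          (if g u = j then (1:ℝ) else 0) * (if g v = j then (1:ℝ) else 0) := by
    intro g
    rw [cnt, sq, Finset.sum_mul_sum]
  calc ∑ g : Fin (n+1) → Fin k, (cnt j g)^2
      = ∑ u : Fin (n+1), ∑ v : Fin (n+1), ∑ g : Fin (n+1) → Fin k,
          (if g u = j then (1:ℝ) else 0) * (if g v = j then (1:ℝ) else 0) := by
        rw [Finset.sum_congr rfl fun g _ => step g, Finset.sum_comm]
        refine Finset.sum_congr rfl fun u _ => Finset.sum_comm
    _ ≤ ∑ u : Fin (n+1), ((k:ℝ)^n + (n:ℝ) * ((k:ℝ)^n / (k:ℝ))) := by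
        refine Finset.sum_le_sum fun u _ => ?_
        rw [← Finset.sum_erase_add _ _ (mem_univ u)]
        have hdiag : (∑ g : Fin (n+1) → Fin k,
            (if g u = j then (1:ℝ) else 0) * (if g u = j then (1:ℝ) else 0)) = (k:ℝ)^n := by
          have : ∀ g : Fin (n+1) → Fin k,
              (if g u = j then (1:ℝ) else 0) * (if g u = j then (1:ℝ) else 0)
                = (if g u = j then (1:ℝ) else 0) := by
            intro g; split_ifs <;> ring
          rw [Finset.sum_congr rfl fun g _ => this g,
            sum_single u (fun a => if a = j then (1:ℝ) else 0), chi_sum]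
          simp
        have hoff : ∀ v ∈ univ.erase u, (∑ g : Fin (n+1) → Fin k,
            (if g u = j then (1:ℝ) else 0) * (if g v = j then (1:ℝ) else 0))
              ≤ (k:ℝ)^n / (k:ℝ) := by
          intro v hv
          have hvu : u ≠ v := fun h => (Finset.mem_erase.mp hv).1 h.symm
          rw [sum_pair hvu (fun a => if a = j then (1:ℝ) else 0)
            (fun a => if a = j then (1:ℝ) else 0), chi_sum, mul_one, mul_one]
          have hn1 : 1 ≤ n := by
            by_contra h
            push_neg at h
            interval_cases n
            exact hvu (Fin.ext (by omega))
          have : (k:ℝ)^(n+1-2) = (k:ℝ)^n / (k:ℝ) := by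
            have h2 : n + 1 - 2 = n - 1 := by omega
            rw [h2, pow_sub₀ (k:ℝ) (ne_of_gt hK0) hn1, pow_one, div_eq_mul_inv]
          rw [this]
        calc (∑ v ∈ univ.erase u, ∑ g : Fin (n+1) → Fin k,
              (if g u = j then (1:ℝ) else 0) * (if g v = j then (1:ℝ) else 0))
              + ∑ g : Fin (n+1) → Fin k,
              (if g u = j then (1:ℝ) else 0) * (if g u = j then (1:ℝ) else 0)
            ≤ (∑ v ∈ univ.erase u, (k:ℝ)^n / (k:ℝ)) + (k:ℝ)^n := by
              rw [hdiag]
              exact add_le_add_left (Finset.sum_le_sum hoff) _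
          _ = ((k:ℝ)^n + (n:ℝ) * ((k:ℝ)^n / (k:ℝ))) := by
              rw [Finset.sum_const, Finset.card_erase_of_mem (mem_univ u), card_univ,
                Fintype.card_fin, nsmul_eq_mul]
              push_cast
              ring
    _ = _ := by
        rw [Finset.sum_const, card_univ, Fintype.card_fin, nsmul_eq_mul]
        push_cast
        ring

lemma variance_bound {n k : ℕ} (hk : 1 ≤ k) (j : Fin k) :
    ∑ g : Fin (n+1) → Fin k, (cnt j g - ((n:ℝ)+1)/(k:ℝ))^2 ≤ ((n:ℝ)+1) * (k:ℝ)^(n+1) := by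
  have hK : (1:ℝ) ≤ (k:ℝ) := by exact_mod_cast hk
  have hK0 : (0:ℝ) < (k:ℝ) := lt_of_lt_of_le one_pos hK
  have hKn : (0:ℝ) < (k:ℝ)^n := pow_pos hK0 n
  set M : ℝ := ((n:ℝ)+1)/(k:ℝ) with hM
  have expand : ∑ g : Fin (n+1) → Fin k, (cnt j g - M)^2
      = (∑ g : Fin (n+1) → Fin k, (cnt j g)^2)
        - 2*M*(∑ g : Fin (n+1) → Fin k, cnt j g) + (k:ℝ)^(n+1) * M^2 := by
    have : ∀ g : Fin (n+1) → Fin k, (cnt j g - M)^2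
        = (cnt j g)^2 - 2*M*(cnt j g) + M^2 := by intro g; ring
    rw [Finset.sum_congr rfl fun g _ => this g, Finset.sum_add_distrib,
      Finset.sum_sub_distrib, ← Finset.mul_sum, Finset.sum_const, card_univ]
    simp only [Fintype.card_fun, Fintype.card_fin, nsmul_eq_mul, Nat.cast_pow]
    try ring
  rw [expand, sum_cnt hk j]
  have h2 := sum_cnt_sq (n := n) hk j
  have hc : (k:ℝ) * ((k:ℝ)^n / (k:ℝ)) = (k:ℝ)^n := mul_div_cancel₀ _ (ne_of_gt hK0)
  have hp : (k:ℝ)^(n+1) = (k:ℝ)^n * (k:ℝ) := pow_succ _ _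
  have goal' : ((n:ℝ)+1) * ((k:ℝ)^n + (n:ℝ)*((k:ℝ)^n/(k:ℝ)))
      - 2*M*(((n:ℝ)+1)*(k:ℝ)^n) + (k:ℝ)^(n+1)*M^2 ≤ ((n:ℝ)+1)*(k:ℝ)^(n+1) := by
    rw [hM, hp]
    have hKne : (k:ℝ) ≠ 0 := ne_of_gt hK0
    field_simp
    have hn0 : (0:ℝ) ≤ (n:ℝ) := n.cast_nonneg
    nlinarith [mul_pos hKn hK0, mul_nonneg (mul_nonneg (le_of_lt hKn) (le_of_lt hK0)) hn0,
      sq_nonneg ((k:ℝ)-1), mul_pos (mul_pos hKn hK0) (mul_pos hK0 hK0),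
      mul_nonneg (mul_nonneg (mul_nonneg (le_of_lt hKn) (le_of_lt hK0)) hn0)
        (sub_nonneg.mpr (one_le_pow₀ hK (n := 2))),
      mul_nonneg (mul_nonneg (le_of_lt hKn) (le_of_lt hK0))
        (sub_nonneg.mpr (one_le_pow₀ hK (n := 2)))]
  linarith [h2, goal']

lemma quotGraph_star {n k : ℕ} (g : Fin (n+1) → Fin k) (i j : Fin k) :
    quotGraph g (fun i _ : Fin (n+1) => if i = 0 then 1/((n:ℝ)+1) else 0) i j
      = (if g 0 = i then (1:ℝ) else 0) * (cnt j g * ((n:ℝ)+1)⁻¹) := by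
  unfold quotGraph cnt
  have h1 : ∀ u v : Fin (n+1),
      (if g u = i ∧ g v = j then (if u = 0 then 1/((n:ℝ)+1) else 0) else 0)
        = (if u = 0 then (1:ℝ) else 0) * (if g u = i then (1:ℝ) else 0)
          * ((if g v = j then (1:ℝ) else 0) * ((n:ℝ)+1)⁻¹) := by
    intro u v
    by_cases h1 : g u = i <;> by_cases h2 : g v = j <;> by_cases h3 : u = 0 <;>
      simp [h1, h2, h3, one_div]
  calc (∑ u, ∑ v, if g u = i ∧ g v = j then
          (if u = 0 then 1/((n:ℝ)+1) else 0) else 0)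
      = ∑ u, ∑ v : Fin (n+1), (if u = 0 then (1:ℝ) else 0) * (if g u = i then (1:ℝ) else 0)
          * ((if g v = j then (1:ℝ) else 0) * ((n:ℝ)+1)⁻¹) := by
        exact Finset.sum_congr rfl fun u _ => Finset.sum_congr rfl fun v _ => h1 u v
    _ = (∑ u, (if u = 0 then (1:ℝ) else 0) * (if g u = i then (1:ℝ) else 0))
          * ((∑ v, if g v = j then (1:ℝ) else 0) * ((n:ℝ)+1)⁻¹) := by
        simp only [← Finset.mul_sum, ← Finset.sum_mul]
    _ = _ := by
        congr 1
        have h2 : ∀ u : Fin (n+1), (if u = 0 then (1:ℝ) else 0) * (if g u = i then (1:ℝ) else 0)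
            = if u = 0 then (if g u = i then (1:ℝ) else 0) else 0 := by
          intro u; split_ifs <;> ring
        rw [Finset.sum_congr rfl fun u _ => h2 u,
          Finset.sum_ite_eq' univ (0 : Fin (n+1)) (fun u => if g u = i then (1:ℝ) else 0)]
        simp

lemma integral_quotientLaw {n k : ℕ} (G : Fin n → Fin n → ℝ)
    (f : (Fin k → Fin k → ℝ) →ᵇ ℝ) :
    ∫ x, f x ∂(quotientLaw G k)
      = ((k:ℝ)^n)⁻¹ * ∑ g : Fin n → Fin k, f (quotGraph g G) := by
  rw [quotientLaw, integral_smul_measure,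
    integral_finset_sum_measure (fun g _ => f.integrable _)]
  simp only [integral_dirac' _ _ f.continuous.stronglyMeasurable, smul_eq_mul]
  congr 1
  simp [ENNReal.toReal_inv, ENNReal.toReal_pow]

lemma integral_limitLaw {k : ℕ} (M : Fin k → (Fin k → Fin k → ℝ))
    (f : (Fin k → Fin k → ℝ) →ᵇ ℝ) :
    ∫ x, f x ∂((k:ℝ≥0∞)⁻¹ • ∑ a : Fin k, Measure.dirac (M a))
      = ((k:ℝ))⁻¹ * ∑ a : Fin k, f (M a) := by
  rw [integral_smul_measure, integral_finset_sum_measure (fun a _ => f.integrable _)]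
  simp only [integral_dirac' _ _ f.continuous.stronglyMeasurable, smul_eq_mul]
  congr 1
  simp [ENNReal.toReal_inv]

lemma limitLaw_prob {k : ℕ} (hk : 1 ≤ k) (M : Fin k → (Fin k → Fin k → ℝ)) :
    IsProbabilityMeasure ((k:ℝ≥0∞)⁻¹ • ∑ a : Fin k, Measure.dirac (M a)) := by
  constructor
  rw [Measure.smul_apply, Measure.finset_sum_apply]
  simp only [measure_univ]
  rw [Finset.sum_const, card_univ, Fintype.card_fin, smul_eq_mul, nsmul_eq_mul, mul_one]
  exact ENNReal.inv_mul_cancel (by exact_mod_cast (Nat.cast_ne_zero (R := ℝ≥0∞)).mpr (by omega))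
    (ENNReal.natCast_ne_top k)

lemma star_tendsto {k : ℕ} (hk : 1 ≤ k) (f : (Fin k → Fin k → ℝ) →ᵇ ℝ) :
    Tendsto (fun n : ℕ => ∫ x, f x ∂(quotientLaw
        (fun i _ : Fin (n + 1) => if i = 0 then 1 / ((n : ℝ) + 1) else 0) k)) atTop
      (𝓝 (∫ x, f x ∂((k : ℝ≥0∞)⁻¹ •
        ∑ a : Fin k, Measure.dirac (fun i _ : Fin k => if i = a then 1 / (k : ℝ) else 0)))) := by
  have hK : (1:ℝ) ≤ (k:ℝ) := by exact_mod_cast hk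
  have hK0 : (0:ℝ) < (k:ℝ) := lt_of_lt_of_le one_pos hK
  set Ma : Fin k → (Fin k → Fin k → ℝ) :=
    fun a => fun i _ : Fin k => if i = a then 1 / (k : ℝ) else 0 with hMa
  rw [integral_limitLaw Ma f]
  have hInt : ∀ n : ℕ, ∫ x, f x ∂(quotientLaw
      (fun i _ : Fin (n + 1) => if i = 0 then 1 / ((n : ℝ) + 1) else 0) k)
        = ((k:ℝ)^(n+1))⁻¹ * ∑ g : Fin (n+1) → Fin k,
          f (quotGraph g (fun i _ : Fin (n + 1) => if i = 0 then 1 / ((n : ℝ) + 1) else 0)) :=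
    fun n => integral_quotientLaw _ f
  have hT : ∀ n : ℕ, (k:ℝ)⁻¹ * ∑ a, f (Ma a)
      = ((k:ℝ)^(n+1))⁻¹ * ∑ g : Fin (n+1) → Fin k, f (Ma (g 0)) := by
    intro n
    rw [sum_single (0 : Fin (n+1)) (fun a => f (Ma a))]
    simp only [Nat.add_sub_cancel]
    rw [pow_succ, mul_inv]
    have : ((k:ℝ)^n)⁻¹ * (k:ℝ)^n = 1 := inv_mul_cancel₀ (by positivity)
    calc (k:ℝ)⁻¹ * ∑ a, f (Ma a)
        = (((k:ℝ)^n)⁻¹ * (k:ℝ)^n) * ((k:ℝ)⁻¹ * ∑ a, f (Ma a)) := by rw [this, one_mul]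
      _ = ((k:ℝ)^n)⁻¹ * (k:ℝ)⁻¹ * ((k:ℝ)^n * ∑ a, f (Ma a)) := by ring
  -- entry bound
  have entry : ∀ (n : ℕ) (g : Fin (n+1) → Fin k) (i j : Fin k),
      |quotGraph g (fun i _ : Fin (n + 1) => if i = 0 then 1 / ((n : ℝ) + 1) else 0) i j
        - Ma (g 0) i j| ≤ |cnt j g * ((n:ℝ)+1)⁻¹ - (k:ℝ)⁻¹| := by
    intro n g i j
    rw [quotGraph_star]
    by_cases h : g 0 = i
    · subst h
      simp [hMa]
    · have h' : ¬ (i = g 0) := fun hh => h hh.symm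
      simp only [hMa, if_neg h, if_neg h', zero_mul, sub_zero, abs_zero]
      exact abs_nonneg _
  rw [Metric.tendsto_atTop]
  intro ε hε
  -- continuity data
  have hcont : ∀ a : Fin k, ∃ δ > 0, ∀ x, dist x (Ma a) < δ → |f x - f (Ma a)| < ε/2 := by
    intro a
    obtain ⟨δ, hδ0, hδ⟩ := Metric.continuousAt_iff.mp (f.continuous.continuousAt (x := Ma a))
      (ε/2) (by positivity)
    exact ⟨δ, hδ0, fun x hx => by rw [← Real.dist_eq]; exact hδ hx⟩
  choose δ hδpos hδ using hcont
  have hne : (univ : Finset (Fin k)).Nonempty := ⟨⟨0, by omega⟩, mem_univ _⟩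
  set δ0 : ℝ := univ.inf' hne δ with hδ0def
  have hδ0pos : 0 < δ0 := (Finset.lt_inf'_iff hne).mpr fun a _ => hδpos a
  set coef : ℝ := 8 * ‖f‖ / δ0^2 with hcoef
  have hcoef0 : 0 ≤ coef := by positivity
  -- pointwise key bound
  have key : ∀ (n : ℕ) (g : Fin (n+1) → Fin k),
      |f (quotGraph g (fun i _ : Fin (n + 1) => if i = 0 then 1 / ((n : ℝ) + 1) else 0))
        - f (Ma (g 0))|
        ≤ ε/2 + coef * ∑ j, (cnt j g * ((n:ℝ)+1)⁻¹ - (k:ℝ)⁻¹)^2 := by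
    intro n g
    set Q := quotGraph g (fun i _ : Fin (n + 1) => if i = 0 then 1 / ((n : ℝ) + 1) else 0)
    by_cases hgood : ∀ j, |cnt j g * ((n:ℝ)+1)⁻¹ - (k:ℝ)⁻¹| ≤ δ0/2
    · have hdist : dist Q (Ma (g 0)) ≤ δ0 / 2 := by
        rw [dist_pi_le_iff (by positivity)]
        intro i
        rw [dist_pi_le_iff (by positivity)]
        intro j
        rw [Real.dist_eq]
        exact (entry n g i j).trans (hgood j)
      have hlt : dist Q (Ma (g 0)) < δ (g 0) :=
        lt_of_le_of_lt hdist (lt_of_lt_of_le (half_lt_self hδ0pos)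
          (Finset.inf'_le _ (mem_univ (g 0))))
      have := hδ (g 0) Q hlt
      have hsum0 : 0 ≤ ∑ j, (cnt j g * ((n:ℝ)+1)⁻¹ - (k:ℝ)⁻¹)^2 :=
        Finset.sum_nonneg fun j _ => sq_nonneg _
      nlinarith [mul_nonneg hcoef0 hsum0]
    · push_neg at hgood
      obtain ⟨j, hj⟩ := hgood
      have h1 : (δ0/2)^2 ≤ ∑ j, (cnt j g * ((n:ℝ)+1)⁻¹ - (k:ℝ)⁻¹)^2 := by
        have h2 : (δ0/2)^2 < |cnt j g * ((n:ℝ)+1)⁻¹ - (k:ℝ)⁻¹|^2 :=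
          pow_lt_pow_left₀ hj (by positivity) (by norm_num)
        rw [sq_abs] at h2
        exact le_trans (le_of_lt h2)
          (Finset.single_le_sum (f := fun j => (cnt j g * ((n:ℝ)+1)⁻¹ - (k:ℝ)⁻¹)^2)
            (fun j _ => sq_nonneg _) (mem_univ j))
      have h2C : |f Q - f (Ma (g 0))| ≤ 2 * ‖f‖ := by
        rw [← Real.dist_eq]; exact f.dist_le_two_norm _ _
      have h3 : coef * (δ0/2)^2 = 2 * ‖f‖ := by
        rw [hcoef]; field_simp; ring
      have h4 : coef * (δ0/2)^2 ≤ coef * ∑ j, (cnt j g * ((n:ℝ)+1)⁻¹ - (k:ℝ)⁻¹)^2 :=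
        mul_le_mul_of_nonneg_left h1 hcoef0
      linarith
  -- second-moment average bound
  have havg : ∀ n : ℕ, ((k:ℝ)^(n+1))⁻¹ * ∑ g : Fin (n+1) → Fin k,
      ∑ j, (cnt j g * ((n:ℝ)+1)⁻¹ - (k:ℝ)⁻¹)^2 ≤ (k:ℝ)/((n:ℝ)+1) := by
    intro n
    have hm0 : (0:ℝ) < (n:ℝ)+1 := by positivity
    have hsq : ∀ (g : Fin (n+1) → Fin k) (j : Fin k),
        (cnt j g * ((n:ℝ)+1)⁻¹ - (k:ℝ)⁻¹)^2
          = (cnt j g - ((n:ℝ)+1)/(k:ℝ))^2 * (((n:ℝ)+1)^2)⁻¹ := by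
      intro g j
      have e0 : ((n:ℝ)+1)/(k:ℝ) * ((n:ℝ)+1)⁻¹ = (k:ℝ)⁻¹ := by
        field_simp
      have e1 : cnt j g * ((n:ℝ)+1)⁻¹ - (k:ℝ)⁻¹
          = (cnt j g - ((n:ℝ)+1)/(k:ℝ)) * ((n:ℝ)+1)⁻¹ := by
        rw [sub_mul, e0]
      rw [e1, mul_pow, inv_pow]
    have inner : ∑ g : Fin (n+1) → Fin k, ∑ j, (cnt j g * ((n:ℝ)+1)⁻¹ - (k:ℝ)⁻¹)^2
        ≤ (k:ℝ) * ((((n:ℝ)+1) * (k:ℝ)^(n+1)) * (((n:ℝ)+1)^2)⁻¹) := by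
      rw [Finset.sum_comm]
      calc ∑ j : Fin k, ∑ g : Fin (n+1) → Fin k, (cnt j g * ((n:ℝ)+1)⁻¹ - (k:ℝ)⁻¹)^2
          = ∑ j : Fin k, (∑ g : Fin (n+1) → Fin k,
              (cnt j g - ((n:ℝ)+1)/(k:ℝ))^2) * (((n:ℝ)+1)^2)⁻¹ := by
            refine Finset.sum_congr rfl fun j _ => ?_
            rw [Finset.sum_mul]
            exact Finset.sum_congr rfl fun g _ => hsq g j
        _ ≤ ∑ j : Fin k, (((n:ℝ)+1) * (k:ℝ)^(n+1)) * (((n:ℝ)+1)^2)⁻¹ := by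
            refine Finset.sum_le_sum fun j _ => ?_
            exact mul_le_mul_of_nonneg_right (variance_bound hk j) (by positivity)
        _ = (k:ℝ) * ((((n:ℝ)+1) * (k:ℝ)^(n+1)) * (((n:ℝ)+1)^2)⁻¹) := by
            rw [Finset.sum_const, card_univ, Fintype.card_fin, nsmul_eq_mul]
    calc ((k:ℝ)^(n+1))⁻¹ * ∑ g : Fin (n+1) → Fin k,
          ∑ j, (cnt j g * ((n:ℝ)+1)⁻¹ - (k:ℝ)⁻¹)^2
        ≤ ((k:ℝ)^(n+1))⁻¹ * ((k:ℝ) * ((((n:ℝ)+1) * (k:ℝ)^(n+1)) * (((n:ℝ)+1)^2)⁻¹)) :=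
          mul_le_mul_of_nonneg_left inner (by positivity)
      _ = (k:ℝ)/((n:ℝ)+1) := by
          field_simp
  obtain ⟨N, hN⟩ := exists_nat_gt (coef * (k:ℝ) / (ε/2))
  refine ⟨N, fun n hn => ?_⟩
  rw [hInt n, Real.dist_eq, hT n]
  have hm0 : (0:ℝ) < (n:ℝ)+1 := by positivity
  have hKn1 : (0:ℝ) < (k:ℝ)^(n+1) := by positivity
  set S := fun i _ : Fin (n + 1) => if i = 0 then 1 / ((n : ℝ) + 1) else 0 with hS
  have step1 : |((k:ℝ)^(n+1))⁻¹ * ∑ g : Fin (n+1) → Fin k, f (quotGraph g S)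
      - ((k:ℝ)^(n+1))⁻¹ * ∑ g : Fin (n+1) → Fin k, f (Ma (g 0))|
      ≤ ((k:ℝ)^(n+1))⁻¹ * ∑ g : Fin (n+1) → Fin k, |f (quotGraph g S) - f (Ma (g 0))| := by
    rw [← mul_sub, ← Finset.sum_sub_distrib, abs_mul, abs_of_nonneg (by positivity)]
    exact mul_le_mul_of_nonneg_left (Finset.abs_sum_le_sum_abs _ _) (by positivity)
  have step2 : ((k:ℝ)^(n+1))⁻¹ * ∑ g : Fin (n+1) → Fin k, |f (quotGraph g S) - f (Ma (g 0))|
      ≤ ε/2 + coef * ((k:ℝ)/((n:ℝ)+1)) := by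
    calc ((k:ℝ)^(n+1))⁻¹ * ∑ g : Fin (n+1) → Fin k, |f (quotGraph g S) - f (Ma (g 0))|
        ≤ ((k:ℝ)^(n+1))⁻¹ * ∑ g : Fin (n+1) → Fin k,
            (ε/2 + coef * ∑ j, (cnt j g * ((n:ℝ)+1)⁻¹ - (k:ℝ)⁻¹)^2) := by
          refine mul_le_mul_of_nonneg_left (Finset.sum_le_sum fun g _ => key n g)
            (by positivity)
      _ = ε/2 + coef * (((k:ℝ)^(n+1))⁻¹ * ∑ g : Fin (n+1) → Fin k,
            ∑ j, (cnt j g * ((n:ℝ)+1)⁻¹ - (k:ℝ)⁻¹)^2) := by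
          rw [Finset.sum_add_distrib, Finset.sum_const, card_univ, Fintype.card_fun,
            Fintype.card_fin, Fintype.card_fin, nsmul_eq_mul, ← Finset.mul_sum, mul_add]
          rw [Nat.cast_pow]
          rw [show ((k:ℝ)^(n+1))⁻¹ * ((k:ℝ)^(n+1) * (ε/2)) = ε/2 by
            rw [← mul_assoc, inv_mul_cancel₀ (ne_of_gt hKn1), one_mul]]
          ring
      _ ≤ ε/2 + coef * ((k:ℝ)/((n:ℝ)+1)) := by
          exact add_le_add_right (mul_le_mul_of_nonneg_left (havg n) hcoef0) _
  have step3 : coef * ((k:ℝ)/((n:ℝ)+1)) < ε/2 := by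
    have hNn : (N:ℝ) ≤ (n:ℝ) := by exact_mod_cast hn
    have h1 : coef * (k:ℝ) / (ε/2) < (n:ℝ)+1 := by linarith [hN]
    have h2 : coef * (k:ℝ) < (ε/2) * ((n:ℝ)+1) := by
      rw [div_lt_iff₀ (by positivity)] at h1
      linarith
    rw [mul_div_assoc'] at *
    rw [div_lt_iff₀ hm0]
    linarith
  linarith [step1, step2, step3, abs_nonneg (((k:ℝ)^(n+1))⁻¹ *
    ∑ g : Fin (n+1) → Fin k, f (quotGraph g S)
      - ((k:ℝ)^(n+1))⁻¹ * ∑ g : Fin (n+1) → Fin k, f (Ma (g 0)))]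

end Stmt7Aux

/-- the random quotients of the normalized directed stars (all edges pointing
away from the center) converge weakly to the law of `k⁻¹ e_I 𝟙ᵀ` with `I` uniform on `[k]`;
in particular, the normalized stars quotient-converge. -/
theorem stmt7 (k : ℕ) (hk : 1 ≤ k) :
    (∀ f : (Fin k → Fin k → ℝ) →ᵇ ℝ,
      Tendsto
        (fun n : ℕ =>
          ∫ x, f x ∂(quotientLaw
            (fun i _ : Fin (n + 1) => if i = 0 then 1 / ((n : ℝ) + 1) else 0) k))
        atTop
        (𝓝 (∫ x, f x ∂((k : ℝ≥0∞)⁻¹ •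
          ∑ a : Fin k, Measure.dirac (fun i _ : Fin k => if i = a then 1 / (k : ℝ) else 0))))) ∧
    QuotientConverges (fun n => fun i _ : Fin (n + 1) => if i = 0 then 1 / ((n : ℝ) + 1) else 0) := by
  refine ⟨fun f => Stmt7Aux.star_tendsto hk f, ?_⟩
  intro k' hk'
  exact ⟨_, Stmt7Aux.limitLaw_prob hk' (fun a => fun i _ : Fin k' => if i = a then 1 / (k':ℝ) else 0),
    fun f => Stmt7Aux.star_tendsto hk' f⟩
end
end

section
/- Let (G_{i,j})_{i,j∈ℕ} be a nonnegative array with Σ_{i,j∈ℕ} G_{i,j} = 1, suppose s_n = Σ_{i,j∈[n]} G_{i,j} > 0 for every n, and let G_n = s_n^{−1}(G_{i,j})_{i,j∈[n]} ∈ Δ^{n×n} be the normalized truncations. Then the sequence (G_n) quotient-converges, and for every multigraph H ∈ ℕ^{k×k} the series Σ_{f:[k]→ℕ} Π_{i,j∈[k]} G_{f(i),f(j)}^{H_{i,j}} converges to a finite value equal to lim_{n→∞} hom(H;G_n). -/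
open MeasureTheory Filter Topology BoundedContinuousFunction
open scoped ENNReal NNReal

noncomputable section

section Cover

variable (g : ℕ → ℕ → ℝ≥0∞)

lemma g_le_one (hg : ∑' p : ℕ × ℕ, g p.1 p.2 ≤ 1) (u v : ℕ) : g u v ≤ 1 :=
  le_trans (ENNReal.le_tsum (⟨u, v⟩ : ℕ × ℕ)) hg

lemma row_sum_le (hg : ∑' p : ℕ × ℕ, g p.1 p.2 ≤ 1) (x : ℕ) : ∑' u, g x u ≤ 1 := by
  calc ∑' u, g x u ≤ ∑' (x : ℕ) (u : ℕ), g x u := ENNReal.le_tsum x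
  _ = ∑' p : ℕ × ℕ, g p.1 p.2 := (ENNReal.tsum_prod' (f := fun p : ℕ × ℕ => g p.1 p.2)).symm
  _ ≤ 1 := hg

lemma col_sum_le (hg : ∑' p : ℕ × ℕ, g p.1 p.2 ≤ 1) (x : ℕ) : ∑' u, g u x ≤ 1 := by
  calc ∑' u, g u x ≤ ∑' (x : ℕ) (u : ℕ), g u x := ENNReal.le_tsum x
  _ = ∑' (u : ℕ) (x : ℕ), g u x := ENNReal.tsum_comm
  _ = ∑' p : ℕ × ℕ, g p.1 p.2 := (ENNReal.tsum_prod' (f := fun p : ℕ × ℕ => g p.1 p.2)).symm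
  _ ≤ 1 := hg

lemma rowcol_tsum (hg : ∑' p : ℕ × ℕ, g p.1 p.2 ≤ 1) :
    ∑' x : ℕ, ((∑' u, g x u) + ∑' u, g u x) ≤ 2 := by
  rw [ENNReal.tsum_add]
  have h1 : ∑' (x : ℕ) (u : ℕ), g x u ≤ 1 := by
    calc ∑' (x : ℕ) (u : ℕ), g x u
        = ∑' p : ℕ × ℕ, g p.1 p.2 := (ENNReal.tsum_prod' (f := fun p : ℕ × ℕ => g p.1 p.2)).symm
    _ ≤ 1 := hg
  have h2 : ∑' (x : ℕ) (u : ℕ), g u x ≤ 1 := by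
    calc ∑' (x : ℕ) (u : ℕ), g u x
        = ∑' (u : ℕ) (x : ℕ), g u x := ENNReal.tsum_comm
    _ = ∑' p : ℕ × ℕ, g p.1 p.2 := (ENNReal.tsum_prod' (f := fun p : ℕ × ℕ => g p.1 p.2)).symm
    _ ≤ 1 := hg
  calc _ ≤ (1 : ℝ≥0∞) + 1 := add_le_add h1 h2
  _ = 2 := by norm_num

lemma diag_tsum (hg : ∑' p : ℕ × ℕ, g p.1 p.2 ≤ 1) : ∑' x : ℕ, g x x ≤ 1 := by
  refine le_trans (ENNReal.tsum_comp_le_tsum_of_injective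
    (f := fun x : ℕ => ((x, x) : ℕ × ℕ)) (fun a b h => congrArg Prod.fst h)
    (fun p => g p.1 p.2)) hg

/-- tsum over a finite product of copies of ℕ of a product of single-coordinate functions. -/
lemma pi_tsum_prod : ∀ (n : ℕ) (ι : Type) [Fintype ι] [DecidableEq ι]
    (φ : ι → ℕ → ℝ≥0∞), Fintype.card ι = n →
    ∑' h : ι → ℕ, ∏ i, φ i (h i) = ∏ i, ∑' u, φ i u := by
  intro n
  induction n with
  | zero =>
      intro ι _ _ φ hn
      haveI : IsEmpty ι := Fintype.card_eq_zero_iff.mp hn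
      rw [Finset.univ_eq_empty, Finset.prod_empty]
      rw [tsum_eq_single (fun i => (isEmptyElim i : ℕ))
        (fun b hb => absurd (Subsingleton.elim b _) hb)]
      simp
  | succ n ih =>
      intro ι _ _ φ hn
      have hpos : 0 < Fintype.card ι := by omega
      obtain ⟨v⟩ := Fintype.card_pos_iff.mp hpos
      have hcard : Fintype.card {j : ι // j ≠ v} = n := by
        have := Fintype.card_subtype_compl (p := fun j : ι => j = v)
        simp only [Fintype.card_subtype_eq] at this
        simp only [ne_eq]
        omega
      set e := Equiv.funSplitAt v ℕ with he
      have hre : ∑' h : ι → ℕ, ∏ i, φ i (h i)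
          = ∑' p : ℕ × ({j : ι // j ≠ v} → ℕ), ∏ i, φ i (e.symm p i) :=
        (Equiv.tsum_eq e.symm (fun h => ∏ i, φ i (h i))).symm
      have hsplit : ∀ (x : ℕ) (w : {j : ι // j ≠ v} → ℕ),
          ∏ i, φ i (e.symm (x, w) i) = φ v x * ∏ j : {j : ι // j ≠ v}, φ j (w j) := by
        intro x w
        rw [← Finset.mul_prod_erase Finset.univ _ (Finset.mem_univ v)]
        congr 1
        · simp [he]
        · rw [Finset.prod_subtype (p := fun j => j ≠ v) (Finset.univ.erase v) (by simp) (fun i => φ i (e.symm (x, w) i))]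
          refine Finset.prod_congr rfl fun j _ => ?_
          simp [he, j.2]
      rw [hre, ENNReal.tsum_prod']
      simp only [hsplit]
      have : ∀ x : ℕ, ∑' w : {j : ι // j ≠ v} → ℕ, φ v x * ∏ j : {j : ι // j ≠ v}, φ j (w j)
          = φ v x * ∏ j : {j : ι // j ≠ v}, ∑' u, φ j u := by
        intro x
        rw [ENNReal.tsum_mul_left, ih _ _ hcard]
      simp only [this]
      rw [ENNReal.tsum_mul_right]
      rw [← Finset.mul_prod_erase Finset.univ _ (Finset.mem_univ v)]
      congr 1
      rw [Finset.prod_subtype (p := fun j => j ≠ v) (Finset.univ.erase v) (by simp) (fun i => ∑' u, φ i u)]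

end Cover

section Cover2

variable (g : ℕ → ℕ → ℝ≥0∞)

lemma prod_le_of_subset {α : Type*} [DecidableEq α] {F' F : Finset α} (hsub : F' ⊆ F)
    (f : α → ℝ≥0∞) (hf : ∀ a, f a ≤ 1) : ∏ a ∈ F, f a ≤ ∏ a ∈ F', f a := by
  rw [← Finset.prod_sdiff hsub]
  calc (∏ a ∈ F \ F', f a) * ∏ a ∈ F', f a ≤ 1 * ∏ a ∈ F', f a :=
        mul_le_mul' (Finset.prod_le_one (fun i _ => bot_le) (fun i _ => hf i)) le_rfl
  _ = ∏ a ∈ F', f a := one_mul _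

lemma tsum_pi_empty {ι : Type} [IsEmpty ι] : ∑' _f : ι → ℕ, (1 : ℝ≥0∞) = 1 := by
  rw [tsum_eq_single (default : ι → ℕ) (fun b hb => absurd (Subsingleton.elim b _) hb)]

lemma star_tsum {σ : Type} [Fintype σ] [DecidableEq σ] (hg : ∑' p : ℕ × ℕ, g p.1 p.2 ≤ 1)
    (v : σ) (F : Finset (σ × σ))
    (hstar : ∀ e ∈ F, e.1 = v ∨ e.2 = v)
    (hcov : ∀ j : σ, ∃ e ∈ F, e.1 = j ∨ e.2 = j) :
    ∑' h : σ → ℕ, ∏ e ∈ F, g (h e.1) (h e.2) ≤ 2 := by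
  classical
  have hg1 : ∀ u w, g u w ≤ 1 := g_le_one g hg
  by_cases hone : ∀ j : σ, j = v
  · -- σ is a single point
    obtain ⟨e₀, he₀F, -⟩ := hcov v
    haveI : Unique σ := ⟨⟨v⟩, fun a => hone a⟩
    have hb : ∀ h : σ → ℕ, ∏ e ∈ F, g (h e.1) (h e.2) ≤ g (h v) (h v) := by
      intro h
      calc ∏ e ∈ F, g (h e.1) (h e.2) ≤ ∏ e ∈ {e₀}, g (h e.1) (h e.2) :=
            prod_le_of_subset (Finset.singleton_subset_iff.mpr he₀F) _ (fun e => hg1 _ _)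
      _ = g (h e₀.1) (h e₀.2) := Finset.prod_singleton _ _
      _ = g (h v) (h v) := by rw [hone e₀.1, hone e₀.2]
    calc ∑' h : σ → ℕ, ∏ e ∈ F, g (h e.1) (h e.2) ≤ ∑' h : σ → ℕ, g (h v) (h v) :=
          ENNReal.tsum_le_tsum hb
    _ = ∑' x : ℕ, g x x := by
        refine (Equiv.tsum_eq (Equiv.funUnique σ ℕ).symm (fun h => g (h v) (h v))).symm.trans ?_
        rfl
    _ ≤ 1 := diag_tsum g hg
    _ ≤ 2 := one_le_two
  · push_neg at hone
    obtain ⟨j₀, hj₀⟩ := hone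
    -- choose, for each `j ≠ v`, an edge of `F` touching `j` (hence with endpoints `{j, v}`)
    have hech : ∀ j : σ, ∃ e : σ × σ, e ∈ F ∧ (e.1 = j ∨ e.2 = j) := by
      intro j; obtain ⟨e, he, h'⟩ := hcov j; exact ⟨e, he, h'⟩
    set ed : σ → σ × σ := fun j => (hech j).choose with heddef
    have hedF : ∀ j, ed j ∈ F := fun j => (hech j).choose_spec.1
    have hedt : ∀ j, (ed j).1 = j ∨ (ed j).2 = j := fun j => (hech j).choose_spec.2
    have hkey : ∀ j, j ≠ v → ((ed j).1 = v ∧ (ed j).2 = j) ∨ ((ed j).1 = j ∧ (ed j).2 = v) := by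
      intro j hj
      rcases hstar _ (hedF j) with h1 | h2
      · left; exact ⟨h1, (hedt j).resolve_left (by rw [h1]; exact Ne.symm hj)⟩
      · right; exact ⟨(hedt j).resolve_right (by rw [h2]; exact Ne.symm hj), h2⟩
    have hinj : Set.InjOn ed (Finset.univ.erase v : Finset σ) := by
      intro a ha b hb hab
      have ha' : a ≠ v := (Finset.mem_erase.mp ha).1
      have hb' : b ≠ v := (Finset.mem_erase.mp hb).1
      rcases hkey a ha' with ⟨h1, h2⟩ | ⟨h1, h2⟩ <;> rcases hkey b hb' with ⟨h3, h4⟩ | ⟨h3, h4⟩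
      · rw [← h2, ← h4, hab]
      · exfalso; apply hb'; rw [← h3, ← hab, h1]
      · exfalso; apply ha'; rw [← h1, hab, h3]
      · rw [← h1, ← h3, hab]
    have hFsub : Finset.image ed (Finset.univ.erase v) ⊆ F := by
      intro e he
      obtain ⟨j, -, rfl⟩ := Finset.mem_image.mp he
      exact hedF j
    -- bound the product by the product over the chosen edges
    have hb : ∀ h : σ → ℕ, ∏ e ∈ F, g (h e.1) (h e.2)
        ≤ ∏ j ∈ Finset.univ.erase v, g (h (ed j).1) (h (ed j).2) := by
      intro h
      calc ∏ e ∈ F, g (h e.1) (h e.2)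
          ≤ ∏ e ∈ Finset.image ed (Finset.univ.erase v), g (h e.1) (h e.2) :=
            prod_le_of_subset hFsub _ (fun e => hg1 _ _)
      _ = ∏ j ∈ Finset.univ.erase v, g (h (ed j).1) (h (ed j).2) :=
            Finset.prod_image hinj
    refine le_trans (ENNReal.tsum_le_tsum hb) ?_
    -- reindex by splitting off the coordinate `v`
    set e := Equiv.funSplitAt v ℕ with he
    have hre : ∑' h : σ → ℕ, ∏ j ∈ Finset.univ.erase v, g (h (ed j).1) (h (ed j).2)
        = ∑' p : ℕ × ({j : σ // j ≠ v} → ℕ),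
            ∏ j ∈ Finset.univ.erase v, g ((e.symm p) (ed j).1) ((e.symm p) (ed j).2) :=
      (Equiv.tsum_eq e.symm _).symm
    rw [hre]
    set φ : ℕ → {j : σ // j ≠ v} → ℕ → ℝ≥0∞ :=
      fun x j u => if (ed j.1).1 = v then g x u else g u x with hφ
    have heval : ∀ (x : ℕ) (w : {j : σ // j ≠ v} → ℕ),
        ∏ j ∈ Finset.univ.erase v, g ((e.symm (x, w)) (ed j).1) ((e.symm (x, w)) (ed j).2)
          = ∏ j : {j : σ // j ≠ v}, φ x j (w j) := by
      intro x w
      rw [Finset.prod_subtype (p := fun j => j ≠ v) (Finset.univ.erase v) (by simp)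
        (fun j => g ((e.symm (x, w)) (ed j).1) ((e.symm (x, w)) (ed j).2))]
      refine Finset.prod_congr rfl fun j _ => ?_
      rcases hkey j.1 j.2 with ⟨h1, h2⟩ | ⟨h1, h2⟩
      · rw [hφ]; simp only [h1, h2]; rw [if_pos trivial]
        congr 1
        · simp [he]
        · simp [he, j.2]
      · rw [hφ]; simp only [h1, h2]; rw [if_neg j.2]
        congr 1
        · simp [he, j.2]
        · simp [he]
    rw [ENNReal.tsum_prod']
    simp only [heval]
    have hPI : ∀ x : ℕ, ∑' w : {j : σ // j ≠ v} → ℕ, ∏ j : {j : σ // j ≠ v}, φ x j (w j)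
        = ∏ j : {j : σ // j ≠ v}, ∑' u, φ x j u :=
      fun x => pi_tsum_prod _ _ (φ x) rfl
    simp only [hPI]
    -- bound the product of the tsums
    have hj₀' : (⟨j₀, hj₀⟩ : {j : σ // j ≠ v}) ∈ (Finset.univ : Finset {j : σ // j ≠ v}) :=
      Finset.mem_univ _
    have hone' : ∀ (x : ℕ) (j : {j : σ // j ≠ v}), ∑' u, φ x j u ≤ 1 := by
      intro x j
      rw [hφ]
      by_cases h : (ed j.1).1 = v
      · simp only [h, if_pos]; exact row_sum_le g hg x
      · simp only [h, if_neg, if_false]; exact col_sum_le g hg x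
    have hbnd : ∀ x : ℕ, ∏ j : {j : σ // j ≠ v}, ∑' u, φ x j u
        ≤ (∑' u, g x u) + ∑' u, g u x := by
      intro x
      calc ∏ j : {j : σ // j ≠ v}, ∑' u, φ x j u
          ≤ ∏ j ∈ {(⟨j₀, hj₀⟩ : {j : σ // j ≠ v})}, ∑' u, φ x j u :=
            prod_le_of_subset (Finset.singleton_subset_iff.mpr hj₀') _ (hone' x)
      _ = ∑' u, φ x ⟨j₀, hj₀⟩ u := Finset.prod_singleton _ _
      _ ≤ (∑' u, g x u) + ∑' u, g u x := by
          rw [hφ]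
          by_cases h : (ed j₀).1 = v
          · simp only [h, if_pos]; exact le_self_add
          · simp only [h, if_neg, if_false]; exact le_add_self
    calc ∑' x : ℕ, ∏ j : {j : σ // j ≠ v}, ∑' u, φ x j u
        ≤ ∑' x : ℕ, ((∑' u, g x u) + ∑' u, g u x) := ENNReal.tsum_le_tsum hbnd
    _ ≤ 2 := rowcol_tsum g hg

end Cover2

section Cover3

variable (g : ℕ → ℕ → ℝ≥0∞)

set_option maxHeartbeats 2000000 in
lemma cover_tsum (hg : ∑' p : ℕ × ℕ, g p.1 p.2 ≤ 1) :
    ∀ (N : ℕ) (ι : Type) [Fintype ι] [DecidableEq ι], Fintype.card ι ≤ N →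
    ∀ (M : ℕ) (E : Finset (ι × ι)), E.card ≤ M →
      (∀ i : ι, ∃ e ∈ E, e.1 = i ∨ e.2 = i) →
    ∑' f : ι → ℕ, ∏ e ∈ E, g (f e.1) (f e.2) ≤ 2 ^ Fintype.card ι := by
  have hg1 : ∀ u w, g u w ≤ 1 := g_le_one g hg
  intro N
  induction N with
  | zero =>
      intro ι _ _ hcard M E hE hcov
      haveI : IsEmpty ι := Fintype.card_eq_zero_iff.mp (le_antisymm hcard (Nat.zero_le _))
      have hEe : E = ∅ := Finset.eq_empty_of_isEmpty E
      subst hEe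
      simp only [Finset.prod_empty]
      rw [tsum_pi_empty]
      exact one_le_pow_of_one_le' one_le_two _
  | succ N ihN =>
      intro ι _ _ hcard M
      induction M with
      | zero =>
          intro E hE hcov
          have hEe : E = ∅ := Finset.card_eq_zero.mp (le_antisymm hE (Nat.zero_le _))
          subst hEe
          rcases isEmpty_or_nonempty ι with hemp | hne
          · simp only [Finset.prod_empty]
            rw [tsum_pi_empty]
            exact one_le_pow_of_one_le' one_le_two _
          · obtain ⟨i⟩ := hne
            obtain ⟨e, he, -⟩ := hcov i
            exact absurd he (Finset.notMem_empty e)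
      | succ M ihM =>
          intro E hE hcov
          classical
          by_cases hred : ∃ e ∈ E, ∀ i : ι, ∃ e' ∈ E.erase e, e'.1 = i ∨ e'.2 = i
          · obtain ⟨e₀, he₀, hcov'⟩ := hred
            refine le_trans (ENNReal.tsum_le_tsum fun f =>
              prod_le_of_subset (Finset.erase_subset e₀ E) _ (fun e => hg1 _ _)) ?_
            exact ihM (E.erase e₀) (by
              have := Finset.card_erase_le (s := E) (a := e₀)
              have h2 := Finset.card_erase_lt_of_mem he₀
              omega) hcov'
          · push_neg at hred
            rcases isEmpty_or_nonempty ι with hemp | hne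
            · refine le_trans (ENNReal.tsum_le_tsum fun f =>
                Finset.prod_le_one (fun e _ => bot_le) (fun e _ => hg1 _ _)) ?_
              rw [tsum_pi_empty]
              exact one_le_pow_of_one_le' one_le_two _
            · obtain ⟨i0⟩ := hne
              obtain ⟨e₀, he₀, -⟩ := hcov i0
              obtain ⟨z, hz⟩ := hred e₀ he₀
              -- z is covered only by e₀
              have hzonly : ∀ e ∈ E, (e.1 = z ∨ e.2 = z) → e = e₀ := by
                intro e he ht
                by_contra hne'
                have := hz e (Finset.mem_erase.mpr ⟨hne', he⟩)
                rcases ht with h | h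
                exacts [this.1 h, this.2 h]
              have hze₀ : e₀.1 = z ∨ e₀.2 = z := by
                obtain ⟨e, he, ht⟩ := hcov z
                have := hzonly e he ht
                rwa [this] at ht
              set v : ι := if z = e₀.1 then e₀.2 else e₀.1 with hv
              have hzv : e₀ = (z, v) ∨ e₀ = (v, z) := by
                by_cases h : z = e₀.1
                · left; rw [hv, if_pos h, h]
                · right
                  have h2 : e₀.2 = z := by
                    rcases hze₀ with h1 | h1
                    exacts [absurd h1.symm h, h1]
                  rw [hv, if_neg h, ← h2]
              have he₀v : e₀.1 = v ∨ e₀.2 = v := by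
                rcases hzv with h | h
                · right; rw [h]
                · left; rw [h]
              set D : Finset ι := Finset.univ.filter
                (fun j => j ≠ v ∧ ∀ e ∈ E, (e.1 = j ∨ e.2 = j) → (e.1 = v ∨ e.2 = v)) with hD
              set S : Finset ι := insert v D with hS
              have hvS : v ∈ S := Finset.mem_insert_self v D
              have hSprop : ∀ j ∈ S, j ≠ v → ∀ e ∈ E, (e.1 = j ∨ e.2 = j) → (e.1 = v ∨ e.2 = v) := by
                intro j hj hjv
                rcases Finset.mem_insert.mp hj with h | h
                · exact absurd h hjv
                · exact (Finset.mem_filter.mp h).2.2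
              have hnotS : ∀ e ∈ E, ¬(e.1 = v ∨ e.2 = v) → e.1 ∉ S ∧ e.2 ∉ S := by
                intro e he hnv
                push_neg at hnv
                constructor
                · intro h1S
                  by_cases h : e.1 = v
                  · exact hnv.1 h
                  · exact absurd (hSprop e.1 h1S h e he (Or.inl rfl)) (by push_neg; exact hnv)
                · intro h2S
                  by_cases h : e.2 = v
                  · exact hnv.2 h
                  · exact absurd (hSprop e.2 h2S h e he (Or.inr rfl)) (by push_neg; exact hnv)
              have hzS : z ∈ S := by
                by_cases h : z = v
                · rw [h]; exact hvS
                · refine Finset.mem_insert.mpr (Or.inr (Finset.mem_filter.mpr ⟨Finset.mem_univ _, h, ?_⟩))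
                  intro e he ht
                  rw [hzonly e he ht]
                  exact he₀v
              set Es : Finset (ι × ι) := E.filter (fun e => e.1 ∈ S ∧ e.2 ∈ S) with hEs
              set Ec : Finset (ι × ι) := E.filter (fun e => e.1 ∉ S ∧ e.2 ∉ S) with hEc
              have hEsE : ∀ e ∈ Es, e.1 ∈ S ∧ e.2 ∈ S := fun e he => (Finset.mem_filter.mp he).2
              have hEsstar : ∀ e ∈ Es, e.1 = v ∨ e.2 = v := by
                intro e he
                obtain ⟨heE, h1, h2⟩ := Finset.mem_filter.mp he
                by_cases h : e.1 = v
                · exact Or.inl h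
                · exact hSprop e.1 h1 h e heE (Or.inl rfl)
              have hEscov : ∀ j ∈ S, ∃ e ∈ Es, e.1 = j ∨ e.2 = j := by
                intro j hj
                by_cases hjv : j = v
                · refine ⟨e₀, ?_, by rw [hjv]; exact he₀v⟩
                  refine Finset.mem_filter.mpr ⟨he₀, ?_⟩
                  rcases hzv with h | h <;> rw [h]
                  exacts [⟨hzS, hvS⟩, ⟨hvS, hzS⟩]
                · obtain ⟨e, he, ht⟩ := hcov j
                  have htv : e.1 = v ∨ e.2 = v := hSprop j hj hjv e he ht
                  refine ⟨e, Finset.mem_filter.mpr ⟨he, ?_⟩, ht⟩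
                  rcases ht with h1 | h1 <;> rcases htv with h2 | h2
                  · exact absurd (h1.symm.trans h2) hjv
                  · exact ⟨by rw [h1]; exact hj, by rw [h2]; exact hvS⟩
                  · exact ⟨by rw [h2]; exact hvS, by rw [h1]; exact hj⟩
                  · exact absurd (h1.symm.trans h2) hjv
              have hEccov : ∀ j : ι, j ∉ S → ∃ e ∈ Ec, e.1 = j ∨ e.2 = j := by
                intro j hjS
                have hjv : j ≠ v := fun h => hjS (h ▸ hvS)
                have hjD : j ∉ D := fun h => hjS (Finset.mem_insert.mpr (Or.inr h))
                rw [hD, Finset.mem_filter] at hjD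
                push_neg at hjD
                obtain ⟨e, he, ht, hnv⟩ := hjD (Finset.mem_univ j) hjv
                refine ⟨e, Finset.mem_filter.mpr ⟨he, hnotS e he (by push_neg; exact hnv)⟩, ht⟩
              -- split the index type along `S`
              have hsplitle : ∀ f : ι → ℕ, ∏ e ∈ E, g (f e.1) (f e.2)
                  ≤ (∏ e ∈ Es, g (f e.1) (f e.2)) * ∏ e ∈ Ec, g (f e.1) (f e.2) := by
                intro f
                have hsub : Es ∪ Ec ⊆ E :=
                  Finset.union_subset (Finset.filter_subset _ _) (Finset.filter_subset _ _)
                have hdisj : Disjoint Es Ec := by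
                  rw [Finset.disjoint_left]
                  intro e he1 he2
                  exact (Finset.mem_filter.mp he2).2.1 (Finset.mem_filter.mp he1).2.1
                calc ∏ e ∈ E, g (f e.1) (f e.2) ≤ ∏ e ∈ Es ∪ Ec, g (f e.1) (f e.2) :=
                      prod_le_of_subset hsub _ (fun e => hg1 _ _)
                _ = _ := Finset.prod_union hdisj
              set eS : {i : ι // i ∈ S} ⊕ {i : ι // i ∉ S} ≃ ι :=
                Equiv.sumCompl (fun i => i ∈ S) with heS
              set eq2 : (ι → ℕ) ≃ ({i : ι // i ∈ S} → ℕ) × ({i : ι // i ∉ S} → ℕ) :=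
                (Equiv.arrowCongr eS (Equiv.refl ℕ)).symm.trans
                  (Equiv.sumArrowEquivProdArrow _ _ ℕ) with heq2
              have heval1 : ∀ (p : ({i : ι // i ∈ S} → ℕ) × ({i : ι // i ∉ S} → ℕ))
                  (i : ι) (hi : i ∈ S), (eq2.symm p) i = p.1 ⟨i, hi⟩ := by
                intro p i hi
                simp [heq2, heS, Equiv.sumArrowEquivProdArrow, Equiv.arrowCongr,
                  Equiv.sumCompl_symm_apply_of_pos hi]
              have heval2 : ∀ (p : ({i : ι // i ∈ S} → ℕ) × ({i : ι // i ∉ S} → ℕ))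
                  (i : ι) (hi : i ∉ S), (eq2.symm p) i = p.2 ⟨i, hi⟩ := by
                intro p i hi
                simp [heq2, heS, Equiv.sumArrowEquivProdArrow, Equiv.arrowCongr,
                  Equiv.sumCompl_symm_apply_of_neg hi]
              -- edge sets on the subtypes
              set Fσ : Finset ({i : ι // i ∈ S} × {i : ι // i ∈ S}) := Es.attach.image
                (fun e => (⟨e.1.1, (hEsE e.1 e.2).1⟩, ⟨e.1.2, (hEsE e.1 e.2).2⟩)) with hFσ
              set Fτ : Finset ({i : ι // i ∉ S} × {i : ι // i ∉ S}) := Ec.attach.image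
                (fun e => (⟨e.1.1, ((Finset.mem_filter.mp e.2).2).1⟩,
                  ⟨e.1.2, ((Finset.mem_filter.mp e.2).2).2⟩)) with hFτ
              have hinjσ : Set.InjOn
                  (fun e : {x // x ∈ Es} => ((⟨e.1.1, (hEsE e.1 e.2).1⟩ : {i : ι // i ∈ S}),
                    (⟨e.1.2, (hEsE e.1 e.2).2⟩ : {i : ι // i ∈ S}))) Es.attach := by
                intro a _ b _ h
                have h1 : (a.1.1 : ι) = b.1.1 :=
                  congrArg (fun q : {i : ι // i ∈ S} × {i : ι // i ∈ S} => (q.1 : ι)) h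
                have h2 : (a.1.2 : ι) = b.1.2 :=
                  congrArg (fun q : {i : ι // i ∈ S} × {i : ι // i ∈ S} => (q.2 : ι)) h
                exact Subtype.ext (Prod.ext h1 h2)
              have hinjτ : Set.InjOn
                  (fun e : {x // x ∈ Ec} => ((⟨e.1.1, ((Finset.mem_filter.mp e.2).2).1⟩ :
                      {i : ι // i ∉ S}),
                    (⟨e.1.2, ((Finset.mem_filter.mp e.2).2).2⟩ : {i : ι // i ∉ S}))) Ec.attach := by
                intro a _ b _ h
                have h1 : (a.1.1 : ι) = b.1.1 :=
                  congrArg (fun q : {i : ι // i ∉ S} × {i : ι // i ∉ S} => (q.1 : ι)) h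
                have h2 : (a.1.2 : ι) = b.1.2 :=
                  congrArg (fun q : {i : ι // i ∉ S} × {i : ι // i ∉ S} => (q.2 : ι)) h
                exact Subtype.ext (Prod.ext h1 h2)
              have hA : ∀ p : ({i : ι // i ∈ S} → ℕ) × ({i : ι // i ∉ S} → ℕ),
                  ∏ e ∈ Es, g ((eq2.symm p) e.1) ((eq2.symm p) e.2)
                    = ∏ e ∈ Fσ, g (p.1 e.1) (p.1 e.2) := by
                intro p
                rw [hFσ, Finset.prod_image hinjσ]
                rw [← Finset.prod_attach Es (fun e => g ((eq2.symm p) e.1) ((eq2.symm p) e.2))]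
                refine Finset.prod_congr rfl fun e _ => ?_
                rw [heval1 p e.1.1 (hEsE e.1 e.2).1, heval1 p e.1.2 (hEsE e.1 e.2).2]
              have hB : ∀ p : ({i : ι // i ∈ S} → ℕ) × ({i : ι // i ∉ S} → ℕ),
                  ∏ e ∈ Ec, g ((eq2.symm p) e.1) ((eq2.symm p) e.2)
                    = ∏ e ∈ Fτ, g (p.2 e.1) (p.2 e.2) := by
                intro p
                rw [hFτ, Finset.prod_image hinjτ]
                rw [← Finset.prod_attach Ec (fun e => g ((eq2.symm p) e.1) ((eq2.symm p) e.2))]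
                refine Finset.prod_congr rfl fun e _ => ?_
                rw [heval2 p e.1.1 ((Finset.mem_filter.mp e.2).2).1,
                  heval2 p e.1.2 ((Finset.mem_filter.mp e.2).2).2]
              -- the star bound
              have hstarA : ∑' h1 : {i : ι // i ∈ S} → ℕ, ∏ e ∈ Fσ, g (h1 e.1) (h1 e.2) ≤ 2 := by
                refine star_tsum g hg ⟨v, hvS⟩ Fσ ?_ ?_
                · intro e' he'
                  rw [hFσ] at he'
                  obtain ⟨e, -, rfl⟩ := Finset.mem_image.mp he'
                  rcases hEsstar e.1 e.2 with h | h
                  · exact Or.inl (Subtype.ext h)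
                  · exact Or.inr (Subtype.ext h)
                · intro j
                  obtain ⟨e, he, ht⟩ := hEscov j.1 j.2
                  refine ⟨(⟨e.1, (hEsE e he).1⟩, ⟨e.2, (hEsE e he).2⟩), ?_, ?_⟩
                  · rw [hFσ]
                    exact Finset.mem_image.mpr ⟨⟨e, he⟩, Finset.mem_attach _ _, rfl⟩
                  · rcases ht with h | h
                    · exact Or.inl (Subtype.ext h)
                    · exact Or.inr (Subtype.ext h)
              -- the survivor bound via the outer induction hypothesis
              have hcards : Fintype.card {i : ι // i ∉ S} + 1 ≤ Fintype.card ι := by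
                have h1 : Fintype.card {i : ι // i ∉ S}
                    = Fintype.card ι - Fintype.card {i : ι // i ∈ S} :=
                  Fintype.card_subtype_compl _
                have h2 : 0 < Fintype.card {i : ι // i ∈ S} :=
                  Fintype.card_pos_iff.mpr ⟨⟨v, hvS⟩⟩
                have h3 : Fintype.card {i : ι // i ∈ S} ≤ Fintype.card ι :=
                  Fintype.card_le_of_injective (fun x => x.1) Subtype.val_injective
                omega
              have hsurvB : ∑' h2 : {i : ι // i ∉ S} → ℕ, ∏ e ∈ Fτ, g (h2 e.1) (h2 e.2)
                  ≤ 2 ^ Fintype.card {i : ι // i ∉ S} := by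
                refine ihN _ (by omega) Fτ.card Fτ le_rfl ?_
                intro j
                obtain ⟨e, he, ht⟩ := hEccov j.1 j.2
                refine ⟨(⟨e.1, ((Finset.mem_filter.mp he).2).1⟩,
                  ⟨e.2, ((Finset.mem_filter.mp he).2).2⟩), ?_, ?_⟩
                · rw [hFτ]
                  exact Finset.mem_image.mpr ⟨⟨e, he⟩, Finset.mem_attach _ _, rfl⟩
                · rcases ht with h | h
                  · exact Or.inl (Subtype.ext h)
                  · exact Or.inr (Subtype.ext h)
              -- put everything together
              calc ∑' f : ι → ℕ, ∏ e ∈ E, g (f e.1) (f e.2)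
                  ≤ ∑' f : ι → ℕ, (∏ e ∈ Es, g (f e.1) (f e.2)) * ∏ e ∈ Ec, g (f e.1) (f e.2) :=
                    ENNReal.tsum_le_tsum hsplitle
              _ = ∑' p : ({i : ι // i ∈ S} → ℕ) × ({i : ι // i ∉ S} → ℕ),
                    (∏ e ∈ Es, g ((eq2.symm p) e.1) ((eq2.symm p) e.2))
                      * ∏ e ∈ Ec, g ((eq2.symm p) e.1) ((eq2.symm p) e.2) :=
                    (Equiv.tsum_eq eq2.symm _).symm
              _ = ∑' p : ({i : ι // i ∈ S} → ℕ) × ({i : ι // i ∉ S} → ℕ),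
                    (∏ e ∈ Fσ, g (p.1 e.1) (p.1 e.2)) * ∏ e ∈ Fτ, g (p.2 e.1) (p.2 e.2) :=
                    tsum_congr fun p => by rw [hA p, hB p]
              _ = (∑' h1 : {i : ι // i ∈ S} → ℕ, ∏ e ∈ Fσ, g (h1 e.1) (h1 e.2))
                    * ∑' h2 : {i : ι // i ∉ S} → ℕ, ∏ e ∈ Fτ, g (h2 e.1) (h2 e.2) := by
                    rw [ENNReal.tsum_prod']
                    simp_rw [ENNReal.tsum_mul_left]
                    rw [ENNReal.tsum_mul_right]
              _ ≤ 2 * 2 ^ Fintype.card {i : ι // i ∉ S} := mul_le_mul' hstarA hsurvB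
              _ = 2 ^ (Fintype.card {i : ι // i ∉ S} + 1) := by rw [pow_succ, mul_comm]
              _ ≤ 2 ^ Fintype.card ι := pow_le_pow_right' one_le_two hcards

end Cover3

section Part2

lemma hg_of_hsum (G : ℕ → ℕ → ℝ) (hpos : ∀ i j, 0 ≤ G i j)
    (hsum : HasSum (fun p : ℕ × ℕ => G p.1 p.2) 1) :
    ∑' p : ℕ × ℕ, ENNReal.ofReal (G p.1 p.2) ≤ 1 := by
  rw [show (fun p : ℕ × ℕ => ENNReal.ofReal (G p.1 p.2))
      = fun p : ℕ × ℕ => ENNReal.ofReal ((fun q : ℕ × ℕ => G q.1 q.2) p) from rfl]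
  rw [← ENNReal.ofReal_tsum_of_nonneg (f := fun q : ℕ × ℕ => G q.1 q.2) (fun p => hpos p.1 p.2) hsum.summable, hsum.tsum_eq]
  simp

lemma summable_homTerms (G : ℕ → ℕ → ℝ) (hpos : ∀ i j, 0 ≤ G i j)
    (hsum : HasSum (fun p : ℕ × ℕ => G p.1 p.2) 1)
    (k : ℕ) (H : Fin k → Fin k → ℕ) (hH : IsMultigraph H) :
    Summable (fun f : Fin k → ℕ => ∏ i, ∏ j, G (f i) (f j) ^ H i j) := by
  classical
  set g : ℕ → ℕ → ℝ≥0∞ := fun u v => ENNReal.ofReal (G u v) with hgdef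
  have hg : ∑' p : ℕ × ℕ, g p.1 p.2 ≤ 1 := hg_of_hsum G hpos hsum
  have hg1 : ∀ u w, g u w ≤ 1 := g_le_one g hg
  set E : Finset (Fin k × Fin k) := Finset.univ.filter (fun e => 0 < H e.1 e.2) with hE
  have hcov : ∀ i : Fin k, ∃ e ∈ E, e.1 = i ∨ e.2 = i := by
    intro i
    obtain ⟨j, hj | hj⟩ := hH i
    · exact ⟨(i, j), Finset.mem_filter.mpr ⟨Finset.mem_univ _, hj⟩, Or.inl rfl⟩
    · exact ⟨(j, i), Finset.mem_filter.mpr ⟨Finset.mem_univ _, hj⟩, Or.inr rfl⟩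
  have hbound : ∀ f : Fin k → ℕ,
      (∏ i, ∏ j, g (f i) (f j) ^ H i j) ≤ ∏ e ∈ E, g (f e.1) (f e.2) := by
    intro f
    have h1 : (∏ i, ∏ j, g (f i) (f j) ^ H i j)
        = ∏ e ∈ Finset.univ ×ˢ Finset.univ, g (f e.1) (f e.2) ^ H e.1 e.2 :=
      (Finset.prod_product' (s := Finset.univ) (t := Finset.univ)
        (f := fun a b => g (f a) (f b) ^ H a b)).symm
    rw [h1, Finset.univ_product_univ]
    have hsub : E ⊆ Finset.univ := Finset.subset_univ E
    rw [← Finset.prod_sdiff hsub]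
    have h2 : (∏ e ∈ Finset.univ \ E, g (f e.1) (f e.2) ^ H e.1 e.2) ≤ 1 :=
      Finset.prod_le_one (fun e _ => bot_le)
        (fun e _ => pow_le_one' (hg1 _ _) _)
    have h3 : (∏ e ∈ E, g (f e.1) (f e.2) ^ H e.1 e.2) ≤ ∏ e ∈ E, g (f e.1) (f e.2) := by
      refine Finset.prod_le_prod' fun e he => ?_
      have hHe : 1 ≤ H e.1 e.2 := (Finset.mem_filter.mp he).2
      calc g (f e.1) (f e.2) ^ H e.1 e.2 ≤ g (f e.1) (f e.2) ^ 1 :=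
            pow_le_pow_right_of_le_one' (hg1 _ _) hHe
      _ = g (f e.1) (f e.2) := pow_one _
    calc (∏ e ∈ Finset.univ \ E, g (f e.1) (f e.2) ^ H e.1 e.2)
          * ∏ e ∈ E, g (f e.1) (f e.2) ^ H e.1 e.2
        ≤ 1 * ∏ e ∈ E, g (f e.1) (f e.2) := mul_le_mul' h2 h3
    _ = _ := one_mul _
  have htop : (∑' f : Fin k → ℕ, ∏ i, ∏ j, g (f i) (f j) ^ H i j) ≠ ⊤ := by
    refine ne_top_of_le_ne_top ?_ (le_trans (ENNReal.tsum_le_tsum hbound)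
      (cover_tsum g hg (Fintype.card (Fin k)) (Fin k) le_rfl E.card E le_rfl hcov))
    exact ENNReal.pow_ne_top (by norm_num)
  have hofReal : ∀ f : Fin k → ℕ,
      (∏ i, ∏ j, g (f i) (f j) ^ H i j)
        = ENNReal.ofReal (∏ i, ∏ j, G (f i) (f j) ^ H i j) := by
    intro f
    rw [ENNReal.ofReal_prod_of_nonneg
      (fun i _ => Finset.prod_nonneg (fun j _ => pow_nonneg (hpos _ _) _))]
    refine Finset.prod_congr rfl fun i _ => ?_
    rw [ENNReal.ofReal_prod_of_nonneg (fun j _ => pow_nonneg (hpos _ _) _)]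
    refine Finset.prod_congr rfl fun j _ => ?_
    rw [ENNReal.ofReal_pow (hpos _ _)]
  rw [show (fun f : Fin k → ℕ => ∏ i, ∏ j, g (f i) (f j) ^ H i j)
      = fun f => ENNReal.ofReal (∏ i, ∏ j, G (f i) (f j) ^ H i j) from funext hofReal] at htop
  have := ENNReal.summable_toReal htop
  refine this.congr fun f => ?_
  rw [ENNReal.toReal_ofReal (Finset.prod_nonneg
    (fun i _ => Finset.prod_nonneg (fun j _ => pow_nonneg (hpos _ _) _)))]

end Part2

section Part2b

lemma tendsto_square_sums (h : ℕ × ℕ → ℝ) (hs : Summable h) :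
    Tendsto (fun n => ∑ p ∈ Finset.range (n+1) ×ˢ Finset.range (n+1), h p) atTop
      (𝓝 (∑' p, h p)) := by
  have hmono : Monotone (fun n => Finset.range (n+1) ×ˢ Finset.range (n+1)) := by
    intro a b hab
    exact Finset.product_subset_product (Finset.range_subset_range.mpr (by omega))
      (Finset.range_subset_range.mpr (by omega))
  have hex : ∀ p : ℕ × ℕ, ∃ n, p ∈ Finset.range (n+1) ×ˢ Finset.range (n+1) := fun p =>
    ⟨max p.1 p.2, Finset.mem_product.mpr
      ⟨Finset.mem_range.mpr (Nat.lt_succ_of_le (le_max_left _ _)),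
       Finset.mem_range.mpr (Nat.lt_succ_of_le (le_max_right _ _))⟩⟩
  exact hs.hasSum.comp (tendsto_atTop_finset_of_monotone hmono hex)

lemma tendsto_s (G : ℕ → ℕ → ℝ) (hsum : HasSum (fun p : ℕ × ℕ => G p.1 p.2) 1) :
    Tendsto (fun n => ∑ a ∈ Finset.range (n+1), ∑ b ∈ Finset.range (n+1), G a b) atTop (𝓝 1) := by
  have h := tendsto_square_sums (fun p => G p.1 p.2) hsum.summable
  rw [hsum.tsum_eq] at h
  refine Tendsto.congr (fun n => ?_) h
  exact Finset.sum_product' (s := Finset.range (n+1)) (t := Finset.range (n+1))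
    (f := fun a b => G a b)

lemma homNum_eq (G : ℕ → ℕ → ℝ) (s : ℝ) (k n : ℕ) (H : Fin k → Fin k → ℕ) :
    homNum H (fun i j : Fin (n+1) => G i j / s)
      = (∑ f : Fin k → Fin (n+1), ∏ i, ∏ j, G (f i) (f j) ^ H i j)
          * (s ^ (∑ i, ∑ j, H i j))⁻¹ := by
  rw [homNum, Finset.sum_mul]
  refine Finset.sum_congr rfl fun f _ => ?_
  rw [← div_eq_mul_inv]
  have hrow : ∀ i : Fin k, ∏ j, (G (f i) (f j) / s) ^ H i j
      = (∏ j, G (f i) (f j) ^ H i j) / s ^ (∑ j, H i j) := by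
    intro i
    simp only [div_pow]
    rw [Finset.prod_div_distrib, Finset.prod_pow_eq_pow_sum]
  simp only [hrow]
  rw [Finset.prod_div_distrib, Finset.prod_pow_eq_pow_sum]

lemma sum_fin_eq_sum_piFinset (k n : ℕ) (F : (Fin k → ℕ) → ℝ) :
    ∑ f : Fin k → Fin (n+1), F (fun i => (f i : ℕ))
      = ∑ f ∈ Fintype.piFinset (fun _ : Fin k => Finset.range (n+1)), F f := by
  refine Finset.sum_bij' (i := fun f _ => fun i => (f i : ℕ))
    (j := fun f hf => fun i => ⟨f i, Finset.mem_range.mp (Fintype.mem_piFinset.mp hf i)⟩)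
    ?_ ?_ ?_ ?_ ?_
  · intro f _
    exact Fintype.mem_piFinset.mpr fun i => Finset.mem_range.mpr (f i).2
  · intro f hf
    exact Finset.mem_univ _
  · intro f _
    rfl
  · intro f hf
    rfl
  · intro f _
    rfl

lemma tendsto_piFinset_sums (k : ℕ) (F : (Fin k → ℕ) → ℝ) (L : ℝ) (hF : HasSum F L) :
    Tendsto (fun n => ∑ f ∈ Fintype.piFinset (fun _ : Fin k => Finset.range (n+1)), F f)
      atTop (𝓝 L) := by
  have hmono : Monotone (fun n => Fintype.piFinset (fun _ : Fin k => Finset.range (n+1))) := by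
    intro a b hab
    exact Fintype.piFinset_subset _ _ fun i => Finset.range_subset_range.mpr (by omega)
  have hex : ∀ f : Fin k → ℕ, ∃ n,
      f ∈ Fintype.piFinset (fun _ : Fin k => Finset.range (n+1)) := fun f =>
    ⟨Finset.univ.sup f, Fintype.mem_piFinset.mpr fun i =>
      Finset.mem_range.mpr (Nat.lt_succ_of_le (Finset.le_sup (Finset.mem_univ i)))⟩
  exact hF.comp (tendsto_atTop_finset_of_monotone hmono hex)

end Part2b

lemma part2 (G : ℕ → ℕ → ℝ) (hpos : ∀ i j, 0 ≤ G i j)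
    (hsum : HasSum (fun p : ℕ × ℕ => G p.1 p.2) 1)
    (k : ℕ) (H : Fin k → Fin k → ℕ) (hH : IsMultigraph H) :
    ∃ L : ℝ, HasSum (fun f : Fin k → ℕ => ∏ i, ∏ j, G (f i) (f j) ^ H i j) L ∧
      Tendsto (fun n => homNum H (fun i j : Fin (n + 1) =>
          G i j / ∑ a ∈ Finset.range (n + 1), ∑ b ∈ Finset.range (n + 1), G a b))
        atTop (𝓝 L) := by
  have hsummable := summable_homTerms G hpos hsum k H hH
  refine ⟨∑' f : Fin k → ℕ, ∏ i, ∏ j, G (f i) (f j) ^ H i j, hsummable.hasSum, ?_⟩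
  have h1 : ∀ n : ℕ, homNum H (fun i j : Fin (n + 1) =>
      G i j / ∑ a ∈ Finset.range (n + 1), ∑ b ∈ Finset.range (n + 1), G a b)
      = (∑ f ∈ Fintype.piFinset (fun _ : Fin k => Finset.range (n+1)),
          ∏ i, ∏ j, G (f i) (f j) ^ H i j)
        * ((∑ a ∈ Finset.range (n + 1), ∑ b ∈ Finset.range (n + 1), G a b)
            ^ (∑ i, ∑ j, H i j))⁻¹ := by
    intro n
    rw [homNum_eq G _ k n H,
      ← sum_fin_eq_sum_piFinset k n (fun f => ∏ i, ∏ j, G (f i) (f j) ^ H i j)]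
  have h2 : Tendsto (fun n =>
      (∑ f ∈ Fintype.piFinset (fun _ : Fin k => Finset.range (n+1)),
          ∏ i, ∏ j, G (f i) (f j) ^ H i j)
        * ((∑ a ∈ Finset.range (n + 1), ∑ b ∈ Finset.range (n + 1), G a b)
            ^ (∑ i, ∑ j, H i j))⁻¹) atTop
      (𝓝 ((∑' f : Fin k → ℕ, ∏ i, ∏ j, G (f i) (f j) ^ H i j) * (((1:ℝ) ^ (∑ i, ∑ j, H i j))⁻¹))) :=
    (tendsto_piFinset_sums k _ _ hsummable.hasSum).mul
      (((tendsto_s G hsum).pow _).inv₀ (by norm_num))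
  rw [one_pow, inv_one, mul_one] at h2
  exact h2.congr fun n => (h1 n).symm


namespace P1

variable {k : ℕ}

/-- the `u`-th base-`k` digit of `x ∈ [0,1)` -/
def dig (hk : 0 < k) (u : ℕ) (x : ℝ) : Fin k :=
  ⟨⌊x * (k:ℝ)^(u+1)⌋₊ % k, Nat.mod_lt _ hk⟩

lemma measurable_dig (hk : 0 < k) (u : ℕ) : Measurable (dig hk u) := by
  have h1 : Measurable fun x : ℝ => x * (k:ℝ)^(u+1) :=
    measurable_id.mul_const _
  have h2 : Measurable (Nat.floor : ℝ → ℕ) := Nat.measurable_floor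
  exact Measurable.comp (f := fun x : ℝ => ⌊x * (k:ℝ)^(u+1)⌋₊)
    (g := fun m : ℕ => (⟨m % k, Nat.mod_lt _ hk⟩ : Fin k)) measurable_from_top (h2.comp h1)

lemma digit_floor_eq (hk : 0 < k) (n u : ℕ) (hu : u ≤ n) (m : ℕ)
    (x : ℝ) (hx1 : (m : ℝ)/(k:ℝ)^(n+1) ≤ x) (hx2 : x < ((m:ℝ)+1)/(k:ℝ)^(n+1)) :
    ⌊x * (k:ℝ)^(u+1)⌋₊ = m / k^(n-u) := by
  have hkR : (0:ℝ) < (k:ℝ) := by exact_mod_cast hk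
  have hKpos : (0:ℝ) < (k:ℝ)^(n+1) := pow_pos hkR _
  have hx0 : 0 ≤ x := le_trans (by positivity) hx1
  have hNfloor : ⌊x * (k:ℝ)^(n+1)⌋₊ = m := by
    rw [Nat.floor_eq_iff (by positivity)]
    constructor
    · rw [← div_le_iff₀ hKpos]; exact hx1
    · rw [← lt_div_iff₀ hKpos]; exact hx2
  have hsplit : x * (k:ℝ)^(u+1) = (x * (k:ℝ)^(n+1)) / ((k^(n-u) : ℕ) : ℝ) := by
    push_cast
    rw [eq_div_iff (by positivity), mul_assoc, ← pow_add]
    congr 2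
    omega
  rw [hsplit, Nat.floor_div_natCast, hNfloor]

lemma digits_inj (hk : 0 < k) : ∀ n : ℕ, ∀ m m' : ℕ, m < k^n → m' < k^n →
    (∀ u, u < n → m / k^u % k = m' / k^u % k) → m = m' := by
  intro n
  induction n with
  | zero =>
      intro m m' hm hm' _
      simp only [pow_zero] at hm hm'
      omega
  | succ n ih =>
      intro m m' hm hm' h
      have h0 := h 0 (by omega)
      simp only [pow_zero, Nat.div_one] at h0
      have hklt : ∀ a : ℕ, a < k^(n+1) → a / k < k^n := by
        intro a ha
        rw [Nat.div_lt_iff_lt_mul hk]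
        rw [pow_succ] at ha
        exact ha
      have hdiv : m / k = m' / k := by
        refine ih (m/k) (m'/k) (hklt m hm) (hklt m' hm') ?_
        intro u hu
        rw [Nat.div_div_eq_div_mul, Nat.div_div_eq_div_mul, ← pow_succ']
        exact h (u+1) (by omega)
      have hm1 := Nat.div_add_mod m k
      have hm2 := Nat.div_add_mod m' k
      rw [hdiv, h0] at hm1
      omega

/-- base-`k` digits of `m`, big-endian among indices `0..n` -/
def psi (hk : 0 < k) (n : ℕ) (m : ℕ) : Fin (n+1) → Fin k :=
  fun u => ⟨m / k^(n - u.1) % k, Nat.mod_lt _ hk⟩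

lemma psi_bij (hk : 0 < k) (n : ℕ) :
    Function.Bijective (fun m : Fin (k^(n+1)) => psi hk n m.1) := by
  rw [Fintype.bijective_iff_injective_and_card]
  constructor
  · intro a b hab
    apply Fin.ext
    refine digits_inj hk (n+1) a.1 b.1 a.2 b.2 ?_
    intro u hu
    have h1 := congrFun hab ⟨n - u, by omega⟩
    have h2 : n - (n - u) = u := by omega
    have h3 := congrArg Fin.val h1
    simpa [psi, h2] using h3
  · simp [Fintype.card_fun]

lemma dig_eq_psi (hk : 0 < k) (n : ℕ) (m : ℕ) (x : ℝ)
    (hx1 : (m : ℝ)/(k:ℝ)^(n+1) ≤ x) (hx2 : x < ((m:ℝ)+1)/(k:ℝ)^(n+1)) :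
    (fun u : Fin (n+1) => dig hk u x) = psi hk n m := by
  funext u
  apply Fin.ext
  show ⌊x * (k:ℝ)^(u.1+1)⌋₊ % k = m / k^(n - u.1) % k
  rw [digit_floor_eq hk n u.1 (by omega) m x hx1 hx2]

end P1

namespace P1

variable {k : ℕ}

lemma Ico_eq_biUnion (N : ℕ) (hN : 0 < N) :
    Set.Ico (0:ℝ) 1 = ⋃ m ∈ Finset.range N, Set.Ico ((m:ℝ)/N) (((m:ℝ)+1)/N) := by
  have hNR : (0:ℝ) < (N:ℝ) := by exact_mod_cast hN
  ext x
  simp only [Set.mem_Ico, Set.mem_iUnion, Finset.mem_range, exists_prop]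
  constructor
  · rintro ⟨h0, h1⟩
    have hxN : 0 ≤ x * N := by positivity
    refine ⟨⌊x * N⌋₊, ?_, ?_, ?_⟩
    · have : x * N < N := by
        calc x * (N:ℝ) < 1 * N := by
              exact mul_lt_mul_of_pos_right h1 hNR
        _ = N := one_mul _
      have := Nat.floor_lt hxN |>.mpr (by exact_mod_cast this)
      exact_mod_cast this
    · rw [div_le_iff₀ hNR]
      exact Nat.floor_le hxN
    · rw [lt_div_iff₀ hNR]
      exact_mod_cast Nat.lt_floor_add_one (x * N)
  · rintro ⟨m, hm, hx1, hx2⟩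
    refine ⟨le_trans (by positivity) hx1, lt_of_lt_of_le hx2 ?_⟩
    rw [div_le_one hNR]
    exact_mod_cast hm

lemma unif_integral (hk : 0 < k) (n : ℕ) (F : (Fin (n+1) → Fin k) → ℝ) :
    ∫ x in Set.Ico (0:ℝ) 1, F (fun u => dig hk u x)
      = ((k:ℝ)^(n+1))⁻¹ * ∑ g : Fin (n+1) → Fin k, F g := by
  classical
  set N : ℕ := k^(n+1) with hNdef
  have hN : 0 < N := pow_pos hk _
  have hNR : (0:ℝ) < (N:ℝ) := by exact_mod_cast hN
  have hcast : ((N:ℝ)) = (k:ℝ)^(n+1) := by push_cast [hNdef]; ring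
  -- on each interval the integrand is constant
  have hconst : ∀ m : ℕ, ∀ x ∈ Set.Ico ((m:ℝ)/N) (((m:ℝ)+1)/N),
      F (fun u => dig hk u x) = F (psi hk n m) := by
    intro m x hx
    rw [dig_eq_psi hk n m x (by rw [← hcast]; exact hx.1) (by rw [← hcast]; exact hx.2)]
  have hmeas : ∀ m : ℕ, MeasurableSet (Set.Ico ((m:ℝ)/N) (((m:ℝ)+1)/N)) :=
    fun m => measurableSet_Ico
  have hdisj : Set.Pairwise ↑(Finset.range N)
      (Function.onFun Disjoint fun m : ℕ => Set.Ico ((m:ℝ)/N) (((m:ℝ)+1)/N)) := by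
    intro a _ b _ hab
    rcases lt_or_gt_of_ne hab with h | h
    · refine Set.Ico_disjoint_Ico.mpr ?_
      refine le_trans (min_le_left _ _) (le_trans ?_ (le_max_right _ _))
      rw [div_le_div_iff_of_pos_right hNR]
      exact_mod_cast h
    · refine Set.Ico_disjoint_Ico.mpr ?_
      refine le_trans (min_le_right _ _) (le_trans ?_ (le_max_left _ _))
      rw [div_le_div_iff_of_pos_right hNR]
      exact_mod_cast h
  have hinteg : ∀ m ∈ Finset.range N,
      IntegrableOn (fun x => F (fun u => dig hk u x))
        (Set.Ico ((m:ℝ)/N) (((m:ℝ)+1)/N)) volume := by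
    intro m _
    refine (integrableOn_const measure_Ico_lt_top.ne).congr_fun
      (fun x hx => (hconst m x hx).symm) (hmeas m)
  have hsplit : ∫ x in Set.Ico (0:ℝ) 1, F (fun u => dig hk u x)
      = ∑ m ∈ Finset.range N, ∫ x in Set.Ico ((m:ℝ)/N) (((m:ℝ)+1)/N),
          F (fun u => dig hk u x) := by
    rw [Ico_eq_biUnion N hN]
    exact integral_biUnion_finset (Finset.range N) (fun m _ => hmeas m) hdisj hinteg
  rw [hsplit]
  have hval : ∀ m ∈ Finset.range N,
      (∫ x in Set.Ico ((m:ℝ)/N) (((m:ℝ)+1)/N), F (fun u => dig hk u x))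
        = ((N:ℝ))⁻¹ * F (psi hk n m) := by
    intro m _
    rw [setIntegral_congr_fun (hmeas m) (fun x hx => hconst m x hx)]
    rw [setIntegral_const]
    rw [Real.volume_real_Ico]
    have harith : ((m:ℝ)+1)/N - (m:ℝ)/N = (N:ℝ)⁻¹ := by
      field_simp
      ring
    rw [harith, max_eq_left (by positivity), smul_eq_mul]
  rw [Finset.sum_congr rfl hval, ← Finset.mul_sum]
  rw [← hcast]
  congr 1
  rw [← Fin.sum_univ_eq_sum_range (fun m => F (psi hk n m)) N]
  exact Fintype.sum_bijective _ (psi_bij hk n) _ _ (fun m => rfl)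

end P1

namespace P1

variable {k : ℕ}

lemma quotientLaw_integral {n : ℕ} (Gm : Fin n → Fin n → ℝ) (f : (Fin k → Fin k → ℝ) →ᵇ ℝ) :
    ∫ x, f x ∂(quotientLaw Gm k)
      = ((k:ℝ)^n)⁻¹ * ∑ g : Fin n → Fin k, f (quotGraph g Gm) := by
  rw [quotientLaw, integral_smul_measure]
  rw [integral_finset_sum_measure (fun g _ => f.integrable _)]
  have h1 : ∀ g : Fin n → Fin k, ∫ x, f x ∂(Measure.dirac (quotGraph g Gm))
      = f (quotGraph g Gm) :=
    fun g => integral_dirac' _ _ f.continuous.stronglyMeasurable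
  rw [Finset.sum_congr rfl (fun g _ => h1 g)]
  rw [smul_eq_mul]
  congr 1
  simp [ENNReal.toReal_inv, ENNReal.toReal_pow]

lemma measurable_cond (hk : 0 < k) (u v : ℕ) (i j : Fin k) :
    MeasurableSet {x : ℝ | dig hk u x = i ∧ dig hk v x = j} := by
  have h1 : MeasurableSet ((dig hk u) ⁻¹' {i}) :=
    measurable_dig hk u (MeasurableSet.singleton i)
  have h2 : MeasurableSet ((dig hk v) ⁻¹' {j}) :=
    measurable_dig hk v (MeasurableSet.singleton j)
  exact (h1.inter h2)

def Qlim (G : ℕ → ℕ → ℝ) (hk : 0 < k) (x : ℝ) : Fin k → Fin k → ℝ :=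
  fun i j => (∑' p : ℕ × ℕ,
    ENNReal.ofReal (if dig hk p.1 x = i ∧ dig hk p.2 x = j then G p.1 p.2 else 0)).toReal

lemma measurable_Qlim (G : ℕ → ℕ → ℝ) (hk : 0 < k) : Measurable (Qlim G hk) := by
  refine measurable_pi_lambda _ fun i => measurable_pi_lambda _ fun j => ?_
  refine ENNReal.measurable_toReal.comp (Measurable.ennreal_tsum fun p => ?_)
  refine Measurable.ennreal_ofReal ?_
  exact Measurable.ite (measurable_cond hk p.1 p.2 i j) measurable_const measurable_const

lemma Qlim_eq (G : ℕ → ℕ → ℝ) (hpos : ∀ i j, 0 ≤ G i j)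
    (hsumG : Summable (fun p : ℕ × ℕ => G p.1 p.2)) (hk : 0 < k) (x : ℝ) (i j : Fin k) :
    Qlim G hk x i j
      = ∑' p : ℕ × ℕ, (if dig hk p.1 x = i ∧ dig hk p.2 x = j then G p.1 p.2 else 0) := by
  have hnn : ∀ p : ℕ × ℕ, 0 ≤ (if dig hk p.1 x = i ∧ dig hk p.2 x = j then G p.1 p.2 else 0) := by
    intro p; split
    · exact hpos _ _
    · exact le_rfl
  have hle : ∀ p : ℕ × ℕ, (if dig hk p.1 x = i ∧ dig hk p.2 x = j then G p.1 p.2 else 0)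
      ≤ G p.1 p.2 := by
    intro p; split
    · exact le_rfl
    · exact hpos _ _
  have hsummable : Summable (fun p : ℕ × ℕ =>
      (if dig hk p.1 x = i ∧ dig hk p.2 x = j then G p.1 p.2 else 0)) :=
    Summable.of_nonneg_of_le hnn hle hsumG
  rw [Qlim, ← ENNReal.ofReal_tsum_of_nonneg hnn hsummable,
    ENNReal.toReal_ofReal (tsum_nonneg hnn)]

end P1

namespace P1

def sN (G : ℕ → ℕ → ℝ) (m : ℕ) : ℝ :=
  ∑ a ∈ Finset.range (m+1), ∑ b ∈ Finset.range (m+1), G a b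

lemma tendsto_sN (G : ℕ → ℕ → ℝ) (hsum : HasSum (fun p : ℕ × ℕ => G p.1 p.2) 1) :
    Tendsto (sN G) atTop (𝓝 1) := by
  have h := tendsto_square_sums (fun p => G p.1 p.2) hsum.summable
  rw [hsum.tsum_eq] at h
  refine Tendsto.congr (fun n => ?_) h
  exact Finset.sum_product' (s := Finset.range (n+1)) (t := Finset.range (n+1))
    (f := fun a b => G a b)

def GnN (G : ℕ → ℕ → ℝ) (m : ℕ) : Fin (m+1) → Fin (m+1) → ℝ :=
  fun i j => G i j / sN G m

def XN {k : ℕ} (G : ℕ → ℕ → ℝ) (hk : 0 < k) (m : ℕ) (x : ℝ) : Fin k → Fin k → ℝ :=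
  quotGraph (fun u : Fin (m+1) => dig hk u x) (GnN G m)

lemma measurable_XN {k : ℕ} (G : ℕ → ℕ → ℝ) (hk : 0 < k) (m : ℕ) :
    Measurable (XN G hk m) := by
  refine measurable_pi_lambda _ fun i => measurable_pi_lambda _ fun j => ?_
  simp only [XN, quotGraph]
  refine Finset.measurable_sum _ fun u _ => ?_
  refine Finset.measurable_sum _ fun v _ => ?_
  exact Measurable.ite (measurable_cond hk u v i j) measurable_const measurable_const

lemma XN_entry {k : ℕ} (G : ℕ → ℕ → ℝ) (hk : 0 < k) (m : ℕ) (x : ℝ) (i j : Fin k) :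
    XN G hk m x i j
      = (∑ p ∈ Finset.range (m+1) ×ˢ Finset.range (m+1),
          (if dig hk p.1 x = i ∧ dig hk p.2 x = j then G p.1 p.2 else 0)) / sN G m := by
  have h1 : ∀ (u v : Fin (m+1)),
      (if dig hk u.1 x = i ∧ dig hk v.1 x = j then GnN G m u v else 0)
        = (if dig hk u.1 x = i ∧ dig hk v.1 x = j then G u.1 v.1 else 0) / sN G m := by
    intro u v
    rw [GnN]
    split_ifs
    · rfl
    · rw [zero_div]
  show (∑ u : Fin (m+1), ∑ v : Fin (m+1),
      if dig hk u.1 x = i ∧ dig hk v.1 x = j then GnN G m u v else 0) = _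
  simp only [h1]
  simp only [← Finset.sum_div]
  congr 1
  rw [Finset.sum_product' (s := Finset.range (m+1)) (t := Finset.range (m+1))
    (f := fun a b => if dig hk a x = i ∧ dig hk b x = j then G a b else 0)]
  rw [← Fin.sum_univ_eq_sum_range (fun a => ∑ b ∈ Finset.range (m+1),
    if dig hk a x = i ∧ dig hk b x = j then G a b else 0) (m+1)]
  refine Finset.sum_congr rfl fun u _ => ?_
  rw [← Fin.sum_univ_eq_sum_range (fun b =>
    if dig hk u.1 x = i ∧ dig hk b x = j then G u.1 b else 0) (m+1)]

lemma tendsto_XN {k : ℕ} (G : ℕ → ℕ → ℝ) (hpos : ∀ i j, 0 ≤ G i j)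
    (hsum : HasSum (fun p : ℕ × ℕ => G p.1 p.2) 1) (hk : 0 < k) (x : ℝ) :
    Tendsto (fun m => XN G hk m x) atTop (𝓝 (Qlim G hk x)) := by
  rw [tendsto_pi_nhds]
  intro i
  rw [tendsto_pi_nhds]
  intro j
  set h : ℕ × ℕ → ℝ :=
    fun p => if dig hk p.1 x = i ∧ dig hk p.2 x = j then G p.1 p.2 else 0 with hh
  have hnn : ∀ p : ℕ × ℕ, 0 ≤ h p := by
    intro p; rw [hh]; dsimp only; split
    · exact hpos _ _
    · exact le_rfl
  have hle : ∀ p : ℕ × ℕ, h p ≤ G p.1 p.2 := by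
    intro p; rw [hh]; dsimp only; split
    · exact le_rfl
    · exact hpos _ _
  have hsummable : Summable h := Summable.of_nonneg_of_le hnn hle hsum.summable
  have htend := (tendsto_square_sums h hsummable).div (tendsto_sN G hsum) one_ne_zero
  have hQ : Qlim G hk x i j = (∑' p, h p) / 1 := by
    rw [div_one]
    exact Qlim_eq G hpos hsum.summable hk x i j
  rw [show (fun m => XN G hk m x i j)
      = fun m => (∑ p ∈ Finset.range (m+1) ×ˢ Finset.range (m+1), h p) / sN G m
    from funext fun m => XN_entry G hk m x i j, hQ]
  exact htend

lemma part1 (G : ℕ → ℕ → ℝ) (hpos : ∀ i j, 0 ≤ G i j)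
    (hsum : HasSum (fun p : ℕ × ℕ => G p.1 p.2) 1)
    (k : ℕ) (hk : 0 < k) :
    ∃ ν : Measure (Fin k → Fin k → ℝ), IsProbabilityMeasure ν ∧
      ∀ f : (Fin k → Fin k → ℝ) →ᵇ ℝ,
        Tendsto (fun m => ∫ x, f x ∂(quotientLaw (GnN G m) k))
          atTop (𝓝 (∫ x, f x ∂ν)) := by
  set μ : Measure ℝ := volume.restrict (Set.Ico (0:ℝ) 1) with hμ
  haveI hμP : IsProbabilityMeasure μ := by
    constructor
    rw [hμ, Measure.restrict_apply MeasurableSet.univ, Set.univ_inter, Real.volume_Ico]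
    norm_num
  refine ⟨Measure.map (Qlim G hk) μ,
    Measure.isProbabilityMeasure_map (measurable_Qlim G hk).aemeasurable, ?_⟩
  intro f
  rw [integral_map (measurable_Qlim G hk).aemeasurable f.continuous.aestronglyMeasurable]
  have hrw : ∀ m : ℕ, ∫ x, f x ∂(quotientLaw (GnN G m) k) = ∫ x, f (XN G hk m x) ∂μ := by
    intro m
    rw [quotientLaw_integral (Gm := GnN G m) f]
    rw [hμ, ← unif_integral hk m (fun g => f (quotGraph g (GnN G m)))]
    rfl
  have hdom := MeasureTheory.tendsto_integral_of_dominated_convergence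
      (F := fun m x => f (XN G hk m x)) (f := fun x => f (Qlim G hk x))
      (bound := fun _ => ‖f‖) (μ := μ)
      (fun m => (f.continuous.measurable.comp (measurable_XN G hk m)).aestronglyMeasurable)
      (integrable_const _)
      (fun m => Filter.Eventually.of_forall fun x => f.norm_coe_le_norm (XN G hk m x))
      (Filter.Eventually.of_forall fun x =>
        ((f.continuous.tendsto _).comp (tendsto_XN G hpos hsum hk x)))
  exact Tendsto.congr (fun m => (hrw m).symm) hdom

end P1

/-- normalized truncations of an infinite summable array quotient-converge,
and for each multigraph `H` the infinite homomorphism series converges to the limit of the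
homomorphism numbers of the truncations. -/
theorem stmt8 (G : ℕ → ℕ → ℝ) (hpos : ∀ i j, 0 ≤ G i j)
    (hsum : HasSum (fun p : ℕ × ℕ => G p.1 p.2) 1)
    (hs : ∀ n : ℕ, 0 < ∑ a ∈ Finset.range (n + 1), ∑ b ∈ Finset.range (n + 1), G a b) :
    QuotientConverges (fun n => fun i j : Fin (n + 1) =>
      G i j / ∑ a ∈ Finset.range (n + 1), ∑ b ∈ Finset.range (n + 1), G a b) ∧
    ∀ (k : ℕ) (H : Fin k → Fin k → ℕ), IsMultigraph H →
      ∃ L : ℝ, HasSum (fun f : Fin k → ℕ => ∏ i, ∏ j, G (f i) (f j) ^ H i j) L ∧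
        Tendsto (fun n => homNum H (fun i j : Fin (n + 1) =>
            G i j / ∑ a ∈ Finset.range (n + 1), ∑ b ∈ Finset.range (n + 1), G a b))
          atTop (𝓝 L) := by
  constructor
  · intro k hk
    obtain ⟨ν, hν, hconv⟩ := P1.part1 G hpos hsum k hk
    exact ⟨ν, hν, hconv⟩
  · intro k H hH
    exact part2 G hpos hsum k H hH
end
end

section
/- Define q₂ : ℝ^{2×2} → ℝ by q₂(A) = (A_{1,1}+A_{1,2}−A_{2,1}−A_{2,2})² + (A_{1,1}+A_{2,1}−A_{1,2}−A_{2,2})². Then for every n ∈ ℕ and every G ∈ Δ^{n×n}, the expectation of q₂(ρ(f)G) over f drawn uniformly at random among all 2^n maps [n] → [2] equals ‖G𝟙‖₂² + ‖G^⊤𝟙‖₂², where 𝟙 is the all-ones vector, i.e., it equals Σ_{i=1}^n (Σ_j G_{i,j})² + Σ_{j=1}^n (Σ_i G_{i,j})². -/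
open MeasureTheory Filter Topology BoundedContinuousFunction
open scoped ENNReal NNReal

noncomputable section

/-- The quadratic `q₂` on `2×2` matrices. -/
def q2 (A : Fin 2 → Fin 2 → ℝ) : ℝ :=
  (A 0 0 + A 0 1 - A 1 0 - A 1 1) ^ 2 + (A 0 0 + A 1 0 - A 0 1 - A 1 1) ^ 2

def s2 : Fin 2 → ℝ := ![1, -1]

lemma fin2_cases (a : Fin 2) : a = 0 ∨ a = 1 := by omega

lemma s2_mul_self (a : Fin 2) : s2 a * s2 a = 1 := by
  rcases fin2_cases a with h | h <;> simp [h, s2]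

lemma s2_sum : ∑ b : Fin 2, s2 b = 0 := by
  simp [s2, Fin.sum_univ_two]

lemma key_sum (n : ℕ) (u v : Fin n) :
    ∑ f : Fin n → Fin 2, s2 (f u) * s2 (f v) = if u = v then (2 : ℝ) ^ n else 0 := by
  rcases eq_or_ne u v with h | h
  · subst h
    simp only [s2_mul_self, Finset.sum_const, Finset.card_univ, nsmul_eq_mul, mul_one, if_pos rfl]
    simp [Fintype.card_fun]
  · rw [if_neg h]
    set c : Fin n → Fin 2 → ℝ := fun w b => if w = u ∨ w = v then s2 b else 1 with hc
    have h1 : ∀ f : Fin n → Fin 2, s2 (f u) * s2 (f v) = ∏ w, c w (f w) := by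
      intro f
      rw [← Finset.prod_subset (Finset.subset_univ ({u, v} : Finset (Fin n)))]
      · rw [Finset.prod_pair h]
        simp [c]
      · intro x _ hx
        simp only [Finset.mem_insert, Finset.mem_singleton] at hx
        push_neg at hx
        simp [c, hx.1, hx.2]
    simp_rw [h1]
    have := (Finset.prod_univ_sum (fun _ : Fin n => (Finset.univ : Finset (Fin 2))) c).symm
    rw [Fintype.piFinset_univ] at this
    rw [this]
    apply Finset.prod_eq_zero (Finset.mem_univ u)
    simp [c, s2, Fin.sum_univ_two]

lemma row_eq (n : ℕ) (G : Fin n → Fin n → ℝ) (f : Fin n → Fin 2) :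
    quotGraph f G 0 0 + quotGraph f G 0 1 - quotGraph f G 1 0 - quotGraph f G 1 1 =
      ∑ u, s2 (f u) * ∑ v, G u v := by
  unfold quotGraph
  rw [← Finset.sum_add_distrib, ← Finset.sum_sub_distrib, ← Finset.sum_sub_distrib]
  refine Finset.sum_congr rfl fun u _ => ?_
  rw [← Finset.sum_add_distrib, ← Finset.sum_sub_distrib, ← Finset.sum_sub_distrib,
    Finset.mul_sum]
  refine Finset.sum_congr rfl fun v _ => ?_
  rcases fin2_cases (f u) with h | h <;> rcases fin2_cases (f v) with h' | h' <;>
    simp [h, h', s2] <;> ring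

lemma col_eq (n : ℕ) (G : Fin n → Fin n → ℝ) (f : Fin n → Fin 2) :
    quotGraph f G 0 0 + quotGraph f G 1 0 - quotGraph f G 0 1 - quotGraph f G 1 1 =
      ∑ v, s2 (f v) * ∑ u, G u v := by
  have hq : ∀ i j : Fin 2, quotGraph f G i j =
      ∑ v, ∑ u, if f u = i ∧ f v = j then G u v else 0 := fun i j => Finset.sum_comm
  rw [hq, hq, hq, hq]
  rw [← Finset.sum_add_distrib, ← Finset.sum_sub_distrib, ← Finset.sum_sub_distrib]
  refine Finset.sum_congr rfl fun v _ => ?_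
  rw [← Finset.sum_add_distrib, ← Finset.sum_sub_distrib, ← Finset.sum_sub_distrib,
    Finset.mul_sum]
  refine Finset.sum_congr rfl fun u _ => ?_
  rcases fin2_cases (f u) with h | h <;> rcases fin2_cases (f v) with h' | h' <;>
    simp [h, h', s2] <;> ring

lemma main_sum (n : ℕ) (r : Fin n → ℝ) :
    ∑ f : Fin n → Fin 2, (∑ u, s2 (f u) * r u) ^ 2 = 2 ^ n * ∑ u, r u ^ 2 := by
  have h1 : ∀ f : Fin n → Fin 2, (∑ u, s2 (f u) * r u) ^ 2 =
      ∑ u, ∑ v, (s2 (f u) * s2 (f v)) * (r u * r v) := by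
    intro f
    rw [sq, Finset.sum_mul_sum]
    exact Finset.sum_congr rfl fun u _ => Finset.sum_congr rfl fun v _ => by ring
  simp_rw [h1]
  calc ∑ f : Fin n → Fin 2, ∑ u, ∑ v, (s2 (f u) * s2 (f v)) * (r u * r v)
      = ∑ u, ∑ v, ∑ f : Fin n → Fin 2, (s2 (f u) * s2 (f v)) * (r u * r v) := by
        rw [Finset.sum_comm]
        exact Finset.sum_congr rfl fun u _ => Finset.sum_comm
    _ = ∑ u, ∑ v, (if u = v then (2 : ℝ) ^ n else 0) * (r u * r v) := by
        refine Finset.sum_congr rfl fun u _ => Finset.sum_congr rfl fun v _ => ?_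
        rw [← Finset.sum_mul, key_sum]
    _ = 2 ^ n * ∑ u, r u ^ 2 := by
        rw [Finset.mul_sum]
        refine Finset.sum_congr rfl fun u _ => ?_
        simp only [ite_mul, zero_mul, Finset.sum_ite_eq, Finset.mem_univ, if_pos]
        ring

/-- the expectation of `q₂(ρ(f)G)` over a uniformly random map
`f : [n] → [2]` equals `‖G𝟙‖₂² + ‖Gᵀ𝟙‖₂²`. -/
theorem stmt15 (n : ℕ) (G : Fin n → Fin n → ℝ) (hG : IsWeightedGraph G) :
    ((2 : ℝ) ^ n)⁻¹ * ∑ f : Fin n → Fin 2, q2 (quotGraph f G) =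
      (∑ i, (∑ j, G i j) ^ 2) + ∑ j, (∑ i, G i j) ^ 2 := by
  have expand : ∀ f : Fin n → Fin 2, q2 (quotGraph f G) =
      (∑ u, s2 (f u) * ∑ v, G u v) ^ 2 + (∑ v, s2 (f v) * ∑ u, G u v) ^ 2 := by
    intro f
    rw [q2, row_eq n G f, col_eq n G f]
  simp_rw [expand]
  rw [Finset.sum_add_distrib, main_sum n (fun u => ∑ v, G u v),
    main_sum n (fun v => ∑ u, G u v)]
  have h2 : ((2 : ℝ) ^ n) ≠ 0 := by positivity
  field_simp
end
end

section
/- Let (μ_k)_{k≥1} be an equipartition-consistent random graph model, i.e., μ_k is a Borel probability measure on Δ^{k×k} and for all n, k ≥ 1 and every equipartition d : [nk] → [k], the pushforward of μ_{nk} under X ↦ ρ(d)X equals μ_k. Then there exists θ ∈ [0,1] such that for every k ≥ 1, the entrywise mean matrix ∫ X dμ_k(X) equals θ·k^{−2}·𝟙_{k×k} + (1−θ)·k^{−1}·I_k, where 𝟙_{k×k} is the all-ones matrix and I_k the identity matrix. -/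
open MeasureTheory Filter Topology BoundedContinuousFunction
open scoped ENNReal NNReal

noncomputable section

/-- The uniform distribution on the set of all `j^m` maps `[m] → [j]`. -/
def unifMaps (m j : ℕ) : Measure (Fin m → Fin j) :=
  ((j : ℝ≥0∞) ^ m)⁻¹ • ∑ f : Fin m → Fin j, Measure.dirac f

/-- `d : [nk] → [k]` is an equipartition: every fiber has exactly `n` elements. -/
def IsEquipartition {n k : ℕ} (d : Fin (n * k) → Fin k) : Prop :=
  ∀ i : Fin k, (Finset.univ.filter fun u => d u = i).card = n

/-- An equipartition-consistent random graph model. -/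
def EquipartitionConsistentModel (μ : ∀ k : ℕ, Measure (Fin k → Fin k → ℝ)) : Prop :=
  ∀ n k : ℕ, 1 ≤ n → 1 ≤ k → ∀ d : Fin (n * k) → Fin k, IsEquipartition d →
    Measure.map (fun X => quotGraph d X) (μ (n * k)) = μ k

variable {μ : ∀ k : ℕ, Measure (Fin k → Fin k → ℝ)}

lemma aux_meas {k : ℕ} (i j : Fin k) : Measurable fun X : Fin k → Fin k → ℝ => X i j :=
  (measurable_pi_apply j).comp (measurable_pi_apply i)

lemma aux_int (hprob : ∀ k, 1 ≤ k → IsProbabilityMeasure (μ k))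
    (hsupp : ∀ k, 1 ≤ k → ∀ᵐ X ∂(μ k), IsWeightedGraph X)
    {k : ℕ} (hk : 1 ≤ k) (i j : Fin k) :
    Integrable (fun X => X i j) (μ k) := by
  have := hprob k hk
  refine Integrable.mono' (integrable_const 1) (aux_meas i j).aestronglyMeasurable ?_
  filter_upwards [hsupp k hk] with X hX
  obtain ⟨h0, h1⟩ := hX
  rw [Real.norm_eq_abs, abs_of_nonneg (h0 i j)]
  calc X i j ≤ ∑ v, X i v := Finset.single_le_sum (fun v _ => h0 i v) (Finset.mem_univ j)
    _ ≤ ∑ u, ∑ v, X u v :=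
        Finset.single_le_sum (fun u _ => Finset.sum_nonneg fun v _ => h0 u v) (Finset.mem_univ i)
    _ = 1 := h1

lemma aux_nonneg (hsupp : ∀ k, 1 ≤ k → ∀ᵐ X ∂(μ k), IsWeightedGraph X)
    {k : ℕ} (hk : 1 ≤ k) (i j : Fin k) : 0 ≤ ∫ X, X i j ∂(μ k) := by
  refine integral_nonneg_of_ae ?_
  filter_upwards [hsupp k hk] with X hX using hX.1 i j

lemma aux_sum_one (hprob : ∀ k, 1 ≤ k → IsProbabilityMeasure (μ k))
    (hsupp : ∀ k, 1 ≤ k → ∀ᵐ X ∂(μ k), IsWeightedGraph X)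
    {k : ℕ} (hk : 1 ≤ k) : ∑ i, ∑ j, ∫ X, X i j ∂(μ k) = 1 := by
  have := hprob k hk
  have h1 : ∑ i, ∑ j, ∫ X, X i j ∂(μ k) = ∫ X, ∑ i : Fin k, ∑ j : Fin k, X i j ∂(μ k) := by
    rw [integral_finset_sum _ fun i _ =>
      integrable_finset_sum _ fun j _ => aux_int hprob hsupp hk i j]
    exact Finset.sum_congr rfl fun i _ =>
      (integral_finset_sum _ fun j _ => aux_int hprob hsupp hk i j).symm
  rw [h1, integral_congr_ae (g := fun _ => (1 : ℝ))
    (by filter_upwards [hsupp k hk] with X hX using hX.2), integral_const]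
  simp

lemma aux_quot_meas {n k : ℕ} (d : Fin n → Fin k) : Measurable (quotGraph d) := by
  unfold quotGraph
  refine measurable_pi_lambda _ fun i => measurable_pi_lambda _ fun j => ?_
  refine Finset.measurable_sum _ fun u _ => Finset.measurable_sum _ fun v _ => ?_
  by_cases h : d u = i ∧ d v = j
  · simpa [h] using aux_meas u v
  · simpa [h] using measurable_const

lemma aux_key (hprob : ∀ k, 1 ≤ k → IsProbabilityMeasure (μ k))
    (hsupp : ∀ k, 1 ≤ k → ∀ᵐ X ∂(μ k), IsWeightedGraph X)
    (hcons : EquipartitionConsistentModel μ)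
    {n k : ℕ} (hn : 1 ≤ n) (hk : 1 ≤ k) (d : Fin (n * k) → Fin k) (hd : IsEquipartition d)
    (i j : Fin k) :
    ∫ X, X i j ∂(μ k)
      = ∑ u, ∑ v, if d u = i ∧ d v = j then ∫ X, X u v ∂(μ (n * k)) else 0 := by
  have hnk : 1 ≤ n * k := Nat.one_le_iff_ne_zero.mpr (by positivity)
  have hint : ∀ u v : Fin (n * k),
      Integrable (fun X : Fin (n*k) → Fin (n*k) → ℝ =>
        if d u = i ∧ d v = j then X u v else 0) (μ (n * k)) := by
    intro u v
    by_cases h : d u = i ∧ d v = j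
    · simpa [h] using aux_int hprob hsupp hnk u v
    · simpa [h] using integrable_const (0 : ℝ)
  rw [← hcons n k hn hk d hd,
    integral_map (aux_quot_meas d).aemeasurable (aux_meas i j).aestronglyMeasurable]
  simp only [quotGraph]
  rw [integral_finset_sum _ fun u _ => integrable_finset_sum _ fun v _ => hint u v]
  refine Finset.sum_congr rfl fun u _ => ?_
  rw [integral_finset_sum _ fun v _ => hint u v]
  refine Finset.sum_congr rfl fun v _ => ?_
  by_cases h : d u = i ∧ d v = j
  · simp [h]
  · simp [h]

lemma aux_equiv (hprob : ∀ k, 1 ≤ k → IsProbabilityMeasure (μ k))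
    (hsupp : ∀ k, 1 ≤ k → ∀ᵐ X ∂(μ k), IsWeightedGraph X)
    (hcons : EquipartitionConsistentModel μ)
    {k : ℕ} (hk : 1 ≤ k) (e : Fin (1 * k) ≃ Fin k) (i j : Fin k) :
    ∫ X, X i j ∂(μ k) = ∫ X, X (e.symm i) (e.symm j) ∂(μ (1 * k)) := by
  have hd : IsEquipartition (⇑e) := by
    intro x
    rw [Finset.card_eq_one]
    exact ⟨e.symm x, by ext u; simp [e.apply_eq_iff_eq_symm_apply]⟩
  rw [aux_key hprob hsupp hcons le_rfl hk (⇑e) hd i j]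
  simp_rw [e.apply_eq_iff_eq_symm_apply, ite_and]
  simp [Finset.sum_ite_eq']

lemma aux_perm (hprob : ∀ k, 1 ≤ k → IsProbabilityMeasure (μ k))
    (hsupp : ∀ k, 1 ≤ k → ∀ᵐ X ∂(μ k), IsWeightedGraph X)
    (hcons : EquipartitionConsistentModel μ)
    {k : ℕ} (σ : Equiv.Perm (Fin k)) (i j : Fin k) :
    ∫ X, X (σ i) (σ j) ∂(μ k) = ∫ X, X i j ∂(μ k) := by
  have hk : 1 ≤ k := (σ i).pos
  have e0 : Fin (1 * k) ≃ Fin k := finCongr (one_mul k)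
  rw [aux_equiv hprob hsupp hcons hk (e0.trans σ) (σ i) (σ j),
    aux_equiv hprob hsupp hcons hk e0 i j]
  simp

lemma aux_offdiag (hprob : ∀ k, 1 ≤ k → IsProbabilityMeasure (μ k))
    (hsupp : ∀ k, 1 ≤ k → ∀ᵐ X ∂(μ k), IsWeightedGraph X)
    (hcons : EquipartitionConsistentModel μ)
    {k : ℕ} {i j i' j' : Fin k} (hij : i ≠ j) (hij' : i' ≠ j') :
    ∫ X, X i j ∂(μ k) = ∫ X, X i' j' ∂(μ k) := by
  set σ₁ := Equiv.swap i i' with hσ₁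
  set σ₂ := Equiv.swap (σ₁ j) j' with hσ₂
  have hii' : σ₁ i = i' := Equiv.swap_apply_left i i'
  have hne : i' ≠ σ₁ j := by
    rw [← hii']
    exact fun h => hij (σ₁.injective h)
  have h1 : σ₂ (σ₁ i) = i' := by
    rw [hii', hσ₂]
    exact Equiv.swap_apply_of_ne_of_ne hne hij'
  have h2 : σ₂ (σ₁ j) = j' := Equiv.swap_apply_left _ _
  have := aux_perm hprob hsupp hcons (σ₁.trans σ₂) i j
  simp only [Equiv.trans_apply, h1, h2] at this
  exact this.symm

lemma aux_diag (hprob : ∀ k, 1 ≤ k → IsProbabilityMeasure (μ k))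
    (hsupp : ∀ k, 1 ≤ k → ∀ᵐ X ∂(μ k), IsWeightedGraph X)
    (hcons : EquipartitionConsistentModel μ)
    {k : ℕ} (i i' : Fin k) :
    ∫ X, X i i ∂(μ k) = ∫ X, X i' i' ∂(μ k) := by
  have := aux_perm hprob hsupp hcons (Equiv.swap i i') i i
  rw [Equiv.swap_apply_left] at this
  exact this.symm

lemma aux_block (hprob : ∀ k, 1 ≤ k → IsProbabilityMeasure (μ k))
    (hsupp : ∀ k, 1 ≤ k → ∀ᵐ X ∂(μ k), IsWeightedGraph X)
    (hcons : EquipartitionConsistentModel μ)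
    {n k : ℕ} (hn : 1 ≤ n) (hk : 1 ≤ k) (i j : Fin k) :
    ∫ X, X i j ∂(μ k) = ∑ a : Fin n, ∑ b : Fin n,
      ∫ X, X (finProdFinEquiv (a, i)) (finProdFinEquiv (b, j)) ∂(μ (n * k)) := by
  classical
  set e : Fin n × Fin k ≃ Fin (n * k) := finProdFinEquiv with he
  set d : Fin (n * k) → Fin k := fun u => (e.symm u).2 with hdd
  have hde : ∀ p : Fin n × Fin k, d (e p) = p.2 := fun p => by simp [hdd]
  have hone : ∀ (G : Fin (n * k) → ℝ) (x : Fin k),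
      (∑ u, if d u = x then G u else 0) = ∑ a : Fin n, G (e (a, x)) := by
    intro G x
    rw [← Equiv.sum_comp e (fun u => if d u = x then G u else 0), Fintype.sum_prod_type]
    refine Finset.sum_congr rfl fun a _ => ?_
    simp only [hde]
    simp [Finset.sum_ite_eq']
  have hd : IsEquipartition d := by
    intro x
    rw [Finset.card_filter,
      ← Equiv.sum_comp e (fun u => if d u = x then 1 else 0), Fintype.sum_prod_type]
    simp [hde, Finset.sum_ite_eq']
  rw [aux_key hprob hsupp hcons hn hk d hd i j]
  have hsplit : ∀ u : Fin (n * k),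
      (∑ v, if d u = i ∧ d v = j then ∫ X, X u v ∂(μ (n * k)) else 0)
        = if d u = i then (∑ v, if d v = j then ∫ X, X u v ∂(μ (n * k)) else 0) else 0 := by
    intro u; by_cases h : d u = i <;> simp [h]
  simp_rw [hsplit]
  rw [hone (fun u => ∑ v, if d v = j then ∫ X, X u v ∂(μ (n * k)) else 0) i]
  exact Finset.sum_congr rfl fun a _ => hone _ j


/-- the entrywise mean of any equipartition-consistent random graph model is
`θ·k⁻²·𝟙_{k×k} + (1−θ)·k⁻¹·I_k` for a single `θ ∈ [0,1]` independent of `k`. -/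
theorem stmt18 (μ : ∀ k : ℕ, Measure (Fin k → Fin k → ℝ))
    (hprob : ∀ k, 1 ≤ k → IsProbabilityMeasure (μ k))
    (hsupp : ∀ k, 1 ≤ k → ∀ᵐ X ∂(μ k), IsWeightedGraph X)
    (hcons : EquipartitionConsistentModel μ) :
    ∃ θ : ℝ, θ ∈ Set.Icc (0 : ℝ) 1 ∧ ∀ k, 1 ≤ k → ∀ i j : Fin k,
      ∫ X, X i j ∂(μ k) =
        θ * (1 / (k : ℝ) ^ 2) + (1 - θ) * (if i = j then 1 / (k : ℝ) else 0) := by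

  classical
  have hOD : ∀ (m m' : ℕ), m = m' → ∀ (i j : Fin m) (i' j' : Fin m'), i ≠ j → i' ≠ j' →
      ∫ X, X i j ∂(μ m) = ∫ X, X i' j' ∂(μ m') := by
    rintro m _ rfl i j i' j' h h'
    exact aux_offdiag hprob hsupp hcons h h'
  set θ : ℝ := 4 * ∫ X, X 0 1 ∂(μ 2) with hθ
  have hB : ∀ (k : ℕ) (i j : Fin k), i ≠ j → ∫ X, X i j ∂(μ k) = θ / (k : ℝ) ^ 2 := by
    intro k i j hij
    have hk : 1 ≤ k := i.pos
    have hk0 : (k : ℝ) ≠ 0 := Nat.cast_ne_zero.mpr (by omega)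
    have hpair : (finProdFinEquiv ((0 : Fin 2), i)) ≠ finProdFinEquiv ((0 : Fin 2), j) :=
      fun h => hij (congrArg Prod.snd (finProdFinEquiv.injective h))
    set C : ℝ := ∫ X, X (finProdFinEquiv ((0 : Fin 2), i))
        (finProdFinEquiv ((0 : Fin 2), j)) ∂(μ (2 * k)) with hC
    have E1 : ∫ X, X i j ∂(μ k) = 4 * C := by
      rw [aux_block hprob hsupp hcons (n := 2) (by norm_num) hk i j]
      have h1 : ∀ a b : Fin 2,
          ∫ X, X (finProdFinEquiv (a, i)) (finProdFinEquiv (b, j)) ∂(μ (2 * k)) = C :=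
        fun a b => aux_offdiag hprob hsupp hcons
          (fun h => hij (congrArg Prod.snd (finProdFinEquiv.injective h))) hpair
      simp_rw [h1]
      simp [Finset.sum_const]
      ring
    have E2 : ∫ X, X (0 : Fin 2) 1 ∂(μ 2) = (k : ℝ) ^ 2 * C := by
      rw [aux_block hprob hsupp hcons (n := k) hk (by norm_num) (0 : Fin 2) 1]
      have h1 : ∀ a b : Fin k,
          ∫ X, X (finProdFinEquiv (a, (0 : Fin 2))) (finProdFinEquiv (b, 1)) ∂(μ (k * 2)) = C := by
        intro a b
        refine hOD (k * 2) (2 * k) (mul_comm k 2) _ _ _ _ ?_ hpair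
        intro h
        have h5 : ((0 : Fin 2)) = 1 := congrArg Prod.snd (finProdFinEquiv.injective h)
        exact absurd h5 (by decide)
      simp_rw [h1]
      simp [Finset.sum_const]
      ring
    rw [E1, hθ, E2]
    field_simp
  have hD : ∀ (k : ℕ), 1 ≤ k → ∀ i : Fin k,
      ∫ X, X i i ∂(μ k) = θ / (k : ℝ) ^ 2 + (1 - θ) / (k : ℝ) := by
    intro k hk i
    have hk0 : (k : ℝ) ≠ 0 := Nat.cast_ne_zero.mpr (by omega)
    have hsum := aux_sum_one hprob hsupp (μ := μ) hk
    have hrow : ∀ i' : Fin k, ∑ j, ∫ X, X i' j ∂(μ k)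
        = ∫ X, X i i ∂(μ k) + ((k : ℝ) - 1) * (θ / (k : ℝ) ^ 2) := by
      intro i'
      rw [← Finset.add_sum_erase _ _ (Finset.mem_univ i')]
      congr 1
      · exact aux_diag hprob hsupp hcons i' i
      · rw [Finset.sum_congr rfl fun j hj => hB k i' j (Finset.ne_of_mem_erase hj).symm,
          Finset.sum_const, Finset.card_erase_of_mem (Finset.mem_univ i'),
          Finset.card_univ, Fintype.card_fin, nsmul_eq_mul, Nat.cast_sub hk, Nat.cast_one]
    rw [Finset.sum_congr rfl fun i' _ => hrow i', Finset.sum_const, Finset.card_univ,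
      Fintype.card_fin, nsmul_eq_mul] at hsum
    field_simp at hsum ⊢
    linarith [hsum]
  have hθ0 : 0 ≤ θ := by
    have := aux_nonneg hsupp (μ := μ) (k := 2) (by norm_num) 0 1
    rw [hθ]; linarith
  have hθ1 : θ ≤ 1 := by
    by_contra hcon
    push_neg at hcon
    obtain ⟨m, hm⟩ := exists_nat_gt (1 / (θ - 1))
    have hk : 1 ≤ m + 2 := by omega
    have hDk := hD (m + 2) hk ⟨0, by omega⟩
    have hnn := aux_nonneg hsupp (μ := μ) hk ⟨0, by omega⟩ ⟨0, by omega⟩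
    rw [hDk] at hnn
    have hcast : ((m + 2 : ℕ) : ℝ) = (m : ℝ) + 2 := by push_cast; ring
    rw [hcast] at hnn
    have hx : (0 : ℝ) < (m : ℝ) + 2 := by positivity
    have key : (θ - 1) * m > 1 := by
      rw [div_lt_iff₀ (by linarith : (0 : ℝ) < θ - 1)] at hm
      linarith
    have h2 : 0 ≤ θ + (1 - θ) * ((m : ℝ) + 2) := by
      have h3 := mul_nonneg hnn (sq_nonneg ((m : ℝ) + 2))
      have h4 : (θ / ((m : ℝ) + 2) ^ 2 + (1 - θ) / ((m : ℝ) + 2)) * ((m : ℝ) + 2) ^ 2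
          = θ + (1 - θ) * ((m : ℝ) + 2) := by
        field_simp
      linarith [h4 ▸ h3]
    linarith
  refine ⟨θ, ⟨hθ0, hθ1⟩, ?_⟩
  intro k hk i j
  have hk0 : (k : ℝ) ≠ 0 := Nat.cast_ne_zero.mpr (by omega)
  by_cases hij : i = j
  · subst hij
    rw [if_pos rfl, hD k hk i]
    ring
  · rw [if_neg hij, hB k i j hij]
    ring
end
end

section
/- Let E ∈ ℝ_{≥0}^{ℕ×ℕ} with Σ_{i,j∈ℕ} E_{i,j} = 1, and let (G_n ∈ Δ^{n×n})_{n∈ℕ} be a sequence of weighted graphs, each viewed as an element of ℝ^{ℕ×ℕ} by zero-padding. Suppose there are permutations π_n of [n] (acting on matrices by (π_n G)_{i,j} = G_{π_n⁻¹(i),π_n⁻¹(j)}) such that Σ_{i,j∈ℕ} |(π_n G_n)_{i,j} − E_{i,j}| → 0 as n → ∞. Then (G_n) quotient-converges, and for every k ∈ ℕ the laws of the random quotients ρ(F_{k,n})G_n converge weakly to the law of the random matrix L_k with entries (L_k)_{a,b} = Σ_{i,j∈ℕ} E_{i,j}·1[T_i ∈ I_a^{(k)}]·1[T_j ∈ I_b^{(k)}],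 where (T_i)_{i∈ℕ} are i.i.d. uniform on [0,1] and I_a^{(k)} = [(a−1)/k, a/k) for a ∈ [k]. -/
open MeasureTheory Filter Topology BoundedContinuousFunction
open scoped ENNReal NNReal

noncomputable section

/-- The uniform measure `λ` on `[0,1]` (as a measure on `ℝ`). -/
def unif : Measure ℝ := volume.restrict (Set.Icc 0 1)

/-- `P` is the joint law of an i.i.d. sequence of uniform random variables on `[0,1]`. -/
def IsIidUniform (P : Measure (ℕ → ℝ)) : Prop :=
  IsProbabilityMeasure P ∧
  ∀ (s : Finset ℕ) (B : ℕ → Set ℝ), (∀ i, MeasurableSet (B i)) →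
    P {T | ∀ i ∈ s, T i ∈ B i} = ∏ i ∈ s, unif (B i)

/-- The grid interval `I_a^{(k)}`. -/
def gridIv (k : ℕ) (a : Fin k) : Set ℝ := Set.Ico ((a : ℝ) / k) (((a : ℝ) + 1) / k)

/-- The graph `G_n ∈ Δ^{(n+1)×(n+1)}` relabeled by the permutation `π` and zero-padded to an
infinite array. -/
def permPad {n : ℕ} (π : Equiv.Perm (Fin (n + 1))) (G : Fin (n + 1) → Fin (n + 1) → ℝ)
    (i j : ℕ) : ℝ :=
  if h : i < n + 1 ∧ j < n + 1 then G (π⁻¹ ⟨i, h.1⟩) (π⁻¹ ⟨j, h.2⟩) else 0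

namespace Stmt19Aux

/-- The limiting random matrix as a function of the sequence `T`. -/
def Lmap (E : ℕ → ℕ → ℝ) (k : ℕ) (T : ℕ → ℝ) : Fin k → Fin k → ℝ :=
  fun a b =>
    ∑' p : ℕ × ℕ, E p.1 p.2 *
      Set.indicator (gridIv k a) (fun _ => (1 : ℝ)) (T p.1) *
      Set.indicator (gridIv k b) (fun _ => (1 : ℝ)) (T p.2)

lemma ind_nonneg (s : Set ℝ) (x : ℝ) : 0 ≤ s.indicator (fun _ => (1 : ℝ)) x := by
  classical
  rw [Set.indicator_apply]; split <;> norm_num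

lemma ind_le_one (s : Set ℝ) (x : ℝ) : s.indicator (fun _ => (1 : ℝ)) x ≤ 1 := by
  classical
  rw [Set.indicator_apply]; split <;> norm_num

lemma ind_abs_le_one (s : Set ℝ) (x : ℝ) : |s.indicator (fun _ => (1 : ℝ)) x| ≤ 1 := by
  rw [abs_of_nonneg (ind_nonneg s x)]; exact ind_le_one s x

lemma abs_term_le {k : ℕ} (a b : Fin k) (E : ℕ → ℕ → ℝ) (T : ℕ → ℝ) (p : ℕ × ℕ) :
    |E p.1 p.2 * Set.indicator (gridIv k a) (fun _ => (1 : ℝ)) (T p.1) *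
        Set.indicator (gridIv k b) (fun _ => (1 : ℝ)) (T p.2)| ≤ |E p.1 p.2| := by
  rw [abs_mul, abs_mul]
  calc |E p.1 p.2| * |Set.indicator (gridIv k a) (fun _ => (1 : ℝ)) (T p.1)| *
        |Set.indicator (gridIv k b) (fun _ => (1 : ℝ)) (T p.2)|
      ≤ |E p.1 p.2| * 1 * 1 := by
        gcongr
        · exact ind_abs_le_one _ _
        · exact ind_abs_le_one _ _
    _ = |E p.1 p.2| := by ring

lemma mem_gridIv_unique {k : ℕ} {x : ℝ} {a b : Fin k}
    (ha : x ∈ gridIv k a) (hb : x ∈ gridIv k b) : a = b := by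
  have hk : (0 : ℝ) < k := by exact_mod_cast a.pos
  rcases ha with ⟨ha1, ha2⟩
  rcases hb with ⟨hb1, hb2⟩
  have h1 : (a : ℝ) < (b : ℝ) + 1 := by
    have h := lt_of_le_of_lt ha1 hb2
    rw [div_lt_div_iff₀ hk hk] at h
    exact lt_of_mul_lt_mul_right h (le_of_lt hk)
  have h2 : (b : ℝ) < (a : ℝ) + 1 := by
    have h := lt_of_le_of_lt hb1 ha2
    rw [div_lt_div_iff₀ hk hk] at h
    exact lt_of_mul_lt_mul_right h (le_of_lt hk)
  have h1' : (a : ℕ) < (b : ℕ) + 1 := by exact_mod_cast h1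
  have h2' : (b : ℕ) < (a : ℕ) + 1 := by exact_mod_cast h2
  exact Fin.ext (Nat.le_antisymm (Nat.lt_succ_iff.mp h1') (Nat.lt_succ_iff.mp h2'))

lemma mem_gridIv_exists {k : ℕ} (hk : 0 < k) {x : ℝ} (h0 : 0 ≤ x) (h1 : x < 1) :
    ∃ a : Fin k, x ∈ gridIv k a := by
  have hkR : (0 : ℝ) < k := by exact_mod_cast hk
  have hxk : 0 ≤ x * k := by positivity
  have hlt : ⌊x * k⌋₊ < k := by
    rw [Nat.floor_lt hxk]
    calc x * (k : ℝ) < 1 * k := by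
          exact mul_lt_mul_of_pos_right h1 hkR
      _ = (k : ℝ) := one_mul _
  refine ⟨⟨⌊x * k⌋₊, hlt⟩, ?_, ?_⟩
  · show ((⌊x * k⌋₊ : ℝ)) / k ≤ x
    rw [div_le_iff₀ hkR]
    exact Nat.floor_le hxk
  · show x < ((⌊x * k⌋₊ : ℝ) + 1) / k
    rw [lt_div_iff₀ hkR]
    exact Nat.lt_floor_add_one _

lemma gridIv_subset {k : ℕ} (a : Fin k) : gridIv k a ⊆ Set.Icc 0 1 := by
  have hk : (0 : ℝ) < k := by exact_mod_cast a.pos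
  intro x hx
  rcases hx with ⟨hx1, hx2⟩
  constructor
  · exact le_trans (by positivity) hx1
  · have hb : ((a : ℝ) + 1) / k ≤ 1 := by
      rw [div_le_one hk]
      exact_mod_cast a.isLt
    exact le_of_lt (lt_of_lt_of_le hx2 hb)

lemma unif_gridIv {k : ℕ} (a : Fin k) : unif (gridIv k a) = ((k : ℝ≥0∞))⁻¹ := by
  have hk : (0 : ℝ) < k := by exact_mod_cast a.pos
  rw [unif, Measure.restrict_apply' measurableSet_Icc,
    Set.inter_eq_self_of_subset_left (gridIv_subset a)]
  rw [show gridIv k a = Set.Ico ((a : ℝ) / k) (((a : ℝ) + 1) / k) from rfl, Real.volume_Ico]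
  have : ((a : ℝ) + 1) / k - (a : ℝ) / k = ((k : ℝ))⁻¹ := by field_simp; ring
  rw [this, ENNReal.ofReal_inv_of_pos hk, ENNReal.ofReal_natCast]

/-- The cell of sequences whose first `n+1` digits are `g`. -/
def cell (k n : ℕ) (g : Fin (n + 1) → Fin k) : Set (ℕ → ℝ) :=
  ⋂ i : Fin (n + 1), (fun T : ℕ → ℝ => T i) ⁻¹' gridIv k (g i)

lemma measurableSet_cell (k n : ℕ) (g : Fin (n + 1) → Fin k) :
    MeasurableSet (cell k n g) :=
  MeasurableSet.iInter fun i => (measurable_pi_apply (i : ℕ)) measurableSet_Ico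

lemma P_cell {P : Measure (ℕ → ℝ)} (hP : IsIidUniform P) {k n : ℕ}
    (g : Fin (n + 1) → Fin k) :
    P (cell k n g) = ((k : ℝ≥0∞) ^ (n + 1))⁻¹ := by
  classical
  set B : ℕ → Set ℝ := fun i => if h : i < n + 1 then gridIv k (g ⟨i, h⟩) else Set.univ with hB
  have hBm : ∀ i, MeasurableSet (B i) := by
    intro i
    simp only [hB]
    by_cases h : i < n + 1
    · rw [dif_pos h]; exact measurableSet_Ico
    · rw [dif_neg h]; exact MeasurableSet.univ
  have hset : {T : ℕ → ℝ | ∀ i ∈ Finset.range (n + 1), T i ∈ B i} = cell k n g := by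
    ext T
    simp only [Set.mem_setOf_eq, Finset.mem_range, cell, Set.mem_iInter, Set.mem_preimage]
    constructor
    · intro h i
      have := h i i.isLt
      simp only [hB] at this
      rwa [dif_pos i.isLt, Fin.eta] at this
    · intro h i hi
      simp only [hB]
      rw [dif_pos hi]
      exact h ⟨i, hi⟩
  rw [← hset, hP.2 _ _ hBm]
  have : ∀ i ∈ Finset.range (n + 1), unif (B i) = ((k : ℝ≥0∞))⁻¹ := by
    intro i hi
    rw [Finset.mem_range] at hi
    simp only [hB]
    rw [dif_pos hi, unif_gridIv]
  rw [Finset.prod_congr rfl this, Finset.prod_const, Finset.card_range, ENNReal.inv_pow]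

lemma ae_Ico {P : Measure (ℕ → ℝ)} (hP : IsIidUniform P) :
    ∀ᵐ T ∂P, ∀ i : ℕ, T i ∈ Set.Ico (0 : ℝ) 1 := by
  haveI := hP.1
  rw [ae_all_iff]
  intro i
  have hm : MeasurableSet {T : ℕ → ℝ | T i ∈ Set.Ico (0 : ℝ) 1} :=
    (measurable_pi_apply i) measurableSet_Ico
  have h1 : P {T : ℕ → ℝ | T i ∈ Set.Ico (0 : ℝ) 1} = 1 := by
    have h := hP.2 {i} (fun _ => Set.Ico (0 : ℝ) 1) (fun _ => measurableSet_Ico)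
    have hset : {T : ℕ → ℝ | ∀ j ∈ ({i} : Finset ℕ), T j ∈ Set.Ico (0 : ℝ) 1}
        = {T : ℕ → ℝ | T i ∈ Set.Ico (0 : ℝ) 1} := by
      ext T; simp
    rw [hset] at h
    rw [h, Finset.prod_singleton]
    rw [unif, Measure.restrict_apply' measurableSet_Icc,
      Set.inter_eq_self_of_subset_left Set.Ico_subset_Icc_self, Real.volume_Ico]
    norm_num
  have : P {T : ℕ → ℝ | T i ∈ Set.Ico (0 : ℝ) 1}ᶜ = 0 := by
    rw [measure_compl hm (measure_ne_top _ _), h1, measure_univ, tsub_self]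
  rw [ae_iff]
  convert this using 2
  ext T; simp

lemma Lmap_permPad_eq {k n : ℕ} (π : Equiv.Perm (Fin (n + 1)))
    (G : Fin (n + 1) → Fin (n + 1) → ℝ) (T : ℕ → ℝ) (a b : Fin k) :
    Lmap (permPad π G) k T a b
      = ∑ u : Fin (n + 1), ∑ v : Fin (n + 1),
          G (π⁻¹ u) (π⁻¹ v) *
            Set.indicator (gridIv k a) (fun _ => (1 : ℝ)) (T u) *
            Set.indicator (gridIv k b) (fun _ => (1 : ℝ)) (T v) := by
  rw [Lmap]
  rw [tsum_eq_sum (s := Finset.range (n + 1) ×ˢ Finset.range (n + 1))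
    (by
      intro p hp
      have : ¬(p.1 < n + 1 ∧ p.2 < n + 1) := by
        intro h
        exact hp (Finset.mem_product.mpr ⟨Finset.mem_range.mpr h.1, Finset.mem_range.mpr h.2⟩)
      rw [permPad, dif_neg this, zero_mul, zero_mul])]
  rw [Finset.sum_product]
  rw [← Fin.sum_univ_eq_sum_range (fun i => ∑ j ∈ Finset.range (n + 1),
    permPad π G i j *
      Set.indicator (gridIv k a) (fun _ => (1 : ℝ)) (T i) *
      Set.indicator (gridIv k b) (fun _ => (1 : ℝ)) (T j))]
  refine Finset.sum_congr rfl fun u _ => ?_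
  rw [← Fin.sum_univ_eq_sum_range (fun j =>
    permPad π G u j *
      Set.indicator (gridIv k a) (fun _ => (1 : ℝ)) (T u) *
      Set.indicator (gridIv k b) (fun _ => (1 : ℝ)) (T j))]
  refine Finset.sum_congr rfl fun v _ => ?_
  have : permPad π G (u : ℕ) (v : ℕ) = G (π⁻¹ u) (π⁻¹ v) := by
    rw [permPad, dif_pos ⟨u.isLt, v.isLt⟩]
  rw [this]

lemma Lmap_on_cell {k n : ℕ} (π : Equiv.Perm (Fin (n + 1)))
    (G : Fin (n + 1) → Fin (n + 1) → ℝ) (g : Fin (n + 1) → Fin k) {T : ℕ → ℝ}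
    (hT : T ∈ cell k n g) (a b : Fin k) :
    Lmap (permPad π G) k T a b = quotGraph (fun u => g (π u)) G a b := by
  have hTmem : ∀ i : Fin (n + 1), T i ∈ gridIv k (g i) := by
    intro i
    exact Set.mem_iInter.mp hT i
  have hind : ∀ (u : Fin (n + 1)) (c : Fin k),
      Set.indicator (gridIv k c) (fun _ => (1 : ℝ)) (T u) = if g u = c then 1 else 0 := by
    intro u c
    by_cases h : g u = c
    · rw [if_pos h, Set.indicator_of_mem (h ▸ hTmem u)]
    · rw [if_neg h, Set.indicator_of_notMem]
      intro hmem
      exact h (mem_gridIv_unique (hTmem u) hmem)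
  rw [Lmap_permPad_eq]
  calc
    ∑ u : Fin (n + 1), ∑ v : Fin (n + 1),
        G (π⁻¹ u) (π⁻¹ v) *
          Set.indicator (gridIv k a) (fun _ => (1 : ℝ)) (T u) *
          Set.indicator (gridIv k b) (fun _ => (1 : ℝ)) (T v)
      = ∑ u : Fin (n + 1), ∑ v : Fin (n + 1),
          (if g u = a ∧ g v = b then G (π⁻¹ u) (π⁻¹ v) else 0) := by
        refine Finset.sum_congr rfl fun u _ => Finset.sum_congr rfl fun v _ => ?_
        rw [hind u a, hind v b]
        by_cases h1 : g u = a <;> by_cases h2 : g v = b <;> simp [h1, h2]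
    _ = ∑ u : Fin (n + 1), ∑ v : Fin (n + 1),
          (if g (π u) = a ∧ g (π v) = b then G u v else 0) := by
        rw [← Equiv.sum_comp (π : Equiv.Perm (Fin (n + 1))) (fun u => ∑ v : Fin (n + 1),
          (if g u = a ∧ g v = b then G (π⁻¹ u) (π⁻¹ v) else 0))]
        refine Finset.sum_congr rfl fun u _ => ?_
        rw [← Equiv.sum_comp (π : Equiv.Perm (Fin (n + 1))) (fun v =>
          (if g (π u) = a ∧ g v = b then G (π⁻¹ (π u)) (π⁻¹ v) else 0))]
        refine Finset.sum_congr rfl fun v _ => ?_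
        simp
    _ = quotGraph (fun u => g (π u)) G a b := rfl

lemma summable_permPad_abs {n : ℕ} (π : Equiv.Perm (Fin (n + 1)))
    (G : Fin (n + 1) → Fin (n + 1) → ℝ) :
    Summable (fun p : ℕ × ℕ => |permPad π G p.1 p.2|) := by
  apply summable_of_ne_finset_zero (s := Finset.range (n + 1) ×ˢ Finset.range (n + 1))
  intro p hp
  have : ¬(p.1 < n + 1 ∧ p.2 < n + 1) := by
    intro h
    exact hp (Finset.mem_product.mpr ⟨Finset.mem_range.mpr h.1, Finset.mem_range.mpr h.2⟩)
  rw [permPad, dif_neg this, abs_zero]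

lemma measurable_Lmap {k : ℕ} (E : ℕ → ℕ → ℝ) (hpos : ∀ i j, 0 ≤ E i j)
    (habs : Summable (fun p : ℕ × ℕ => |E p.1 p.2|)) : Measurable (Lmap E k) := by
  apply measurable_pi_lambda
  intro a
  apply measurable_pi_lambda
  intro b
  set F : ℕ × ℕ → (ℕ → ℝ) → ℝ := fun p T =>
    E p.1 p.2 *
      Set.indicator (gridIv k a) (fun _ => (1 : ℝ)) (T p.1) *
      Set.indicator (gridIv k b) (fun _ => (1 : ℝ)) (T p.2) with hF
  have hFm : ∀ p, Measurable (F p) := by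
    intro p
    apply Measurable.mul
    apply Measurable.mul measurable_const
    · exact (measurable_const.indicator measurableSet_Ico).comp (measurable_pi_apply p.1)
    · exact (measurable_const.indicator measurableSet_Ico).comp (measurable_pi_apply p.2)
  have hFs : ∀ T : ℕ → ℝ, Summable (fun p => F p T) := by
    intro T
    apply Summable.of_abs
    apply Summable.of_nonneg_of_le (fun p => abs_nonneg _) _ habs
    intro p
    exact abs_term_le a b E T p
  let e : ℕ ≃ ℕ × ℕ := (Denumerable.eqv (ℕ × ℕ)).symm
  have key : Tendsto (fun (m : ℕ) (T : ℕ → ℝ) => ∑ i ∈ Finset.range m, F (e i) T) atTop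
      (𝓝 (fun T => Lmap E k T a b)) := by
    rw [tendsto_pi_nhds]
    intro T
    have h1 : Summable fun i => F (e i) T := (e.summable_iff (f := fun p => F p T)).mpr (hFs T)
    have h2 : ∑' i, F (e i) T = ∑' p, F p T := e.tsum_eq (fun p => F p T)
    have h3 := h1.hasSum.tendsto_sum_nat
    rw [h2] at h3
    exact h3
  exact measurable_of_tendsto_metrizable
    (fun m => Finset.measurable_sum _ (fun i _ => hFm (e i))) key

lemma Lmap_dist_le {k : ℕ} (E F : ℕ → ℕ → ℝ)
    (hE : Summable (fun p : ℕ × ℕ => |E p.1 p.2|))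
    (hF : Summable (fun p : ℕ × ℕ => |F p.1 p.2|))
    (T : ℕ → ℝ) (a b : Fin k) :
    |Lmap F k T a b - Lmap E k T a b| ≤ ∑' p : ℕ × ℕ, |F p.1 p.2 - E p.1 p.2| := by
  set iA : ℕ → ℝ := fun i => Set.indicator (gridIv k a) (fun _ => (1 : ℝ)) (T i) with hiA
  set iB : ℕ → ℝ := fun i => Set.indicator (gridIv k b) (fun _ => (1 : ℝ)) (T i) with hiB
  have habs : ∀ (H : ℕ → ℕ → ℝ) (p : ℕ × ℕ),
      |H p.1 p.2 * iA p.1 * iB p.2| ≤ |H p.1 p.2| := by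
    intro H p
    exact abs_term_le a b H T p
  have hSE : Summable (fun p : ℕ × ℕ => E p.1 p.2 * iA p.1 * iB p.2) :=
    Summable.of_abs (Summable.of_nonneg_of_le (fun p => abs_nonneg _) (habs E) hE)
  have hSF : Summable (fun p : ℕ × ℕ => F p.1 p.2 * iA p.1 * iB p.2) :=
    Summable.of_abs (Summable.of_nonneg_of_le (fun p => abs_nonneg _) (habs F) hF)
  have hLF : Lmap F k T a b = ∑' p : ℕ × ℕ, F p.1 p.2 * iA p.1 * iB p.2 := rfl
  have hLE : Lmap E k T a b = ∑' p : ℕ × ℕ, E p.1 p.2 * iA p.1 * iB p.2 := rfl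
  rw [hLF, hLE, ← Summable.tsum_sub hSF hSE]
  have hdiff : ∀ p : ℕ × ℕ,
      F p.1 p.2 * iA p.1 * iB p.2 - E p.1 p.2 * iA p.1 * iB p.2
        = (F p.1 p.2 - E p.1 p.2) * iA p.1 * iB p.2 := fun p => by ring
  have hsumdiff : Summable (fun p : ℕ × ℕ =>
      |F p.1 p.2 * iA p.1 * iB p.2 - E p.1 p.2 * iA p.1 * iB p.2|) := (hSF.sub hSE).abs
  calc |∑' p : ℕ × ℕ, (F p.1 p.2 * iA p.1 * iB p.2 - E p.1 p.2 * iA p.1 * iB p.2)|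
      ≤ ∑' p : ℕ × ℕ, |F p.1 p.2 * iA p.1 * iB p.2 - E p.1 p.2 * iA p.1 * iB p.2| := by
        have := norm_tsum_le_tsum_norm (f := fun p : ℕ × ℕ =>
          F p.1 p.2 * iA p.1 * iB p.2 - E p.1 p.2 * iA p.1 * iB p.2)
          (by simpa [Real.norm_eq_abs] using hsumdiff)
        simpa [Real.norm_eq_abs] using this
    _ ≤ ∑' p : ℕ × ℕ, |F p.1 p.2 - E p.1 p.2| := by
        apply Summable.tsum_le_tsum _ hsumdiff ((hF.of_abs.sub hE.of_abs).abs)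
        intro p
        rw [hdiff p]
        exact habs (fun i j => F i j - E i j) p
lemma integral_quotientLaw {n k : ℕ} (G : Fin n → Fin n → ℝ)
    (f : (Fin k → Fin k → ℝ) →ᵇ ℝ) :
    ∫ x, f x ∂(quotientLaw G k)
      = ∑ g : Fin n → Fin k, ((k : ℝ) ^ n)⁻¹ * f (quotGraph g G) := by
  rw [quotientLaw, integral_smul_measure,
    integral_finset_sum_measure (fun g _ => f.integrable (μ := Measure.dirac (quotGraph g G)))]
  have hdirac : ∀ g : Fin n → Fin k,
      ∫ x, f x ∂(Measure.dirac (quotGraph g G)) = f (quotGraph g G) := fun g =>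
    integral_dirac' _ _ f.continuous.stronglyMeasurable
  rw [Finset.sum_congr rfl (fun g _ => hdirac g)]
  rw [Finset.smul_sum]
  refine Finset.sum_congr rfl fun g _ => ?_
  rw [smul_eq_mul]
  congr 1
  simp [ENNReal.toReal_inv, ENNReal.toReal_pow]

lemma integral_P_eq {k n : ℕ} (hk : 1 ≤ k) {P : Measure (ℕ → ℝ)} (hP : IsIidUniform P)
    (π : Equiv.Perm (Fin (n + 1))) (G : Fin (n + 1) → Fin (n + 1) → ℝ)
    (f : (Fin k → Fin k → ℝ) →ᵇ ℝ) :
    ∫ T, f (Lmap (permPad π G) k T) ∂P = ∫ x, f x ∂(quotientLaw G k) := by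
  classical
  haveI := hP.1
  have hk0 : 0 < k := hk
  set c : (Fin (n + 1) → Fin k) → ℝ := fun g => f (quotGraph (fun u => g (π u)) G) with hc
  have hae : ∀ᵐ T ∂P, f (Lmap (permPad π G) k T)
      = ∑ g : Fin (n + 1) → Fin k, (cell k n g).indicator (fun _ => c g) T := by
    filter_upwards [ae_Ico hP] with T hT
    have hex : ∀ i : Fin (n + 1), ∃ a : Fin k, T i ∈ gridIv k a := fun i =>
      mem_gridIv_exists hk0 (hT i).1 (hT i).2
    choose g0 hg0 using hex
    have hmem : T ∈ cell k n g0 := Set.mem_iInter.mpr hg0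
    rw [Finset.sum_eq_single g0]
    · rw [Set.indicator_of_mem hmem]
      have hLm : Lmap (permPad π G) k T = quotGraph (fun u => g0 (π u)) G := by
        funext a b
        exact Lmap_on_cell π G g0 hmem a b
      rw [hLm]
    · intro g _ hne
      rw [Set.indicator_of_notMem]
      intro hmem'
      apply hne
      funext i
      exact mem_gridIv_unique (Set.mem_iInter.mp hmem' i) (hg0 i)
    · intro h
      exact absurd (Finset.mem_univ g0) h
  rw [integral_congr_ae hae]
  rw [integral_finset_sum _
    (fun g _ => (integrable_const (c g)).indicator (measurableSet_cell k n g))]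
  have hcell : ∀ g : Fin (n + 1) → Fin k,
      ∫ T, (cell k n g).indicator (fun _ => c g) T ∂P = ((k : ℝ) ^ (n + 1))⁻¹ * c g := by
    intro g
    rw [integral_indicator_const (c g) (measurableSet_cell k n g), measureReal_def, P_cell hP g]
    rw [smul_eq_mul]
    congr 1
    simp [ENNReal.toReal_inv, ENNReal.toReal_pow]
  rw [Finset.sum_congr rfl (fun g _ => hcell g), integral_quotientLaw G f]
  exact Fintype.sum_equiv (Equiv.arrowCongr (π.symm : Equiv.Perm (Fin (n + 1))) (Equiv.refl (Fin k)))
    _ _ (fun g => rfl)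

end Stmt19Aux


/-- if (after relabeling and zero-padding) the graphs `G_n` converge in
entrywise `ℓ₁` to a summable array `E` of total mass one, then `(G_n)` quotient-converges, and
for every `k` the random quotients converge weakly to the law of the matrix
`L_{a,b} = Σ_{i,j} E_{i,j} 1[T_i ∈ I_a^{(k)}] 1[T_j ∈ I_b^{(k)}]` with `(T_i)` i.i.d.
uniform on `[0,1]`. -/
theorem stmt19 (E : ℕ → ℕ → ℝ) (hEpos : ∀ i j, 0 ≤ E i j)
    (hEsum : HasSum (fun p : ℕ × ℕ => E p.1 p.2) 1)
    (G : ∀ n : ℕ, Fin (n + 1) → Fin (n + 1) → ℝ) (hG : ∀ n, IsWeightedGraph (G n))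
    (π : ∀ n : ℕ, Equiv.Perm (Fin (n + 1)))
    (hTV : Tendsto
      (fun n => ∑' p : ℕ × ℕ, |permPad (π n) (G n) p.1 p.2 - E p.1 p.2|)
      atTop (𝓝 0))
    (P : Measure (ℕ → ℝ)) (hP : IsIidUniform P) :
    QuotientConverges G ∧
    ∀ k : ℕ, 1 ≤ k → ∀ f : (Fin k → Fin k → ℝ) →ᵇ ℝ,
      Tendsto (fun n => ∫ x, f x ∂(quotientLaw (G n) k)) atTop
        (𝓝 (∫ x, f x ∂(Measure.map
          (fun T : ℕ → ℝ => fun a b : Fin k =>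
            ∑' p : ℕ × ℕ, E p.1 p.2 *
              Set.indicator (gridIv k a) (fun _ => (1 : ℝ)) (T p.1) *
              Set.indicator (gridIv k b) (fun _ => (1 : ℝ)) (T p.2)) P))) := by
  classical
  open Stmt19Aux in
  haveI := hP.1
  have hEabs : Summable (fun p : ℕ × ℕ => |E p.1 p.2|) := by
    have h : (fun p : ℕ × ℕ => |E p.1 p.2|) = fun p : ℕ × ℕ => E p.1 p.2 :=
      funext fun p => abs_of_nonneg (hEpos _ _)
    rw [h]
    exact hEsum.summable
  have hpermpos : ∀ n, ∀ i j, 0 ≤ permPad (π n) (G n) i j := by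
    intro n i j
    rw [permPad]
    split
    · exact (hG n).1 _ _
    · exact le_rfl
  have main : ∀ k : ℕ, 1 ≤ k → ∀ f : (Fin k → Fin k → ℝ) →ᵇ ℝ,
      Tendsto (fun n => ∫ x, f x ∂(quotientLaw (G n) k)) atTop
        (𝓝 (∫ x, f x ∂(Measure.map (Lmap E k) P))) := by
    intro k hk f
    have hLmeas : Measurable (Lmap E k) := measurable_Lmap E hEpos hEabs
    rw [integral_map hLmeas.aemeasurable f.continuous.measurable.aestronglyMeasurable]
    have hn : ∀ n, ∫ x, f x ∂(quotientLaw (G n) k)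
        = ∫ T, f (Lmap (permPad (π n) (G n)) k T) ∂P :=
      fun n => (integral_P_eq hk hP (π n) (G n) f).symm
    simp only [hn]
    apply tendsto_integral_of_dominated_convergence (bound := fun _ => ‖f‖)
    · intro n
      exact (f.continuous.measurable.comp
        (measurable_Lmap _ (hpermpos n) (summable_permPad_abs (π n) (G n)))).aestronglyMeasurable
    · exact integrable_const _
    · intro n
      exact Filter.Eventually.of_forall fun T => f.norm_coe_le_norm _
    · refine Filter.Eventually.of_forall fun T => ?_
      have hconv : Tendsto (fun n => Lmap (permPad (π n) (G n)) k T) atTop (𝓝 (Lmap E k T)) := by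
        rw [tendsto_pi_nhds]
        intro a
        rw [tendsto_pi_nhds]
        intro b
        have hbd : ∀ n, |Lmap (permPad (π n) (G n)) k T a b - Lmap E k T a b|
            ≤ ∑' p : ℕ × ℕ, |permPad (π n) (G n) p.1 p.2 - E p.1 p.2| := fun n =>
          Lmap_dist_le E (permPad (π n) (G n)) hEabs (summable_permPad_abs (π n) (G n)) T a b
        have h0 : Tendsto (fun n => |Lmap (permPad (π n) (G n)) k T a b - Lmap E k T a b|)
            atTop (𝓝 0) := squeeze_zero (fun n => abs_nonneg _) hbd hTV
        rw [tendsto_iff_dist_tendsto_zero]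
        simpa [Real.dist_eq] using h0
      exact (f.continuous.tendsto _).comp hconv
  refine ⟨?_, main⟩
  intro k hk
  exact ⟨Measure.map (Lmap E k) P,
    Measure.isProbabilityMeasure_map (measurable_Lmap E hEpos hEabs).aemeasurable, main k hk⟩
end
end
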